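/- arXiv:2511.10525 — 4 statements merged into one kernel-verified Lean document; each statement's English description precedes it below -/
import Mathlib

section
/- Fix integers n ≥ N ≥ 2 and a real number q > 0. Let r_j and Y_N(z) on (ℂⁿ)^{⊗N} be as follows: r(e_x ⊗ e_y) = e_x ⊗ e_y if x = y; q⁻¹ e_y ⊗ e_x if x < y; q⁻¹ e_y ⊗ e_x + (1 − q⁻²) e_x ⊗ e_y if x > y; r_j acts as r on factors j, j+1; S_m(z) = 1 + z r_m + z² r_{m−1} r_m + ⋯ + z^m r_1 ⋯ r_m; Y_N(z) = S_{N−1}(z) ⋯ S_1(z). Then for any strictly increasing indices 1 ≤ i_1 < i_2 < ⋯ < i_N ≤ n and any z ∈ ℂ, Y_N(z)(e_{i_1} ⊗ e_{i_2} ⊗ ⋯ ⊗ e_{i_N}) = Σ_{σ ∈ S_N} (z q⁻¹)^{inv(σ)} e_{i_{σ(1)}} ⊗ e_{i_{σ(2)}} ⊗ ⋯ ⊗ e_{i_{σ(N)}}, where inv(σ) = #{(k,l) : k < l, σ(k) > σ(l)} is the number of inversions of σ. In particular Y_N(z) applied to an ordered basis state with distinct entries produces all N! permutations of that state. -/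
open Finset Matrix Kronecker

noncomputable section

def rMat (n : ℕ) (q : ℝ) : Matrix (Fin n × Fin n) (Fin n × Fin n) ℂ := fun out inp =>
  if inp.1 = inp.2 then (if out = inp then 1 else 0)
  else (if out = (inp.2, inp.1) then ((q : ℂ))⁻¹ else 0) +
    (if inp.2 < inp.1 ∧ out = inp then 1 - ((q : ℂ))⁻¹ ^ 2 else 0)

/-- The operator `r_j` acting as `rMat` on tensor factors `j, j+1` (0-indexed)
of `(ℂⁿ)^{⊗N}` and as the identity elsewhere. -/
def rop (n N : ℕ) (q : ℝ) (j : ℕ) : Matrix (Fin N → Fin n) (Fin N → Fin n) ℂ :=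
  fun f g =>
    if hj : j + 1 < N then
      rMat n q (f ⟨j, Nat.lt_of_succ_lt hj⟩, f ⟨j + 1, hj⟩)
          (g ⟨j, Nat.lt_of_succ_lt hj⟩, g ⟨j + 1, hj⟩) *
        (if ∀ k : Fin N, k.1 ≠ j → k.1 ≠ j + 1 → f k = g k then 1 else 0)
    else if f = g then 1 else 0

/-- `r_{m-t+1} ⋯ r_m` (math 1-indexed), i.e. `rop (m-t) * ⋯ * rop (m-1)`. -/
def prodChain (n N : ℕ) (q : ℝ) (m : ℕ) : ℕ → Matrix (Fin N → Fin n) (Fin N → Fin n) ℂ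
  | 0 => 1
  | t + 1 => rop n N q (m - (t + 1)) * prodChain n N q m t

/-- `S_m(z) = 1 + z r_m + z² r_{m-1} r_m + ⋯ + z^m r_1 ⋯ r_m`. -/
def Smat (n N : ℕ) (q : ℝ) (m : ℕ) (z : ℂ) : Matrix (Fin N → Fin n) (Fin N → Fin n) ℂ :=
  ∑ t ∈ Finset.range (m + 1), z ^ t • prodChain n N q m t

def Yaux (n N : ℕ) (q : ℝ) (z : ℂ) : ℕ → Matrix (Fin N → Fin n) (Fin N → Fin n) ℂ
  | 0 => 1
  | m + 1 => Smat n N q (m + 1) z * Yaux n N q z m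

/-- The shuffle operator `Y_N(z) = S_{N-1}(z) S_{N-2}(z) ⋯ S_1(z)`. -/
def Ymat (n N : ℕ) (q : ℝ) (z : ℂ) : Matrix (Fin N → Fin n) (Fin N → Fin n) ℂ :=
  Yaux n N q z (N - 1)

/-- Tensor product `A 0 ⊗ A 1 ⊗ ⋯ ⊗ A (N-1)` of a family of `n × n` matrices. -/
def tensorFam {n N : ℕ} (A : Fin N → Matrix (Fin n) (Fin n) ℂ) :
    Matrix (Fin N → Fin n) (Fin N → Fin n) ℂ := fun f g => ∏ k, A k (f k) (g k)

def Kmat (n : ℕ) (q : ℝ) (j : ℕ) : Matrix (Fin n) (Fin n) ℂ :=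
  Matrix.diagonal fun i => if i.1 = j then (Real.sqrt q : ℂ)
    else if i.1 = j + 1 then ((Real.sqrt q : ℂ))⁻¹ else 1

def KmatInv (n : ℕ) (q : ℝ) (j : ℕ) : Matrix (Fin n) (Fin n) ℂ :=
  Matrix.diagonal fun i => if i.1 = j then ((Real.sqrt q : ℂ))⁻¹
    else if i.1 = j + 1 then (Real.sqrt q : ℂ) else 1

/-- `E_j = Σ_k (K_j⁻¹)^{⊗(k-1)} ⊗ e_{j+1,j} ⊗ K_j^{⊗(N-k)}` (0-indexed `j`). -/
def Eop (n N : ℕ) (q : ℝ) (j : ℕ) (hj : j + 1 < n) :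
    Matrix (Fin N → Fin n) (Fin N → Fin n) ℂ :=
  ∑ k : Fin N, tensorFam fun m =>
    if m.1 < k.1 then KmatInv n q j
    else if m = k then Matrix.single ⟨j + 1, hj⟩ ⟨j, Nat.lt_of_succ_lt hj⟩ 1
    else Kmat n q j

def Fop (n N : ℕ) (q : ℝ) (j : ℕ) (hj : j + 1 < n) :
    Matrix (Fin N → Fin n) (Fin N → Fin n) ℂ :=
  ∑ k : Fin N, tensorFam fun m =>
    if m.1 < k.1 then KmatInv n q j
    else if m = k then Matrix.single ⟨j, Nat.lt_of_succ_lt hj⟩ ⟨j + 1, hj⟩ 1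
    else Kmat n q j

/-- `q^{𝓔_i} = (q^{e_{i,i}})^{⊗N}`. -/
def qEop (n N : ℕ) (q : ℝ) (i : Fin n) : Matrix (Fin N → Fin n) (Fin N → Fin n) ℂ :=
  tensorFam fun _ => Matrix.diagonal fun a => if a = i then (q : ℂ) else 1

/-- number of letters `i` in the word `w`. -/
def content {n N : ℕ} (w : Fin N → Fin n) (i : Fin n) : ℕ :=
  (Finset.univ.filter fun k => w k = i).card

/-- number of inversions of the word `w`. -/
def invw {n N : ℕ} (w : Fin N → Fin n) : ℕ :=
  (Finset.univ.filter fun p : Fin N × Fin N => p.1 < p.2 ∧ w p.2 < w p.1).card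

/-- the (unnormalized) q-Dicke state `b⁰_{k₁…k_n}`. -/
def bstate (n N : ℕ) (q : ℝ) (k : Fin n → ℕ) : (Fin N → Fin n) → ℂ :=
  ∑ w ∈ Finset.univ.filter (fun w : Fin N → Fin n => ∀ i, content w i = k i),
    ((q : ℂ) ^ invw w) • (Pi.single w 1 : (Fin N → Fin n) → ℂ)


/-- The number of inversions `inv(σ) = #{(k,l) : k < l, σ(k) > σ(l)}` of a permutation. -/
def permInv {N : ℕ} (σ : Equiv.Perm (Fin N)) : ℕ :=
  (Finset.univ.filter fun p : Fin N × Fin N => p.1 < p.2 ∧ σ p.2 < σ p.1).card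

lemma rop_col {n N : ℕ} {q : ℝ} {j : ℕ} (hj : j + 1 < N) (g : Fin N → Fin n)
    (hg : g ⟨j, Nat.lt_of_succ_lt hj⟩ < g ⟨j + 1, hj⟩) :
    (rop n N q j).mulVec (Pi.single g 1) =
      ((q : ℂ))⁻¹ • (Pi.single (g ∘ Equiv.swap ⟨j, Nat.lt_of_succ_lt hj⟩ ⟨j + 1, hj⟩) 1 : (Fin N → Fin n) → ℂ) := by
  set a : Fin N := ⟨j, Nat.lt_of_succ_lt hj⟩
  set b : Fin N := ⟨j + 1, hj⟩
  funext f
  have hcol : (rop n N q j).mulVec (Pi.single g 1) f = rop n N q j f g := by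
    simp [Matrix.mulVec_single]
  rw [hcol]
  have hab : g a ≠ g b := ne_of_lt hg
  have hrm : rMat n q (f a, f b) (g a, g b) =
      (if (f a, f b) = (g b, g a) then ((q : ℂ))⁻¹ else 0) := by
    rw [rMat]
    simp only [hab, if_neg, not_lt_of_gt hg]
    simp [not_lt.mpr hg.le, hg.not_gt]
  have key : (f = g ∘ Equiv.swap a b) ↔
      (f a = g b ∧ f b = g a ∧ ∀ k : Fin N, k.1 ≠ j → k.1 ≠ j + 1 → f k = g k) := by
    constructor
    · rintro rfl
      refine ⟨by simp, by simp, fun k hk1 hk2 => ?_⟩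
      have : Equiv.swap a b k = k := by
        apply Equiv.swap_apply_of_ne_of_ne
        · exact fun h => hk1 (by rw [h])
        · exact fun h => hk2 (by rw [h])
      simp [this]
    · rintro ⟨h1, h2, h3⟩
      funext k
      rcases eq_or_ne k a with rfl | hka
      · simpa using h1
      rcases eq_or_ne k b with rfl | hkb
      · simpa using h2
      · rw [Function.comp_apply, Equiv.swap_apply_of_ne_of_ne hka hkb]
        exact h3 k (fun h => hka (Fin.ext h)) (fun h => hkb (Fin.ext h))
  rw [rop]
  rw [dif_pos hj]
  by_cases hf : f = g ∘ Equiv.swap a b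
  · have h := key.mp hf
    rw [hrm, if_pos h.2.2, if_pos (by simp [h.1, h.2.1])]
    subst hf
    simp [Pi.single_apply]
  · rw [hrm]
    have : ¬((f a, f b) = (g b, g a) ∧ ∀ k : Fin N, k.1 ≠ j → k.1 ≠ j + 1 → f k = g k) := by
      intro ⟨h1, h2⟩
      exact hf (key.mpr ⟨congrArg Prod.fst h1, congrArg Prod.snd h1, h2⟩)
    have hsingle : ((q : ℂ)⁻¹ • (Pi.single (g ∘ Equiv.swap a b) 1 : (Fin N → Fin n) → ℂ)) f
        = 0 := by
      rw [Pi.smul_apply, Pi.single_apply, if_neg hf, smul_zero]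
    rw [hsingle]
    by_cases h1 : (f a, f b) = (g b, g a)
    · by_cases h2 : ∀ k : Fin N, k.1 ≠ j → k.1 ≠ j + 1 → f k = g k
      · exact absurd ⟨h1, h2⟩ this
      · simp [h2]
    · simp [h1]

def tau (N m : ℕ) (hm : m < N) : ℕ → Equiv.Perm (Fin N)
  | 0 => 1
  | t + 1 => tau N m hm t *
      Equiv.swap ⟨m - (t + 1), lt_of_le_of_lt (Nat.sub_le _ _) hm⟩
        ⟨m - t, lt_of_le_of_lt (Nat.sub_le _ _) hm⟩

lemma tau_apply (N m : ℕ) (hm : m < N) : ∀ (t : ℕ), t ≤ m → ∀ k : Fin N,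
    tau N m hm t k = if k.1 < m - t then k
      else if k.1 = m - t then ⟨m, hm⟩
      else if k.1 ≤ m then ⟨k.1 - 1, lt_of_le_of_lt (Nat.sub_le _ _) k.2⟩
      else k := by
  intro t
  induction t with
  | zero =>
    intro _ k
    simp only [tau, Equiv.Perm.coe_one, id_eq, Nat.sub_zero]
    rcases lt_trichotomy k.1 m with h | h | h
    · rw [if_pos h]
    · rw [if_neg (by omega), if_pos h]; exact Fin.ext h
    · rw [if_neg (by omega), if_neg (by omega), if_neg (by omega)]
  | succ t ih =>
    intro ht k
    have ht' : t ≤ m := le_of_lt (Nat.lt_of_succ_le ht)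
    rw [tau, Equiv.Perm.mul_apply]
    set a : Fin N := ⟨m - (t + 1), lt_of_le_of_lt (Nat.sub_le _ _) hm⟩ with ha
    set b : Fin N := ⟨m - t, lt_of_le_of_lt (Nat.sub_le _ _) hm⟩ with hb
    have hav : a.1 = m - (t + 1) := rfl
    have hbv : b.1 = m - t := rfl
    rcases eq_or_ne k a with rfl | hka
    · rw [Equiv.swap_apply_left, ih ht' b]
      rw [if_neg (by omega), if_pos hbv, if_neg (by omega), if_pos rfl]
    · rcases eq_or_ne k b with rfl | hkb
      · rw [Equiv.swap_apply_right, ih ht' a]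
        rw [if_pos (by omega), if_neg (by omega), if_neg (by omega), if_pos (by omega)]
        apply Fin.ext
        show m - (t + 1) = ↑b - 1
        omega
      · have hkav : k.1 ≠ m - (t + 1) := fun h => hka (Fin.ext h)
        have hkbv : k.1 ≠ m - t := fun h => hkb (Fin.ext h)
        rw [Equiv.swap_apply_of_ne_of_ne hka hkb, ih ht' k]
        split_ifs <;>
          first
            | rfl
            | omega
            | (exfalso; omega)

lemma tau_fix_high (N m : ℕ) (hm : m < N) (t : ℕ) (ht : t ≤ m) (k : Fin N) (hk : m < k.1) :
    tau N m hm t k = k := by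
  rw [tau_apply N m hm t ht k, if_neg (by omega), if_neg (by omega), if_neg (by omega)]

lemma tau_apply_lt (N m : ℕ) (hm : m < N) (t : ℕ) (ht : t ≤ m) (k : Fin N) (hk : k.1 < m - t) :
    tau N m hm t k = k := by
  rw [tau_apply N m hm t ht k, if_pos hk]

lemma tau_apply_eq (N m : ℕ) (hm : m < N) (t : ℕ) (ht : t ≤ m) :
    tau N m hm t ⟨m - t, lt_of_le_of_lt (Nat.sub_le _ _) hm⟩ = ⟨m, hm⟩ := by
  rw [tau_apply N m hm t ht, if_neg (lt_irrefl _), if_pos rfl]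

lemma permInv_mul_swap {N : ℕ} (ρ : Equiv.Perm (Fin N)) (a b : Fin N) (hab : a.1 + 1 = b.1)
    (h : ρ a < ρ b) : permInv (ρ * Equiv.swap a b) = permInv ρ + 1 := by
  classical
  set s := Equiv.swap a b with hs
  have sval : ∀ x : Fin N, (s x).1 = if x.1 = a.1 then b.1 else if x.1 = b.1 then a.1 else x.1 := by
    intro x
    rcases eq_or_ne x a with rfl | h1
    · rw [hs, Equiv.swap_apply_left, if_pos rfl]
    · rcases eq_or_ne x b with rfl | h2
      · rw [hs, Equiv.swap_apply_right, if_neg (fun hh => h1 (Fin.ext hh)), if_pos rfl]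
      · rw [hs, Equiv.swap_apply_of_ne_of_ne h1 h2, if_neg (fun hh => h1 (Fin.ext hh)),
          if_neg (fun hh => h2 (Fin.ext hh))]
  have key : ∀ k l : Fin N, k < l → (k, l) ≠ (a, b) → s k < s l := by
    intro k l hkl hne
    have hne2 : ¬(k.1 = a.1 ∧ l.1 = b.1) := by
      rintro ⟨h1, h2⟩
      exact hne (by rw [Prod.ext_iff]; exact ⟨Fin.ext h1, Fin.ext h2⟩)
    rw [Fin.lt_def] at hkl ⊢
    rw [sval, sval]
    split_ifs <;> omega
  set A := Finset.univ.filter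
    (fun p : Fin N × Fin N => p.1 < p.2 ∧ (ρ * s) p.2 < (ρ * s) p.1) with hA
  set B := Finset.univ.filter (fun p : Fin N × Fin N => p.1 < p.2 ∧ ρ p.2 < ρ p.1) with hB
  have hab' : a < b := by rw [Fin.lt_def]; omega
  have hmem : (a, b) ∈ A := by
    rw [hA, Finset.mem_filter]
    refine ⟨Finset.mem_univ _, hab', ?_⟩
    simp only [Equiv.Perm.mul_apply, hs, Equiv.swap_apply_left, Equiv.swap_apply_right]
    exact h
  have hcard : (A.erase (a, b)).card = B.card := by
    apply Finset.card_nbij' (fun p => (s p.1, s p.2)) (fun p => (s p.1, s p.2))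
    · intro p hp
      rw [Finset.mem_coe, Finset.mem_erase, hA, Finset.mem_filter] at hp
      obtain ⟨hne, _, h1, h2⟩ := hp
      rw [Finset.mem_coe, hB, Finset.mem_filter]
      refine ⟨Finset.mem_univ _, key p.1 p.2 h1 hne, ?_⟩
      simpa [Equiv.Perm.mul_apply] using h2
    · intro p hp
      rw [Finset.mem_coe, hB, Finset.mem_filter] at hp
      obtain ⟨_, h1, h2⟩ := hp
      have hpne : (p.1, p.2) ≠ (a, b) := by
        intro hh
        rw [Prod.ext_iff] at hh
        obtain ⟨e1, e2⟩ := hh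
        simp only at e1 e2
        rw [e1, e2] at h2
        exact absurd h h2.asymm
      rw [Finset.mem_coe, Finset.mem_erase, hA, Finset.mem_filter]
      refine ⟨?_, Finset.mem_univ _, key p.1 p.2 h1 hpne, ?_⟩
      · intro hh
        rw [Prod.ext_iff] at hh
        obtain ⟨e1, e2⟩ := hh
        simp only at e1 e2
        have : p.1 = b := by
          have := congrArg s e1
          simpa [hs] using this
        have : p.2 = a := by
          have := congrArg s e2
          simpa [hs] using this
        rw [this] at h1
        rw [‹p.1 = b›] at h1
        exact absurd (h1.trans hab') (lt_irrefl _)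
      · simpa [Equiv.Perm.mul_apply, hs] using h2
    · intro p _; simp [hs]
    · intro p _; simp [hs]
  have : A.card = (A.erase (a, b)).card + 1 := (Finset.card_erase_add_one hmem).symm
  rw [permInv, permInv]
  rw [← hA, ← hB, this, hcard]

lemma permInv_mul_tau {N m : ℕ} (hm : m < N) (σ : Equiv.Perm (Fin N))
    (hσ : ∀ k : Fin N, m ≤ k.1 → σ k = k) :
    ∀ t : ℕ, t ≤ m → permInv (σ * tau N m hm t) = permInv σ + t := by
  intro t
  induction t with
  | zero => intro _; simp [tau]
  | succ t ih =>
    intro ht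
    have ht' : t ≤ m := le_of_lt (Nat.lt_of_succ_le ht)
    set a : Fin N := ⟨m - (t + 1), lt_of_le_of_lt (Nat.sub_le _ _) hm⟩ with ha
    set b : Fin N := ⟨m - t, lt_of_le_of_lt (Nat.sub_le _ _) hm⟩ with hb
    have step : σ * tau N m hm (t + 1) = (σ * tau N m hm t) * Equiv.swap a b := by
      rw [tau, mul_assoc]
    have h1 : tau N m hm t a = a := tau_apply_lt N m hm t ht' a (by show m - (t+1) < m - t; omega)
    have h2 : tau N m hm t b = ⟨m, hm⟩ := tau_apply_eq N m hm t ht'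
    have hlt : (σ a).1 < m := by
      by_contra hcon
      push_neg at hcon
      have h4 : σ a = a := σ.injective (hσ (σ a) hcon)
      have h5 : (σ a).1 = m - (t + 1) := by rw [h4]
      omega
    have hρ : (σ * tau N m hm t) a < (σ * tau N m hm t) b := by
      rw [Equiv.Perm.mul_apply, Equiv.Perm.mul_apply, h1, h2, hσ ⟨m, hm⟩ (le_refl _), Fin.lt_def]
      exact hlt
    rw [step, permInv_mul_swap _ a b (by show m - (t+1) + 1 = m - t; omega) hρ, ih ht']
    omega

lemma sum_mulVec {I α : Type*} [Fintype α] [DecidableEq α] (s : Finset I)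
    (F : I → Matrix α α ℂ) (v : α → ℂ) :
    (∑ t ∈ s, F t).mulVec v = ∑ t ∈ s, (F t).mulVec v := by
  induction s using Finset.cons_induction with
  | empty => simp [Matrix.zero_mulVec]
  | cons a s ha ih => simp [Finset.sum_cons, Matrix.add_mulVec, ih]

lemma prodChain_col {n N : ℕ} {q : ℝ} {m : ℕ} (hm : m < N) (w : Fin N → Fin n)
    (hw : ∀ j : Fin N, j.1 < m → w j < w ⟨m, hm⟩) :
    ∀ t : ℕ, t ≤ m → (prodChain n N q m t).mulVec (Pi.single w 1) =
      (((q : ℂ))⁻¹) ^ t • (Pi.single (w ∘ ⇑(tau N m hm t)) 1 : (Fin N → Fin n) → ℂ) := by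
  intro t
  induction t with
  | zero =>
    intro _
    have : w ∘ ⇑(tau N m hm 0) = w := by
      funext k; simp [tau]
    rw [this, prodChain, pow_zero, one_smul, Matrix.one_mulVec]
  | succ t ih =>
    intro ht
    have ht' : t ≤ m := le_of_lt (Nat.lt_of_succ_le ht)
    have hj : (m - (t + 1)) + 1 < N := by omega
    rw [prodChain, ← Matrix.mulVec_mulVec, ih ht', Matrix.mulVec_smul]
    set g : Fin N → Fin n := w ∘ ⇑(tau N m hm t) with hgdef
    set a : Fin N := ⟨m - (t + 1), Nat.lt_of_succ_lt hj⟩ with ha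
    set b : Fin N := ⟨m - (t + 1) + 1, hj⟩ with hb
    have hbval : b = ⟨m - t, lt_of_le_of_lt (Nat.sub_le _ _) hm⟩ := Fin.ext (by
      show m - (t + 1) + 1 = m - t; omega)
    have h1 : tau N m hm t a = a :=
      tau_apply_lt N m hm t ht' a (by show m - (t + 1) < m - t; omega)
    have h2 : tau N m hm t b = ⟨m, hm⟩ := by rw [hbval]; exact tau_apply_eq N m hm t ht'
    have hglt : g a < g b := by
      rw [hgdef]
      simp only [Function.comp_apply, h1, h2]
      exact hw a (by show m - (t + 1) < m; omega)
    have hfun : g ∘ ⇑(Equiv.swap (⟨m - (t+1), Nat.lt_of_succ_lt hj⟩ : Fin N) ⟨m - (t+1) + 1, hj⟩)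
        = w ∘ ⇑(tau N m hm (t + 1)) := by
      rw [tau, hgdef]
      have e : (⟨m - (t+1) + 1, hj⟩ : Fin N) = ⟨m - t, lt_of_le_of_lt (Nat.sub_le _ _) hm⟩ :=
        Fin.ext (by show m - (t+1) + 1 = m - t; omega)
      rw [e]
      funext k
      simp [Equiv.Perm.coe_mul, Function.comp]
    rw [rop_col hj g hglt, hfun, smul_smul, ← pow_succ]

lemma Smat_col {n N : ℕ} {q : ℝ} {z : ℂ} {m : ℕ} (hm : m < N) (w : Fin N → Fin n)
    (hw : ∀ j : Fin N, j.1 < m → w j < w ⟨m, hm⟩) :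
    (Smat n N q m z).mulVec (Pi.single w 1) =
      ∑ t ∈ Finset.range (m + 1),
        (z * ((q : ℂ))⁻¹) ^ t • (Pi.single (w ∘ ⇑(tau N m hm t)) 1 : (Fin N → Fin n) → ℂ) := by
  rw [Smat, _root_.sum_mulVec]
  apply Finset.sum_congr rfl
  intro t htmem
  have ht : t ≤ m := by
    rw [Finset.mem_range] at htmem; omega
  rw [Matrix.smul_mulVec, prodChain_col hm w hw t ht, smul_smul, mul_pow]

lemma mulVec_sum {I α : Type*} [Fintype α] [DecidableEq α] (s : Finset I)
    (A : Matrix α α ℂ) (v : I → α → ℂ) :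
    A.mulVec (∑ t ∈ s, v t) = ∑ t ∈ s, A.mulVec (v t) := by
  induction s using Finset.cons_induction with
  | empty => simp [Matrix.mulVec_zero]
  | cons a s ha ih => simp [Finset.sum_cons, Matrix.mulVec_add, ih]

lemma yaux_col {n N : ℕ} (q : ℝ) (z : ℂ) (i : Fin N → Fin n) (hi : StrictMono i) :
    ∀ M : ℕ, M < N → (Yaux n N q z M).mulVec (Pi.single i 1) =
      ∑ σ ∈ Finset.univ.filter
          (fun σ : Equiv.Perm (Fin N) => ∀ k : Fin N, M < k.1 → σ k = k),
        ((z * ((q : ℂ))⁻¹) ^ permInv σ) •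
          (Pi.single (fun k => i (σ k)) 1 : (Fin N → Fin n) → ℂ) := by
  intro M
  induction M with
  | zero =>
    intro hM
    have hfilter : Finset.univ.filter
        (fun σ : Equiv.Perm (Fin N) => ∀ k : Fin N, 0 < k.1 → σ k = k)
        = {(1 : Equiv.Perm (Fin N))} := by
      ext σ
      simp only [Finset.mem_filter, Finset.mem_univ, true_and, Finset.mem_singleton]
      constructor
      · intro h
        apply Equiv.ext
        intro k
        rcases Nat.eq_zero_or_pos k.1 with hk | hk
        · simp only [Equiv.Perm.coe_one, id_eq]
          by_contra hne
          have h1 : 0 < (σ k).1 := by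
            rcases Nat.eq_zero_or_pos (σ k).1 with h0 | h0
            · exact absurd (Fin.ext (h0.trans hk.symm) : σ k = k) hne
            · exact h0
          exact hne (σ.injective (h (σ k) h1))
        · simpa using h k hk
      · rintro rfl; intro k _; rfl
    have hpi : permInv (1 : Equiv.Perm (Fin N)) = 0 := by
      rw [permInv, Finset.card_eq_zero, Finset.filter_eq_empty_iff]
      rintro p _ ⟨h1, h2⟩
      simp only [Equiv.Perm.coe_one, id_eq] at h2
      exact absurd h2 h1.asymm
    rw [Yaux, Matrix.one_mulVec, hfilter, Finset.sum_singleton, hpi, pow_zero, one_smul]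
    rfl
  | succ M ih =>
    intro hM
    have hM' : M < N := Nat.lt_of_succ_lt hM
    rw [Yaux, ← Matrix.mulVec_mulVec, ih hM', _root_.mulVec_sum]
    have hterm : ∀ σ ∈ Finset.univ.filter
        (fun σ : Equiv.Perm (Fin N) => ∀ k : Fin N, M < k.1 → σ k = k),
        (Smat n N q (M + 1) z).mulVec
          (((z * ((q : ℂ))⁻¹) ^ permInv σ) •
            (Pi.single (fun k => i (σ k)) 1 : (Fin N → Fin n) → ℂ)) =
        ∑ t ∈ Finset.range (M + 2),
          ((z * ((q : ℂ))⁻¹) ^ permInv (σ * tau N (M + 1) hM t)) •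
            (Pi.single (fun k => i ((σ * tau N (M + 1) hM t) k)) 1
              : (Fin N → Fin n) → ℂ) := by
      intro σ hσmem
      rw [Finset.mem_filter] at hσmem
      have hσ := hσmem.2
      have hσM1 : σ ⟨M + 1, hM⟩ = ⟨M + 1, hM⟩ := hσ _ (by show M < M + 1; omega)
      have hw : ∀ jj : Fin N, jj.1 < M + 1 →
          (fun k => i (σ k)) jj < (fun k => i (σ k)) ⟨M + 1, hM⟩ := by
        intro jj hjj
        have hlt : (σ jj).1 < M + 1 := by
          by_contra hcon
          push_neg at hcon
          have h4 : σ (σ jj) = σ jj := hσ _ (by omega)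
          have h5 := σ.injective h4
          have h6 : (σ jj).1 = jj.1 := by rw [h5]
          omega
        simp only
        rw [hσM1]
        exact hi (by rw [Fin.lt_def]; exact hlt)
      rw [Matrix.mulVec_smul, Smat_col hM _ hw, Finset.smul_sum]
      apply Finset.sum_congr rfl
      intro t htmem
      rw [Finset.mem_range] at htmem
      have ht : t ≤ M + 1 := by omega
      rw [smul_smul, ← pow_add,
        permInv_mul_tau hM σ (fun k hk => hσ k (by omega)) t ht]
      rfl
    rw [Finset.sum_congr rfl hterm, ← Finset.sum_product']
    apply Finset.sum_nbij'
      (i := fun p : Equiv.Perm (Fin N) × ℕ => p.1 * tau N (M + 1) hM p.2)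
      (j := fun ρ : Equiv.Perm (Fin N) =>
        (ρ * (tau N (M + 1) hM (M + 1 - (ρ⁻¹ ⟨M + 1, hM⟩).1))⁻¹,
          M + 1 - (ρ⁻¹ ⟨M + 1, hM⟩).1))
    · rintro ⟨σ, t⟩ hp
      rw [Finset.mem_product, Finset.mem_filter, Finset.mem_range] at hp
      obtain ⟨⟨_, hσ⟩, ht⟩ := hp
      rw [Finset.mem_filter]
      refine ⟨Finset.mem_univ _, fun k hk => ?_⟩
      rw [Equiv.Perm.mul_apply, tau_fix_high N (M + 1) hM t (by omega) k hk]
      exact hσ k (by omega)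
    · intro ρ hρ
      rw [Finset.mem_filter] at hρ
      have hρ2 := hρ.2
      set jv := (ρ⁻¹ (⟨M + 1, hM⟩ : Fin N)).1 with hjv
      have hjvle : jv ≤ M + 1 := by
        by_contra hcon
        push_neg at hcon
        have h1 : ρ (ρ⁻¹ ⟨M + 1, hM⟩) = ⟨M + 1, hM⟩ := Equiv.apply_symm_apply ρ _
        have h2 : ρ (ρ⁻¹ ⟨M + 1, hM⟩) = ρ⁻¹ ⟨M + 1, hM⟩ := hρ2 _ hcon
        have h3 : (⟨M + 1, hM⟩ : Fin N) = ρ⁻¹ ⟨M + 1, hM⟩ := h1.symm.trans h2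
        have h4 := congrArg Fin.val h3
        simp only at h4
        omega
      set t' := M + 1 - jv with ht'
      have ht'le : t' ≤ M + 1 := by omega
      rw [Finset.mem_product, Finset.mem_filter, Finset.mem_range]
      refine ⟨⟨Finset.mem_univ _, fun k hk => ?_⟩, by omega⟩
      rcases Nat.lt_or_ge (M + 1) k.1 with hk2 | hk2
      · have htk : tau N (M + 1) hM t' k = k := tau_fix_high N (M + 1) hM t' ht'le k hk2
        have hinv : (tau N (M + 1) hM t')⁻¹ k = k := by
          rw [Equiv.Perm.inv_eq_iff_eq]; exact htk.symm
        rw [Equiv.Perm.mul_apply, hinv]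
        exact hρ2 k hk2
      · have hkval : k.1 = M + 1 := by omega
        have hkeq : k = ⟨M + 1, hM⟩ := Fin.ext hkval
        subst hkeq
        have htk : tau N (M + 1) hM t' ⟨M + 1 - t',
            lt_of_le_of_lt (Nat.sub_le _ _) hM⟩ = ⟨M + 1, hM⟩ :=
          tau_apply_eq N (M + 1) hM t' ht'le
        have hmk : (⟨M + 1 - t', lt_of_le_of_lt (Nat.sub_le _ _) hM⟩ : Fin N)
            = ρ⁻¹ ⟨M + 1, hM⟩ := Fin.ext (by simp only; omega)
        have hinv : (tau N (M + 1) hM t')⁻¹ ⟨M + 1, hM⟩ = ρ⁻¹ ⟨M + 1, hM⟩ := by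
          rw [Equiv.Perm.inv_eq_iff_eq, ← hmk, htk]
        rw [Equiv.Perm.mul_apply, hinv]; exact Equiv.apply_symm_apply ρ _
    · rintro ⟨σ, t⟩ hp
      rw [Finset.mem_product, Finset.mem_filter, Finset.mem_range] at hp
      obtain ⟨⟨_, hσ⟩, ht⟩ := hp
      have hρm : (σ * tau N (M + 1) hM t) ⟨M + 1 - t,
          lt_of_le_of_lt (Nat.sub_le _ _) hM⟩ = ⟨M + 1, hM⟩ := by
        rw [Equiv.Perm.mul_apply, tau_apply_eq N (M + 1) hM t (by omega)]
        exact hσ _ (by show M < M + 1; omega)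
      have hinv : ((σ * tau N (M + 1) hM t)⁻¹ (⟨M + 1, hM⟩ : Fin N)).1 = M + 1 - t := by
        have : (σ * tau N (M + 1) hM t)⁻¹ ⟨M + 1, hM⟩ = ⟨M + 1 - t,
            lt_of_le_of_lt (Nat.sub_le _ _) hM⟩ := by
          rw [Equiv.Perm.inv_eq_iff_eq, hρm]
        rw [this]
      have htt : M + 1 - ((σ * tau N (M + 1) hM t)⁻¹ (⟨M + 1, hM⟩ : Fin N)).1 = t := by
        rw [hinv]; omega
      refine Prod.ext ?_ ?_
      · simp only [htt, mul_inv_cancel_right]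
      · simpa using htt
    · intro ρ _
      simp only [inv_mul_cancel_right]
    · intro p _
      rfl

/-- applied to an ordered basis state `e_{i₁} ⊗ ⋯ ⊗ e_{i_N}` with strictly
increasing indices, the shuffle operator produces all `N!` permutations, weighted by
`(z q⁻¹)^{inv(σ)}`. -/
theorem stmt5 (n N : ℕ) (hN : 2 ≤ N) (hn : N ≤ n) (q : ℝ) (hq : 0 < q)
    (i : Fin N → Fin n) (hi : StrictMono i) (z : ℂ) :
    (Ymat n N q z).mulVec (Pi.single i 1) =
      ∑ σ : Equiv.Perm (Fin N),
        ((z * ((q : ℂ))⁻¹) ^ permInv σ) •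
          (Pi.single (fun k => i (σ k)) 1 : (Fin N → Fin n) → ℂ) := by
  have h := yaux_col q z i hi (N - 1) (by omega)
  have hN1 : Ymat n N q z = Yaux n N q z (N - 1) := rfl
  rw [hN1, h]
  have hfil : Finset.univ.filter
      (fun σ : Equiv.Perm (Fin N) => ∀ k : Fin N, N - 1 < k.1 → σ k = k)
      = Finset.univ := by
    apply Finset.filter_true_of_mem
    intro σ _ k hk
    exact absurd hk (by have := k.2; omega)
  rw [hfil]

end
end

section
/- Fix integers n ≥ 2, N ≥ 2 and a real number q > 0. Let Y_N(z) on (ℂⁿ)^{⊗N} be the shuffle operator built from the matrices r_j as follows: r(e_x ⊗ e_y) = e_x ⊗ e_y if x = y; q⁻¹ e_y ⊗ e_x if x < y; q⁻¹ e_y ⊗ e_x + (1 − q⁻²) e_x ⊗ e_y if x > y; r_j acts as r on factors j, j+1; S_m(z) = 1 + z r_m + ⋯ + z^m r_1 ⋯ r_m; Y_N(z) = S_{N−1}(z) ⋯ S_1(z). Let m_1,…,m_n be nonnegative integers with m_1 + ⋯ + m_n = N, and let W(m_1,…,m_n) be the set of words w = (w_1,…,w_N) in the alphabet {1,…,n}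 containing exactly m_i letters equal to i; set inv(w) = #{(k,l) : k < l, w_k > w_l}. Then for every z ∈ ℂ, Y_N(z)(e_1^{⊗m_1} ⊗ e_2^{⊗m_2} ⊗ ⋯ ⊗ e_n^{⊗m_n}) = (∏_{i=1}^n ⟦m_i⟧_z!) · Σ_{w ∈ W(m_1,…,m_n)} (z q⁻¹)^{inv(w)} e_{w_1} ⊗ e_{w_2} ⊗ ⋯ ⊗ e_{w_N}, where ⟦m⟧_z = 1 + z + z² + ⋯ + z^{m−1} and ⟦m⟧_z! = ⟦1⟧_z ⟦2⟧_z ⋯ ⟦m⟧_z, ⟦0⟧_z! = 1. -/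
open Finset Matrix Kronecker

noncomputable section

/-- The `z`-integer `⟦m⟧_z = 1 + z + ⋯ + z^{m-1}`. -/
def qint (z : ℂ) (m : ℕ) : ℂ := ∑ t ∈ Finset.range m, z ^ t

/-- The `z`-factorial `⟦m⟧_z! = ⟦1⟧_z ⟦2⟧_z ⋯ ⟦m⟧_z`, with `⟦0⟧_z! = 1`. -/
def qfact (z : ℂ) (m : ℕ) : ℂ := ∏ t ∈ Finset.range m, qint z (t + 1)

namespace Stmt6

variable {n N : ℕ}

/-- index map of the cycle sending `r ↦ p` and `j ↦ j-1` for `p < j ≤ r`. -/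
def cyf (p r j : Fin N) : Fin N :=
  if j.1 < p.1 ∨ r.1 < j.1 then j else if j.1 = p.1 then r
  else ⟨j.1 - 1, lt_of_le_of_lt (Nat.sub_le _ _) j.2⟩

/-- inverse of `cyf`. -/
def cyg (p r j : Fin N) : Fin N :=
  if j.1 < p.1 ∨ r.1 < j.1 then j else if j.1 = r.1 then p
  else ⟨(j.1 + 1) % N, Nat.mod_lt _ j.pos⟩

lemma cyf_id {p r j : Fin N} (h : j.1 < p.1 ∨ r.1 < j.1) : cyf p r j = j := by
  rw [cyf, if_pos h]

lemma cyg_id {p r j : Fin N} (h : j.1 < p.1 ∨ r.1 < j.1) : cyg p r j = j := by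
  rw [cyg, if_pos h]

lemma cyf_p {p r : Fin N} (h : p.1 ≤ r.1) : cyf p r p = r := by
  rw [cyf, if_neg (by omega), if_pos rfl]

lemma cyg_r {p r : Fin N} (h : p.1 ≤ r.1) : cyg p r r = p := by
  rw [cyg, if_neg (by omega), if_pos rfl]

lemma cyf_mid {p r j : Fin N} (h1 : p.1 < j.1) (h2 : j.1 ≤ r.1) :
    (cyf p r j).1 = j.1 - 1 := by
  rw [cyf, if_neg (by omega), if_neg (by omega)]

lemma cyg_mid {p r j : Fin N} (h1 : p.1 ≤ j.1) (h2 : j.1 < r.1) :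
    (cyg p r j).1 = j.1 + 1 := by
  rw [cyg, if_neg (by omega), if_neg (by omega)]
  exact Nat.mod_eq_of_lt (by have := r.2; omega)

lemma cyg_cyf {p r : Fin N} (h : p.1 ≤ r.1) (j : Fin N) : cyg p r (cyf p r j) = j := by
  by_cases h1 : j.1 < p.1 ∨ r.1 < j.1
  · rw [cyf_id h1, cyg_id h1]
  · push_neg at h1
    by_cases h2 : j.1 = p.1
    · have hp : j = p := Fin.ext h2
      subst hp
      rw [cyf_p h, cyg_r h]
    · have e1 : (cyf p r j).1 = j.1 - 1 := cyf_mid (by omega) (by omega)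
      apply Fin.ext
      rw [cyg_mid (by omega : p.1 ≤ (cyf p r j).1) (by omega : (cyf p r j).1 < r.1), e1]
      omega

lemma cyf_cyg {p r : Fin N} (h : p.1 ≤ r.1) (j : Fin N) : cyf p r (cyg p r j) = j := by
  by_cases h1 : j.1 < p.1 ∨ r.1 < j.1
  · rw [cyg_id h1, cyf_id h1]
  · push_neg at h1
    by_cases h2 : j.1 = r.1
    · have hp : j = r := Fin.ext h2
      subst hp
      rw [cyg_r h, cyf_p h]
    · have hmid : (cyg p r j).1 = j.1 + 1 := cyg_mid (by omega) (by omega)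
      have e2 : (cyf p r (cyg p r j)).1 = (cyg p r j).1 - 1 := cyf_mid (by omega) (by omega)
      apply Fin.ext
      rw [e2, hmid]
      omega

lemma cyf_self (p j : Fin N) : cyf p p j = j := by
  by_cases h1 : j.1 < p.1 ∨ p.1 < j.1
  · exact cyf_id h1
  · have : j = p := Fin.ext (by omega)
    subst this
    exact cyf_p le_rfl

/-- the step identity: the cycle to `p` equals the cycle to `p+1` followed by the
adjacent swap of `p, p+1` (at the level of index maps). -/
lemma cyf_succ {p p' r : Fin N} (hp : p.1 + 1 = p'.1) (hpr : p'.1 ≤ r.1) (j : Fin N) :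
    cyf p r j = cyf p' r (Equiv.swap p p' j) := by
  have hne : p ≠ p' := by intro h; rw [h] at hp; omega
  by_cases h1 : j = p
  · subst h1
    rw [Equiv.swap_apply_left, cyf_p (by omega), cyf_p hpr]
  · by_cases h2 : j = p'
    · rw [h2, Equiv.swap_apply_right]
      have hid : cyf p' r p = p := cyf_id (Or.inl (by omega))
      rw [hid]
      exact Fin.ext (by rw [cyf_mid (by omega) (by omega)]; omega)
    · rw [Equiv.swap_apply_of_ne_of_ne h1 h2]
      by_cases h3 : j.1 < p.1 ∨ r.1 < j.1
      · rw [cyf_id h3, cyf_id (by omega)]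
      · push_neg at h3
        have hj : p'.1 < j.1 := by
          have : j.1 ≠ p.1 := fun h => h1 (Fin.ext h)
          have : j.1 ≠ p'.1 := fun h => h2 (Fin.ext h)
          omega
        exact Fin.ext (by rw [cyf_mid (by omega) (by omega), cyf_mid (by omega) (by omega)])

lemma comp_swap_eq (u : Fin N → Fin n) (a b : Fin N) (h : u a = u b) :
    (fun j => u (Equiv.swap a b j)) = u := by
  funext j
  by_cases h1 : j = a
  · subst h1; rw [Equiv.swap_apply_left, h]
  · by_cases h2 : j = b
    · subst h2; rw [Equiv.swap_apply_right, h]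
    · rw [Equiv.swap_apply_of_ne_of_ne h1 h2]

end Stmt6
namespace Stmt6

variable {n N : ℕ}

/-- number of positions `p ≤ j < r` with `w j < w r`. -/
def scount (w : Fin N → Fin n) (p r : Fin N) : ℕ :=
  (Finset.univ.filter fun j : Fin N => p.1 ≤ j.1 ∧ j.1 < r.1 ∧ w j < w r).card

/-- number of positions `p ≤ j < r` with `w j = w r`. -/
def ecount (w : Fin N → Fin n) (p r : Fin N) : ℕ :=
  (Finset.univ.filter fun j : Fin N => p.1 ≤ j.1 ∧ j.1 < r.1 ∧ w j = w r).card

lemma scount_self (w : Fin N → Fin n) (r : Fin N) : scount w r r = 0 := by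
  rw [scount, Finset.card_eq_zero, Finset.filter_eq_empty_iff]
  rintro j - ⟨h1, h2, -⟩
  omega

lemma swap_lt {a b x y : Fin N} (hab : a.1 + 1 = b.1) (hxy : x < y) (hne : ¬(x = a ∧ y = b)) :
    Equiv.swap a b x < Equiv.swap a b y := by
  have hxy' : x.1 < y.1 := hxy
  have hab' : a.1 < b.1 := by omega
  rcases eq_or_ne x a with rfl | hxa
  · have hyb : y ≠ b := fun h => hne ⟨rfl, h⟩
    have hya : y ≠ x := ne_of_gt hxy
    rw [Equiv.swap_apply_left, Equiv.swap_apply_of_ne_of_ne hya hyb]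
    have h1 : y.1 ≠ b.1 := fun h => hyb (Fin.ext h)
    exact Fin.lt_def.2 (by omega)
  · rcases eq_or_ne x b with rfl | hxb
    · have hya : y ≠ a := by
        intro h
        have : y.1 = a.1 := congrArg Fin.val h
        omega
      have hyb : y ≠ x := ne_of_gt hxy
      rw [Equiv.swap_apply_right, Equiv.swap_apply_of_ne_of_ne hya hyb]
      have h1 : y.1 ≠ a.1 := fun h => hya (Fin.ext h)
      exact Fin.lt_def.2 (by omega)
    · rw [Equiv.swap_apply_of_ne_of_ne hxa hxb]
      rcases eq_or_ne y a with rfl | hya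
      · rw [Equiv.swap_apply_left]
        exact Fin.lt_def.2 (by omega)
      · rcases eq_or_ne y b with rfl | hyb
        · rw [Equiv.swap_apply_right]
          have h1 : x.1 ≠ a.1 := fun h => hxa (Fin.ext h)
          exact Fin.lt_def.2 (by omega)
        · rw [Equiv.swap_apply_of_ne_of_ne hya hyb]
          exact hxy

lemma invw_comp_swap (u : Fin N → Fin n) (a b : Fin N) (hab : a.1 + 1 = b.1) (h : u a < u b) :
    invw (fun j => u (Equiv.swap a b j)) = invw u + 1 := by
  classical
  set v : Fin N → Fin n := fun j => u (Equiv.swap a b j) with hv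
  have hVab : v a = u b := by rw [hv]; simp
  have hVba : v b = u a := by rw [hv]; simp
  have hab' : a < b := Fin.lt_def.2 (by omega)
  rw [invw, invw]
  set Iv := Finset.univ.filter fun p : Fin N × Fin N => p.1 < p.2 ∧ v p.2 < v p.1 with hIv
  set Iu := Finset.univ.filter fun p : Fin N × Fin N => p.1 < p.2 ∧ u p.2 < u p.1 with hIu
  have hmemv : (a, b) ∈ Iv := by
    rw [hIv, Finset.mem_filter]
    exact ⟨Finset.mem_univ _, hab', by rw [hVab, hVba]; exact h⟩
  have hmemu : (a, b) ∉ Iu := by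
    rw [hIu, Finset.mem_filter]
    rintro ⟨-, -, hlt⟩
    exact absurd h (not_lt.2 hlt.le)
  have hcard : (Iv.erase (a, b)).card = (Iu.erase (a, b)).card := by
    apply Finset.card_nbij' (fun p => (Equiv.swap a b p.1, Equiv.swap a b p.2))
      (fun p => (Equiv.swap a b p.1, Equiv.swap a b p.2))
    · rintro ⟨x, y⟩ hmem
      rw [Finset.mem_coe, Finset.mem_erase, hIv, Finset.mem_filter] at hmem
      obtain ⟨hne, -, hxy, hlt⟩ := hmem
      dsimp only at hxy hlt
      rw [Finset.mem_coe, Finset.mem_erase, hIu, Finset.mem_filter]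
      refine ⟨?_, Finset.mem_univ _, ?_, ?_⟩
      · intro hEq
        rw [Prod.mk.injEq] at hEq
        have hx : x = b := by
          have := congrArg (Equiv.swap a b) hEq.1
          simpa using this
        have hy : y = a := by
          have := congrArg (Equiv.swap a b) hEq.2
          simpa using this
        rw [hx, hy] at hxy
        exact absurd (hxy.trans hab') (lt_irrefl _)
      · refine swap_lt hab hxy ?_
        rintro ⟨h1, h2⟩
        exact hne (Prod.ext h1 h2)
      · have e1 : u (Equiv.swap a b y) = v y := rfl
        have e2 : u (Equiv.swap a b x) = v x := rfl
        rw [e1, e2]; exact hlt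
    · rintro ⟨x, y⟩ hmem
      rw [Finset.mem_coe, Finset.mem_erase, hIu, Finset.mem_filter] at hmem
      obtain ⟨hne, -, hxy, hlt⟩ := hmem
      dsimp only at hxy hlt
      rw [Finset.mem_coe, Finset.mem_erase, hIv, Finset.mem_filter]
      refine ⟨?_, Finset.mem_univ _, ?_, ?_⟩
      · intro hEq
        rw [Prod.mk.injEq] at hEq
        have hx : x = b := by
          have := congrArg (Equiv.swap a b) hEq.1
          simpa using this
        have hy : y = a := by
          have := congrArg (Equiv.swap a b) hEq.2
          simpa using this
        rw [hx, hy] at hxy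
        exact absurd (hxy.trans hab') (lt_irrefl _)
      · refine swap_lt hab hxy ?_
        rintro ⟨h1, h2⟩
        exact hne (Prod.ext h1 h2)
      · have e1 : v (Equiv.swap a b y) = u y := by rw [hv]; simp
        have e2 : v (Equiv.swap a b x) = u x := by rw [hv]; simp
        rw [e1, e2]; exact hlt
    · rintro ⟨x, y⟩ -; simp
    · rintro ⟨x, y⟩ -; simp
  have h1 : Iv.card = (Iv.erase (a, b)).card + 1 := by
    rw [Finset.card_erase_of_mem hmemv]
    have : 0 < Iv.card := Finset.card_pos.2 ⟨_, hmemv⟩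
    omega
  have h2 : Iu.erase (a, b) = Iu := Finset.erase_eq_of_notMem hmemu
  rw [h1, hcard, h2]

lemma invw_comp_swap_eq (u : Fin N → Fin n) (a b : Fin N) (h : u a = u b) :
    invw (fun j => u (Equiv.swap a b j)) = invw u := by
  rw [comp_swap_eq u a b h]

/-- counting positions in a half-open interval of `Fin N`. -/
lemma card_interval (hN : 0 < N) (a b : ℕ) (hb : b ≤ N) :
    (Finset.univ.filter fun j : Fin N => a ≤ j.1 ∧ j.1 < b).card = b - a := by
  rw [← Nat.card_Ico a b]
  apply Finset.card_nbij' (fun j : Fin N => j.1)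
    (fun x : ℕ => (⟨x % N, Nat.mod_lt _ hN⟩ : Fin N))
  · intro j hj
    rw [Finset.mem_coe, Finset.mem_filter] at hj
    rw [Finset.mem_coe, Finset.mem_Ico]
    exact ⟨hj.2.1, hj.2.2⟩
  · intro x hx
    rw [Finset.mem_coe, Finset.mem_Ico] at hx
    rw [Finset.mem_coe, Finset.mem_filter]
    have : x % N = x := Nat.mod_eq_of_lt (by omega)
    refine ⟨Finset.mem_univ _, ?_, ?_⟩ <;> simp only [this] <;> omega
  · intro j hj
    rw [Finset.mem_coe, Finset.mem_filter] at hj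
    exact Fin.ext (by simp only [Nat.mod_eq_of_lt j.2])
  · intro x hx
    rw [Finset.mem_coe, Finset.mem_Ico] at hx
    simp only [Nat.mod_eq_of_lt (show x < N by omega)]

/-- content is invariant under precomposition with a bijection of positions. -/
lemma content_comp (w : Fin N → Fin n) (f g : Fin N → Fin N)
    (hgf : ∀ j, g (f j) = j) (hfg : ∀ j, f (g j) = j) (i : Fin n) :
    content (fun j => w (f j)) i = content w i := by
  rw [content, content]
  apply Finset.card_nbij' f g
  · intro j hj
    rw [Finset.mem_coe, Finset.mem_filter] at hj ⊢
    exact ⟨Finset.mem_univ _, hj.2⟩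
  · intro j hj
    rw [Finset.mem_coe, Finset.mem_filter] at hj ⊢
    refine ⟨Finset.mem_univ _, ?_⟩
    rw [hfg]; exact hj.2
  · intro j _; exact hgf j
  · intro j _; exact hfg j

/-- key geometric-series identity: summing over the elements of `T`,
`z` to the number of strictly larger elements of `T`, gives `⟦#T⟧_z`. -/
lemma qint_sum_aux (z : ℂ) : ∀ (c : ℕ) (T : Finset (Fin N)), T.card = c →
    (∑ p ∈ T, z ^ ((T.filter fun j => p < j).card)) = qint z T.card := by
  intro c
  induction c with
  | zero =>
    intro T hT
    rw [Finset.card_eq_zero] at hT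
    subst hT
    simp [qint]
  | succ d ih =>
    intro T hT
    have hne : T.Nonempty := Finset.card_pos.1 (by omega)
    set p0 := T.min' hne with hp0
    have hp0m : p0 ∈ T := T.min'_mem hne
    rw [← Finset.add_sum_erase _ _ hp0m]
    have hT' : (T.erase p0).card = d := by rw [Finset.card_erase_of_mem hp0m]; omega
    have e0 : (T.filter fun j => p0 < j) = T.erase p0 := by
      ext j
      rw [Finset.mem_filter, Finset.mem_erase]
      constructor
      · rintro ⟨hj, hlt⟩; exact ⟨ne_of_gt hlt, hj⟩
      · rintro ⟨hne', hj⟩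
        exact ⟨hj, lt_of_le_of_ne (T.min'_le j hj) (Ne.symm hne')⟩
    have e1 : ∀ p ∈ T.erase p0, (T.filter fun j => p < j) = ((T.erase p0).filter fun j => p < j) := by
      intro p hp
      rw [Finset.mem_erase] at hp
      ext j
      rw [Finset.mem_filter, Finset.mem_filter, Finset.mem_erase]
      constructor
      · rintro ⟨hj, hlt⟩
        refine ⟨⟨?_, hj⟩, hlt⟩
        intro hj0
        subst hj0
        exact absurd (lt_of_le_of_lt (T.min'_le p hp.2) hlt) (lt_irrefl _)
      · rintro ⟨⟨-, hj⟩, hlt⟩; exact ⟨hj, hlt⟩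
    rw [Finset.sum_congr rfl (fun p hp => by rw [e1 p hp])]
    rw [ih (T.erase p0) hT', e0, hT', hT]
    rw [qint, qint, Finset.sum_range_succ]
    ring

end Stmt6
namespace Stmt6

variable {n N : ℕ}

lemma scount_step_lt (w : Fin N → Fin n) {p p' r : Fin N} (hp : p.1 + 1 = p'.1)
    (hpr : p'.1 ≤ r.1) (h : w p < w r) : scount w p r = scount w p' r + 1 := by
  rw [scount, scount]
  have heq : (Finset.univ.filter fun j : Fin N => p.1 ≤ j.1 ∧ j.1 < r.1 ∧ w j < w r)
      = insert p (Finset.univ.filter fun j : Fin N => p'.1 ≤ j.1 ∧ j.1 < r.1 ∧ w j < w r) := by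
    ext j
    simp only [Finset.mem_insert, Finset.mem_filter, Finset.mem_univ, true_and]
    constructor
    · rintro ⟨h1, h2, h3⟩
      by_cases hj : j = p
      · exact Or.inl hj
      · refine Or.inr ⟨?_, h2, h3⟩
        have : j.1 ≠ p.1 := fun hh => hj (Fin.ext hh)
        omega
    · rintro (rfl | ⟨h1, h2, h3⟩)
      · exact ⟨le_rfl, by omega, h⟩
      · exact ⟨by omega, h2, h3⟩
  rw [heq, Finset.card_insert_of_notMem]
  intro hmem
  rw [Finset.mem_filter] at hmem
  omega

lemma scount_step_eq (w : Fin N → Fin n) {p p' r : Fin N} (hp : p.1 + 1 = p'.1)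
    (h : w p = w r) : scount w p r = scount w p' r := by
  rw [scount, scount]
  congr 1
  ext j
  simp only [Finset.mem_filter, Finset.mem_univ, true_and]
  constructor
  · rintro ⟨h1, h2, h3⟩
    refine ⟨?_, h2, h3⟩
    have : j.1 ≠ p.1 := by
      intro hh
      rw [Fin.ext hh] at h3
      rw [h] at h3
      exact absurd h3 (lt_irrefl _)
    omega
  · rintro ⟨h1, h2, h3⟩
    exact ⟨by omega, h2, h3⟩

lemma invw_cyc (w : Fin N → Fin n) (r : Fin N) (hw : ∀ j : Fin N, j.1 ≤ r.1 → w j ≤ w r) :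
    ∀ (d : ℕ) (p : Fin N), p.1 + d = r.1 →
      invw (fun j => w (cyf p r j)) = invw w + scount w p r := by
  intro d
  induction d with
  | zero =>
    intro p hp
    have hpr : p = r := Fin.ext (by omega)
    subst hpr
    have h1 : (fun j => w (cyf p p j)) = w := funext fun j => by rw [cyf_self]
    rw [h1, scount_self]
    omega
  | succ d ih =>
    intro p hp
    have hp'lt : p.1 + 1 < N := by have := r.2; omega
    set p' : Fin N := ⟨p.1 + 1, hp'lt⟩ with hp'def
    have hpp' : p.1 + 1 = p'.1 := rfl
    have hp'r : p'.1 ≤ r.1 := by simp only [hp'def]; omega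
    have h1 : (fun j => w (cyf p r j))
        = fun j => (fun jj => w (cyf p' r jj)) (Equiv.swap p p' j) :=
      funext fun j => by rw [cyf_succ hpp' hp'r j]
    rw [h1]
    have hup : w (cyf p' r p) = w p := by rw [cyf_id (Or.inl (by omega))]
    have hup' : w (cyf p' r p') = w r := by rw [cyf_p hp'r]
    rcases lt_or_eq_of_le (hw p (by omega)) with hlt | heq
    · rw [invw_comp_swap (fun jj => w (cyf p' r jj)) p p' hpp'
        (by simpa only [hup, hup'] using hlt)]
      rw [ih p' (by omega), scount_step_lt w hpp' hp'r hlt]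
      omega
    · rw [invw_comp_swap_eq (fun jj => w (cyf p' r jj)) p p'
        (by simpa only [hup, hup'] using heq)]
      rw [ih p' (by omega), scount_step_eq w hpp' heq]

lemma scount_add_ecount (w : Fin N → Fin n) (p r : Fin N) (hpr : p.1 ≤ r.1)
    (hw : ∀ j : Fin N, j.1 ≤ r.1 → w j ≤ w r) :
    scount w p r + ecount w p r = r.1 - p.1 := by
  rw [← card_interval (N := N) r.pos p.1 r.1 r.2.le]
  rw [scount, ecount]
  rw [← Finset.card_union_of_disjoint]
  · congr 1
    ext j
    simp only [Finset.mem_union, Finset.mem_filter, Finset.mem_univ, true_and]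
    constructor
    · rintro (⟨h1, h2, h3⟩ | ⟨h1, h2, h3⟩) <;> exact ⟨h1, h2⟩
    · rintro ⟨h1, h2⟩
      rcases lt_or_eq_of_le (hw j (by omega)) with hlt | heq
      · exact Or.inl ⟨h1, h2, hlt⟩
      · exact Or.inr ⟨h1, h2, heq⟩
  · rw [Finset.disjoint_filter]
    rintro j - ⟨-, -, h3⟩ ⟨-, -, h4⟩
    rw [h4] at h3
    exact absurd h3 (lt_irrefl _)

lemma ecount_shift (w : Fin N → Fin n) (p r : Fin N) (hpr : p.1 ≤ r.1) :
    (Finset.univ.filter fun j : Fin N => (j.1 ≤ r.1 ∧ w (cyf p r j) = w r) ∧ p < j).card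
      = ecount w p r := by
  rw [ecount]
  apply Finset.card_nbij' (fun j : Fin N => ⟨j.1 - 1, lt_of_le_of_lt (Nat.sub_le _ _) j.2⟩)
    (fun j : Fin N => cyg p r j)
  · intro j hj
    rw [Finset.mem_coe, Finset.mem_filter] at hj
    obtain ⟨-, ⟨h1, h2⟩, h3⟩ := hj
    have h3' : p.1 < j.1 := h3
    have hcm : (cyf p r j).1 = j.1 - 1 := cyf_mid (by omega) (by omega)
    have hce : cyf p r j = ⟨j.1 - 1, lt_of_le_of_lt (Nat.sub_le _ _) j.2⟩ := Fin.ext hcm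
    rw [Finset.mem_coe, Finset.mem_filter]
    refine ⟨Finset.mem_univ _, by simp only; omega, by simp only; omega, ?_⟩
    dsimp only; rw [← hce]
    exact h2
  · intro j hj
    rw [Finset.mem_coe, Finset.mem_filter] at hj
    obtain ⟨-, h1, h2, h3⟩ := hj
    have hgm : (cyg p r j).1 = j.1 + 1 := cyg_mid h1 h2
    rw [Finset.mem_coe, Finset.mem_filter]; dsimp only
    refine ⟨Finset.mem_univ _, ⟨by omega, ?_⟩, ?_⟩
    · rw [cyf_cyg hpr]
      exact h3
    · exact Fin.lt_def.2 (by omega)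
  · intro j hj
    rw [Finset.mem_coe, Finset.mem_filter] at hj
    obtain ⟨-, ⟨h1, h2⟩, h3⟩ := hj
    have h3' : p.1 < j.1 := h3
    apply Fin.ext
    rw [cyg_mid (by simp only; omega) (by simp only; omega)]
    simp only
    omega
  · intro j hj
    rw [Finset.mem_coe, Finset.mem_filter] at hj
    obtain ⟨-, h1, h2, h3⟩ := hj
    have hgm : (cyg p r j).1 = j.1 + 1 := cyg_mid h1 h2
    apply Fin.ext
    simp only
    omega

end Stmt6
namespace Stmt6

variable {n N : ℕ}

lemma rop_apply (q : ℝ) {j : ℕ} (hj : j + 1 < N) (f g : Fin N → Fin n) :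
    rop n N q j f g =
      rMat n q (f ⟨j, Nat.lt_of_succ_lt hj⟩, f ⟨j + 1, hj⟩)
          (g ⟨j, Nat.lt_of_succ_lt hj⟩, g ⟨j + 1, hj⟩) *
        (if ∀ k : Fin N, k.1 ≠ j → k.1 ≠ j + 1 → f k = g k then 1 else 0) := by
  simp only [rop]
  rw [dif_pos hj]

lemma rop_mulVec_eq (q : ℝ) {j : ℕ} (hj : j + 1 < N) (w : Fin N → Fin n)
    (h : w ⟨j, Nat.lt_of_succ_lt hj⟩ = w ⟨j + 1, hj⟩) :
    rop n N q j *ᵥ Pi.single w 1 = Pi.single w 1 := by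
  funext f
  simp only [Matrix.mulVec_single_one, Matrix.col_apply]
  rw [rop_apply q hj, Pi.single_apply]
  set ja : Fin N := ⟨j, Nat.lt_of_succ_lt hj⟩ with hja
  set jb : Fin N := ⟨j + 1, hj⟩ with hjb
  rw [rMat]
  dsimp only
  rw [if_pos h]
  by_cases hf : f = w
  · subst hf
    rw [if_pos rfl, if_pos (fun k _ _ => rfl), mul_one, if_pos rfl]
  · rw [if_neg hf]
    by_cases h1 : (f ja, f jb) = (w ja, w jb)
    · rw [if_pos h1]
      rw [Prod.mk.injEq] at h1
      have h2 : ¬ ∀ k : Fin N, k.1 ≠ j → k.1 ≠ j + 1 → f k = w k := by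
        intro h2
        apply hf
        funext k
        by_cases hk1 : k.1 = j
        · have : k = ja := Fin.ext hk1
          rw [this]; exact h1.1
        · by_cases hk2 : k.1 = j + 1
          · have : k = jb := Fin.ext hk2
            rw [this]; exact h1.2
          · exact h2 k hk1 hk2
      rw [if_neg h2, mul_zero]
    · rw [if_neg h1, zero_mul]

lemma rop_mulVec_lt (q : ℝ) {j : ℕ} (hj : j + 1 < N) (w : Fin N → Fin n)
    (h : w ⟨j, Nat.lt_of_succ_lt hj⟩ < w ⟨j + 1, hj⟩) :
    rop n N q j *ᵥ Pi.single w 1 =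
      ((q : ℂ))⁻¹ •
        (Pi.single (fun x => w (Equiv.swap ⟨j, Nat.lt_of_succ_lt hj⟩ ⟨j + 1, hj⟩ x)) 1 :
          (Fin N → Fin n) → ℂ) := by
  funext f
  simp only [Matrix.mulVec_single_one, Matrix.col_apply, Pi.smul_apply, smul_eq_mul]
  rw [rop_apply q hj, Pi.single_apply]
  set ja : Fin N := ⟨j, Nat.lt_of_succ_lt hj⟩ with hja
  set jb : Fin N := ⟨j + 1, hj⟩ with hjb
  set w' : Fin N → Fin n := fun x => w (Equiv.swap ja jb x) with hw'
  have hne : ¬ (w ja = w jb) := ne_of_lt h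
  rw [rMat]
  dsimp only
  rw [if_neg hne]
  rw [if_neg (show ¬(w jb < w ja ∧ (f ja, f jb) = (w ja, w jb)) from
    fun hh => absurd (h.trans hh.1) (lt_irrefl _)), add_zero]
  have hwja : w' ja = w jb := by rw [hw']; simp only [Equiv.swap_apply_left]
  have hwjb : w' jb = w ja := by rw [hw']; simp only [Equiv.swap_apply_right]
  have hwoff : ∀ k : Fin N, k.1 ≠ j → k.1 ≠ j + 1 → w' k = w k := by
    intro k hk1 hk2
    rw [hw']
    simp only
    rw [Equiv.swap_apply_of_ne_of_ne (fun hh => hk1 (by rw [hh]))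
      (fun hh => hk2 (by rw [hh]))]
  by_cases hf : f = w'
  · subst hf
    rw [if_pos (by rw [Prod.mk.injEq]; exact ⟨hwja, hwjb⟩)]
    rw [if_pos hwoff, mul_one, if_pos rfl, mul_one]
  · rw [if_neg hf]
    by_cases h1 : (f ja, f jb) = (w jb, w ja)
    · rw [if_pos h1]
      rw [Prod.mk.injEq] at h1
      have h2 : ¬ ∀ k : Fin N, k.1 ≠ j → k.1 ≠ j + 1 → f k = w k := by
        intro h2
        apply hf
        funext k
        by_cases hk1 : k.1 = j
        · have hk : k = ja := Fin.ext hk1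
          rw [hk, hwja]; exact h1.1
        · by_cases hk2 : k.1 = j + 1
          · have hk : k = jb := Fin.ext hk2
            rw [hk, hwjb]; exact h1.2
          · rw [hwoff k hk1 hk2]; exact h2 k hk1 hk2
      rw [if_neg h2, mul_zero]
    · rw [if_neg h1, zero_mul, mul_zero]

lemma mulVec_sum {α β : Type*} [Fintype α] [DecidableEq α] (M : Matrix α α ℂ)
    (s : Finset β) (v : β → α → ℂ) :
    M *ᵥ (∑ x ∈ s, v x) = ∑ x ∈ s, M *ᵥ v x := by
  funext i
  simp only [Matrix.mulVec, dotProduct, Finset.sum_apply, Finset.mul_sum]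
  exact Finset.sum_comm

lemma sum_mulVec {α β : Type*} [Fintype α] (s : Finset β) (M : β → Matrix α α ℂ)
    (v : α → ℂ) :
    (∑ t ∈ s, M t) *ᵥ v = ∑ t ∈ s, M t *ᵥ v := by
  funext i
  simp only [Matrix.mulVec, dotProduct, Matrix.sum_apply, Finset.sum_apply, Finset.sum_mul]
  rw [Finset.sum_comm]

end Stmt6
namespace Stmt6

variable {n N : ℕ}

lemma chain_mulVec (q : ℝ) (k : ℕ) (hk2 : k + 2 ≤ N) (w : Fin N → Fin n)
    (hw : ∀ j : Fin N, j.1 ≤ k + 1 → w j ≤ w ⟨k + 1, by omega⟩) :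
    ∀ t, t ≤ k + 1 →
      prodChain n N q (k + 1) t *ᵥ Pi.single w 1 =
        ((q : ℂ))⁻¹ ^ scount w ⟨k + 1 - t, by omega⟩ ⟨k + 1, by omega⟩ •
          (Pi.single (fun j => w (cyf ⟨k + 1 - t, by omega⟩ ⟨k + 1, by omega⟩ j)) 1 :
            (Fin N → Fin n) → ℂ) := by
  have hr : k + 1 < N := by omega
  set r : Fin N := ⟨k + 1, hr⟩ with hrdef
  intro t
  induction t with
  | zero =>
    intro _
    have h1 : prodChain n N q (k + 1) 0 = 1 := rfl
    have hp : (⟨k + 1 - 0, by omega⟩ : Fin N) = r := Fin.ext (by simp [hrdef])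
    rw [h1, Matrix.one_mulVec, hp, scount_self, pow_zero, one_smul]
    have h2 : (fun j => w (cyf r r j)) = w := funext fun j => by rw [cyf_self]
    rw [h2]
  | succ t ih =>
    intro ht
    have ht' : t ≤ k + 1 := by omega
    have h1 : prodChain n N q (k + 1) (t + 1)
        = rop n N q (k + 1 - (t + 1)) * prodChain n N q (k + 1) t := rfl
    rw [h1, ← Matrix.mulVec_mulVec, ih ht', Matrix.mulVec_smul]
    set p' : Fin N := ⟨k + 1 - t, by omega⟩ with hp'def
    set p : Fin N := ⟨k + 1 - (t + 1), by omega⟩ with hpdef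
    have hpp' : p.1 + 1 = p'.1 := by show k + 1 - (t + 1) + 1 = k + 1 - t; omega
    have hp'r : p'.1 ≤ r.1 := by show k + 1 - t ≤ k + 1; omega
    set u : Fin N → Fin n := fun jj => w (cyf p' r jj) with hudef
    -- the rop index
    have hjval : k + 1 - (t + 1) + 1 < N := by omega
    have hja : (⟨k + 1 - (t + 1), Nat.lt_of_succ_lt hjval⟩ : Fin N) = p := rfl
    have hjb : (⟨k + 1 - (t + 1) + 1, hjval⟩ : Fin N) = p' := Fin.ext (by
      simp only [hp'def]; omega)
    have hup : u p = w p := by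
      rw [hudef]
      simp only
      rw [cyf_id (Or.inl (by omega))]
    have hup' : u p' = w r := by
      rw [hudef]
      simp only
      rw [cyf_p hp'r]
    rcases lt_or_eq_of_le (hw p (by simp only [hpdef]; omega)) with hlt | heq
    · have hlt' : u ⟨k + 1 - (t + 1), Nat.lt_of_succ_lt hjval⟩
          < u ⟨k + 1 - (t + 1) + 1, hjval⟩ := by
        rw [hja, hjb, hup, hup']
        exact hlt
      rw [rop_mulVec_lt q hjval u hlt']
      rw [smul_smul, ← pow_succ]
      have hsc : scount w p' r + 1 = scount w p r :=
        (scount_step_lt w hpp' hp'r hlt).symm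
      rw [hsc]
      have harg : (fun x => u (Equiv.swap ⟨k + 1 - (t + 1), Nat.lt_of_succ_lt hjval⟩
          ⟨k + 1 - (t + 1) + 1, hjval⟩ x)) = fun x => w (cyf p r x) := by
        funext x
        rw [hja, hjb]
        exact congrArg w (cyf_succ hpp' hp'r x).symm
      rw [harg]
    · have heq' : u ⟨k + 1 - (t + 1), Nat.lt_of_succ_lt hjval⟩
          = u ⟨k + 1 - (t + 1) + 1, hjval⟩ := by
        rw [hja, hjb, hup, hup']
        exact heq
      rw [rop_mulVec_eq q hjval u heq']
      have hsc : scount w p' r = scount w p r :=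
        (scount_step_eq w hpp' heq).symm
      rw [hsc]
      congr 1
      have hcs : (fun x => w (cyf p r x)) = fun x => u (Equiv.swap p p' x) :=
        funext fun x => by rw [cyf_succ hpp' hp'r x]
      have hce : (fun x => u (Equiv.swap p p' x)) = u :=
        comp_swap_eq u p p' (by rw [hup, hup']; exact heq)
      rw [hcs, hce]

end Stmt6
namespace Stmt6

variable {n N : ℕ}

/-- words agreeing with `w0` past position `k` and with full content `m`. -/
def Ak (w0 : Fin N → Fin n) (m : Fin n → ℕ) (k : ℕ) : Finset (Fin N → Fin n) :=
  Finset.univ.filter fun w => (∀ j : Fin N, k < j.1 → w j = w0 j) ∧ ∀ i, content w i = m i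

/-- number of letters `i` among the first `k+1` positions of `w0`. -/
def cnt (w0 : Fin N → Fin n) (k : ℕ) (i : Fin n) : ℕ :=
  (Finset.univ.filter fun j : Fin N => w0 j = i ∧ j.1 ≤ k).card

lemma card_filter_split (P : Fin N → Prop) [DecidablePred P] (K : ℕ) :
    (Finset.univ.filter P).card
      = (Finset.univ.filter fun j => P j ∧ j.1 ≤ K).card
        + (Finset.univ.filter fun j => P j ∧ ¬ j.1 ≤ K).card := by
  have h := Finset.card_filter_add_card_filter_not
    (s := Finset.univ.filter P) (p := fun j : Fin N => j.1 ≤ K)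
  rw [Finset.filter_filter, Finset.filter_filter] at h
  omega

lemma prefcnt (w0 w : Fin N → Fin n) (m : Fin n → ℕ) (hw0c : ∀ i, content w0 i = m i)
    (K : ℕ) (hag : ∀ j : Fin N, K < j.1 → w j = w0 j) (hcc : ∀ i, content w i = m i)
    (i : Fin n) :
    (Finset.univ.filter fun j : Fin N => w j = i ∧ j.1 ≤ K).card
      = cnt w0 K i := by
  have h1 := card_filter_split (fun j : Fin N => w j = i) K
  have h2 := card_filter_split (fun j : Fin N => w0 j = i) K
  have htail : (Finset.univ.filter fun j : Fin N => w j = i ∧ ¬ j.1 ≤ K)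
      = (Finset.univ.filter fun j : Fin N => w0 j = i ∧ ¬ j.1 ≤ K) := by
    ext j
    simp only [Finset.mem_filter, Finset.mem_univ, true_and]
    constructor
    · rintro ⟨he, hgt⟩
      rw [← hag j (by omega)]
      exact ⟨he, hgt⟩
    · rintro ⟨he, hgt⟩
      rw [hag j (by omega)]
      exact ⟨he, hgt⟩
  have hcontent : content w i = content w0 i := by rw [hcc, hw0c]
  rw [content, content] at hcontent
  rw [cnt]
  rw [htail] at h1
  omega

lemma prefix_le (w0 : Fin N → Fin n) (hw0 : Monotone w0) (m : Fin n → ℕ)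
    (hw0c : ∀ i, content w0 i = m i) (k : ℕ) (hk : k + 1 < N)
    (w : Fin N → Fin n) (hag : ∀ j : Fin N, k < j.1 → w j = w0 j)
    (hcc : ∀ i, content w i = m i) :
    ∀ j : Fin N, j.1 ≤ k + 1 → w j ≤ w ⟨k + 1, hk⟩ := by
  set r : Fin N := ⟨k + 1, hk⟩ with hrdef
  have hwr : w r = w0 r := hag r (by simp only [hrdef]; omega)
  intro j hj
  by_cases hjr : j.1 = k + 1
  · have hje : j = r := Fin.ext hjr
    rw [hje]
  · by_contra hgt
    push_neg at hgt
    set v0 := w0 r with hv0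
    have hv : v0 < w j := by rw [← hwr]; exact hgt
    set Sw := Finset.univ.filter fun x : Fin N => v0 < w x with hSw
    set S0 := Finset.univ.filter fun x : Fin N => v0 < w0 x with hS0
    have hsub : S0 ⊆ Sw := by
      intro x hx
      rw [hS0, Finset.mem_filter] at hx
      have hxk : k < x.1 := by
        by_contra hxk
        push_neg at hxk
        have hmono : w0 x ≤ w0 r := hw0 (Fin.le_def.2 (by simp only [hrdef]; omega))
        exact absurd (lt_of_lt_of_le hx.2 hmono) (lt_irrefl v0)
      rw [hSw, Finset.mem_filter]
      exact ⟨Finset.mem_univ _, by rw [hag x hxk]; exact hx.2⟩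
    have hjmem : j ∈ Sw := by rw [hSw, Finset.mem_filter]; exact ⟨Finset.mem_univ _, hv⟩
    have hjnot : j ∉ S0 := by
      rw [hS0, Finset.mem_filter]
      rintro ⟨-, hlt⟩
      have hmono : w0 j ≤ w0 r := hw0 (Fin.le_def.2 (by simp only [hrdef]; omega))
      exact absurd (lt_of_lt_of_le hlt hmono) (lt_irrefl v0)
    have hcardlt : S0.card < Sw.card :=
      Finset.card_lt_card ((Finset.ssubset_iff_of_subset hsub).2 ⟨j, hjmem, hjnot⟩)
    set T := Finset.univ.filter fun i : Fin n => v0 < i with hT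
    have hcw : Sw.card = ∑ b ∈ T, content w b := by
      rw [Finset.card_eq_sum_card_fiberwise (f := w) (t := T) (fun x hx => by
        rw [Finset.mem_coe, hSw, Finset.mem_filter] at hx
        rw [Finset.mem_coe, hT, Finset.mem_filter]
        exact ⟨Finset.mem_univ _, hx.2⟩)]
      apply Finset.sum_congr rfl
      intro b hb
      rw [hT, Finset.mem_filter] at hb
      rw [content]
      congr 1
      ext x
      simp only [hSw, Finset.mem_filter, Finset.mem_univ, true_and]
      constructor
      · rintro ⟨-, he⟩; exact he
      · intro he; exact ⟨by rw [he]; exact hb.2, he⟩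
    have hcw0 : S0.card = ∑ b ∈ T, content w0 b := by
      rw [Finset.card_eq_sum_card_fiberwise (f := w0) (t := T) (fun x hx => by
        rw [Finset.mem_coe, hS0, Finset.mem_filter] at hx
        rw [Finset.mem_coe, hT, Finset.mem_filter]
        exact ⟨Finset.mem_univ _, hx.2⟩)]
      apply Finset.sum_congr rfl
      intro b hb
      rw [hT, Finset.mem_filter] at hb
      rw [content]
      congr 1
      ext x
      simp only [hS0, Finset.mem_filter, Finset.mem_univ, true_and]
      constructor
      · rintro ⟨-, he⟩; exact he
      · intro he; exact ⟨by rw [he]; exact hb.2, he⟩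
    have hceq : Sw.card = S0.card := by
      rw [hcw, hcw0]
      apply Finset.sum_congr rfl
      intro b _
      rw [hcc b, hw0c b]
    omega

lemma cnt_succ (w0 : Fin N → Fin n) (k : ℕ) (hk : k + 1 < N) (i : Fin n) :
    cnt w0 (k + 1) i = cnt w0 k i + if w0 ⟨k + 1, hk⟩ = i then 1 else 0 := by
  rw [cnt, cnt]
  have hsplit : (Finset.univ.filter fun j : Fin N => w0 j = i ∧ j.1 ≤ k + 1)
      = (Finset.univ.filter fun j : Fin N => w0 j = i ∧ j.1 ≤ k)
        ∪ (Finset.univ.filter fun j : Fin N => w0 j = i ∧ j.1 = k + 1) := by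
    ext j
    simp only [Finset.mem_union, Finset.mem_filter, Finset.mem_univ, true_and]
    constructor
    · rintro ⟨he, hle⟩
      by_cases hj : j.1 = k + 1
      · exact Or.inr ⟨he, hj⟩
      · exact Or.inl ⟨he, by omega⟩
    · rintro (⟨he, hle⟩ | ⟨he, heq⟩)
      · exact ⟨he, by omega⟩
      · exact ⟨he, by omega⟩
  rw [hsplit, Finset.card_union_of_disjoint]
  · congr 1
    by_cases hc : w0 ⟨k + 1, hk⟩ = i
    · rw [if_pos hc]
      have : (Finset.univ.filter fun j : Fin N => w0 j = i ∧ j.1 = k + 1)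
          = {(⟨k + 1, hk⟩ : Fin N)} := by
        ext j
        simp only [Finset.mem_filter, Finset.mem_univ, true_and, Finset.mem_singleton]
        constructor
        · rintro ⟨-, hj⟩; exact Fin.ext hj
        · rintro rfl; exact ⟨hc, rfl⟩
      rw [this, Finset.card_singleton]
    · rw [if_neg hc]
      have : (Finset.univ.filter fun j : Fin N => w0 j = i ∧ j.1 = k + 1)
          = (∅ : Finset (Fin N)) := by
        rw [Finset.filter_eq_empty_iff]
        rintro j - ⟨he, hj⟩
        apply hc
        have : j = ⟨k + 1, hk⟩ := Fin.ext hj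
        rw [← this]; exact he
      rw [this, Finset.card_empty]
  · rw [Finset.disjoint_filter]
    rintro j - ⟨-, h1⟩ ⟨-, h2⟩
    omega

lemma qfact_succ (z : ℂ) (a : ℕ) : qfact z (a + 1) = qfact z a * qint z (a + 1) := by
  rw [qfact, qfact, Finset.prod_range_succ]

lemma prod_qfact_succ (z : ℂ) (w0 : Fin N → Fin n) (k : ℕ) (hk : k + 1 < N) :
    (∏ i, qfact z (cnt w0 (k + 1) i))
      = qint z (cnt w0 (k + 1) (w0 ⟨k + 1, hk⟩)) * ∏ i, qfact z (cnt w0 k i) := by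
  set c0 := w0 ⟨k + 1, hk⟩ with hc0
  have h1 : ∀ i : Fin n, qfact z (cnt w0 (k + 1) i)
      = qfact z (cnt w0 k i) * (if i = c0 then qint z (cnt w0 (k + 1) c0) else 1) := by
    intro i
    by_cases hi : i = c0
    · subst hi
      rw [if_pos rfl]
      have he : cnt w0 (k + 1) c0 = cnt w0 k c0 + 1 := by
        rw [cnt_succ w0 k hk c0, if_pos hc0.symm]
      rw [he, qfact_succ]
    · rw [if_neg hi, mul_one]
      have he : cnt w0 (k + 1) i = cnt w0 k i := by
        rw [cnt_succ w0 k hk i, if_neg (fun hh => hi (by rw [← hh, hc0])), add_zero]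
      rw [he]
  rw [Finset.prod_congr rfl (fun i _ => h1 i), Finset.prod_mul_distrib]
  rw [Finset.prod_ite_eq' Finset.univ c0 (fun _ => qint z (cnt w0 (k + 1) c0))]
  rw [if_pos (Finset.mem_univ _)]
  ring

lemma invw_of_monotone (w0 : Fin N → Fin n) (hw0 : Monotone w0) : invw w0 = 0 := by
  rw [invw, Finset.card_eq_zero, Finset.filter_eq_empty_iff]
  rintro p - ⟨hlt, hvlt⟩
  exact absurd (lt_of_le_of_lt (hw0 (le_of_lt hlt)) hvlt) (lt_irrefl _)

lemma Ak_zero (hN : 0 < N) (w0 : Fin N → Fin n) (m : Fin n → ℕ)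
    (hw0c : ∀ i, content w0 i = m i) : Ak w0 m 0 = {w0} := by
  ext w
  rw [Ak, Finset.mem_filter, Finset.mem_singleton]
  constructor
  · rintro ⟨-, hag, hcc⟩
    set z0 : Fin N := ⟨0, hN⟩ with hz0
    have hkey : w z0 = w0 z0 := by
      by_contra hne
      set S1 := Finset.univ.filter fun j : Fin N => w j = w z0 with hS1
      set S2 := Finset.univ.filter fun j : Fin N => w0 j = w z0 with hS2
      have hcards : S1.card = S2.card := by
        have h1 := hcc (w z0)
        have h2 := hw0c (w z0)
        rw [content] at h1 h2
        rw [hS1, hS2]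
        omega
      have herase : S1.erase z0 = S2.erase z0 := by
        ext j
        simp only [Finset.mem_erase, hS1, hS2, Finset.mem_filter, Finset.mem_univ, true_and]
        constructor
        · rintro ⟨hne', he⟩
          refine ⟨hne', ?_⟩
          rw [← hag j (by
            have : j.1 ≠ 0 := fun hh => hne' (Fin.ext hh)
            omega)]
          exact he
        · rintro ⟨hne', he⟩
          refine ⟨hne', ?_⟩
          rw [hag j (by
            have : j.1 ≠ 0 := fun hh => hne' (Fin.ext hh)
            omega)]
          exact he
      have hz1 : z0 ∈ S1 := by rw [hS1, Finset.mem_filter]; exact ⟨Finset.mem_univ _, rfl⟩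
      have hz2 : z0 ∉ S2 := by
        rw [hS2, Finset.mem_filter]
        rintro ⟨-, he⟩
        exact hne he.symm
      have h1 : S1.card = (S1.erase z0).card + 1 := by
        rw [Finset.card_erase_of_mem hz1]
        have : 0 < S1.card := Finset.card_pos.2 ⟨z0, hz1⟩
        omega
      have h2 : S2.erase z0 = S2 := Finset.erase_eq_of_notMem hz2
      rw [herase, h2] at h1
      omega
    funext j
    by_cases hj : j.1 = 0
    · have : j = z0 := Fin.ext hj
      rw [this]; exact hkey
    · exact hag j (by omega)
  · rintro rfl
    exact ⟨Finset.mem_univ _, fun j _ => rfl, hw0c⟩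

lemma prod_qfact_zero (z : ℂ) (hN : 0 < N) (w0 : Fin N → Fin n) :
    (∏ i, qfact z (cnt w0 0 i)) = 1 := by
  apply Finset.prod_eq_one
  intro i _
  have hle : cnt w0 0 i ≤ 1 := by
    rw [cnt]
    have hsub : (Finset.univ.filter fun j : Fin N => w0 j = i ∧ j.1 ≤ 0)
        ⊆ {(⟨0, hN⟩ : Fin N)} := by
      intro j hj
      rw [Finset.mem_filter] at hj
      rw [Finset.mem_singleton]
      exact Fin.ext (Nat.le_zero.1 hj.2.2)
    have := Finset.card_le_card hsub
    rw [Finset.card_singleton] at this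
    exact this
  interval_cases h : cnt w0 0 i
  · rfl
  · rw [qfact, Finset.prod_range_one, qint, Finset.sum_range_one, pow_zero]

end Stmt6
namespace Stmt6

variable {n N : ℕ}

/-- positions of occurrences of the letter `c` within the first `K+1` slots. -/
def occ (c : Fin n) (K : ℕ) (w' : Fin N → Fin n) : Finset (Fin N) :=
  Finset.univ.filter fun p : Fin N => w' p = c ∧ p.1 ≤ K

lemma Yaux_key (q : ℝ) (z : ℂ) (w0 : Fin N → Fin n) (hw0 : Monotone w0)
    (m : Fin n → ℕ) (hw0c : ∀ i, content w0 i = m i) (hN : 0 < N) :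
    ∀ k, k < N →
      Yaux n N q z k *ᵥ Pi.single w0 1 =
        (∏ i, qfact z (cnt w0 k i)) •
          ∑ w ∈ Ak w0 m k, ((z * ((q : ℂ))⁻¹) ^ invw w) •
            (Pi.single w 1 : (Fin N → Fin n) → ℂ) := by
  intro k
  induction k with
  | zero =>
    intro _
    have h1 : Yaux n N q z 0 = 1 := rfl
    rw [h1, Matrix.one_mulVec, prod_qfact_zero z hN w0, Ak_zero hN w0 m hw0c,
      Finset.sum_singleton, invw_of_monotone w0 hw0, pow_zero, one_smul, one_smul]
  | succ k ih =>
    intro hk1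
    have hk2 : k + 2 ≤ N := hk1
    set r : Fin N := ⟨k + 1, hk1⟩ with hrdef
    have h1 : Yaux n N q z (k + 1) = Smat n N q (k + 1) z * Yaux n N q z k := rfl
    rw [h1, ← Matrix.mulVec_mulVec, ih (by omega), Matrix.mulVec_smul, mulVec_sum]
    have hstep : ∀ w ∈ Ak w0 m k,
        Smat n N q (k + 1) z *ᵥ
            (((z * ((q : ℂ))⁻¹) ^ invw w) • (Pi.single w 1 : (Fin N → Fin n) → ℂ))
          = ∑ t ∈ Finset.range (k + 2),
              (((z * ((q : ℂ))⁻¹) ^ invw w) *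
                  (z ^ t * ((q : ℂ))⁻¹ ^
                    scount w ⟨k + 1 - t, lt_of_le_of_lt (Nat.sub_le _ _) hk1⟩ r)) •
                (Pi.single
                  (fun j => w (cyf ⟨k + 1 - t, lt_of_le_of_lt (Nat.sub_le _ _) hk1⟩ r j)) 1 :
                  (Fin N → Fin n) → ℂ) := by
      intro w hw
      rw [Ak, Finset.mem_filter] at hw
      obtain ⟨-, hag, hcc⟩ := hw
      have hwle : ∀ j : Fin N, j.1 ≤ k + 1 → w j ≤ w r := prefix_le w0 hw0 m hw0c k hk1 w hag hcc
      rw [Matrix.mulVec_smul]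
      have hS : Smat n N q (k + 1) z
          = ∑ t ∈ Finset.range (k + 2), z ^ t • prodChain n N q (k + 1) t := rfl
      rw [hS, sum_mulVec, Finset.smul_sum]
      apply Finset.sum_congr rfl
      intro t ht
      rw [Finset.mem_range] at ht
      rw [Matrix.smul_mulVec, chain_mulVec q k hk2 w hwle t (by omega)]
      rw [smul_smul, smul_smul, mul_assoc]
    rw [Finset.sum_congr rfl hstep]
    rw [prod_qfact_succ z w0 k hk1,
      mul_comm (qint z (cnt w0 (k + 1) (w0 ⟨k + 1, hk1⟩))) (∏ i, qfact z (cnt w0 k i)),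
      mul_smul]
    congr 1
    rw [← Finset.sum_product']
    -- right-hand side reorganization
    set c0 : Fin n := w0 r with hc0
    set R : Finset ((Fin N → Fin n) × Fin N) :=
      Finset.univ.filter (fun y : (Fin N → Fin n) × Fin N =>
        y.1 ∈ Ak w0 m (k + 1) ∧ y.2 ∈ occ c0 (k + 1) y.1) with hRdef
    have hRmem : ∀ y : (Fin N → Fin n) × Fin N,
        y ∈ R ↔ y.1 ∈ Ak w0 m (k + 1) ∧ y.2 ∈ occ c0 (k + 1) y.1 := by
      intro y
      rw [hRdef, Finset.mem_filter]
      exact ⟨fun h => h.2, fun h => ⟨Finset.mem_univ _, h⟩⟩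
    have hRHS : qint z (cnt w0 (k + 1) c0) •
          ∑ w' ∈ Ak w0 m (k + 1), ((z * ((q : ℂ))⁻¹) ^ invw w') •
            (Pi.single w' 1 : (Fin N → Fin n) → ℂ)
        = ∑ y ∈ R,
            (((z * ((q : ℂ))⁻¹) ^ invw y.1 *
              z ^ ((occ c0 (k + 1) y.1).filter fun jj => y.2 < jj).card) •
              (Pi.single y.1 1 : (Fin N → Fin n) → ℂ)) := by
      rw [Finset.smul_sum]
      rw [Finset.sum_finset_product R (Ak w0 m (k + 1)) (fun w' => occ c0 (k + 1) w') hRmem]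
      apply Finset.sum_congr rfl
      intro w' hw'
      have hw'' := hw'
      rw [Ak, Finset.mem_filter] at hw''
      obtain ⟨-, hag', hcc'⟩ := hw''
      have hcard : (occ c0 (k + 1) w').card = cnt w0 (k + 1) c0 := by
        rw [occ]
        exact prefcnt w0 w' m hw0c (k + 1) hag' hcc' c0
      rw [← hcard, ← qint_sum_aux z _ (occ c0 (k + 1) w') rfl, Finset.sum_smul]
      apply Finset.sum_congr rfl
      intro p hp
      rw [smul_smul]
      congr 1
      ring
    rw [hRHS]
    -- the bijection between pairs
    apply Finset.sum_nbij'
      (i := fun x : (Fin N → Fin n) × ℕ =>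
        ((fun j => x.1 (cyf ⟨k + 1 - x.2, lt_of_le_of_lt (Nat.sub_le _ _) hk1⟩ r j),
          (⟨k + 1 - x.2, lt_of_le_of_lt (Nat.sub_le _ _) hk1⟩ : Fin N)) :
          (Fin N → Fin n) × Fin N))
      (j := fun y : (Fin N → Fin n) × Fin N =>
        ((fun jj => y.1 (cyg y.2 r jj), k + 1 - y.2.1) : (Fin N → Fin n) × ℕ))
    · -- hi : maps into R
      rintro ⟨w, t⟩ hx
      rw [Finset.mem_product] at hx
      dsimp only at hx
      rw [Finset.mem_range] at hx
      obtain ⟨hxw, hxt⟩ := hx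
      have hxw' := hxw
      rw [Ak, Finset.mem_filter] at hxw'
      obtain ⟨-, hag, hcc⟩ := hxw'
      set p : Fin N := ⟨k + 1 - t, lt_of_le_of_lt (Nat.sub_le _ _) hk1⟩ with hpdef
      have hpr : p.1 ≤ r.1 := by have e1 : p.1 = k + 1 - t := rfl; have e2 : r.1 = k + 1 := rfl; omega
      rw [hRmem]
      constructor
      · -- membership in Ak (k+1)
        rw [Ak, Finset.mem_filter]
        refine ⟨Finset.mem_univ _, ?_, ?_⟩
        · intro j hj
          dsimp only
          rw [cyf_id (Or.inr (by have e2 : r.1 = k + 1 := rfl; omega))]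
          exact hag j (by omega)
        · intro i
          dsimp only
          rw [content_comp w (cyf p r) (cyg p r) (cyg_cyf hpr) (cyf_cyg hpr) i]
          exact hcc i
      · rw [occ, Finset.mem_filter]
        refine ⟨Finset.mem_univ _, ?_, by show p.1 ≤ k + 1; have e1 : p.1 = k + 1 - t := rfl; omega⟩
        dsimp only
        rw [cyf_p hpr, hc0]
        exact hag r (by have e2 : r.1 = k + 1 := rfl; omega)
    · -- hj : maps back
      rintro ⟨w', p⟩ hy
      rw [hRmem] at hy
      dsimp only at hy
      obtain ⟨hyA, hyo⟩ := hy
      rw [Ak, Finset.mem_filter] at hyA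
      obtain ⟨-, hag', hcc'⟩ := hyA
      rw [occ, Finset.mem_filter] at hyo
      obtain ⟨-, hoc, hole⟩ := hyo
      have hpr : p.1 ≤ r.1 := by have e2 : r.1 = k + 1 := rfl; omega
      rw [Finset.mem_product, Finset.mem_range]
      constructor
      · rw [Ak, Finset.mem_filter]
        refine ⟨Finset.mem_univ _, ?_, ?_⟩
        · intro j hj
          dsimp only
          by_cases hjr : j.1 = k + 1
          · have hje : j = r := Fin.ext (by have e2 : r.1 = k + 1 := rfl; omega)
            rw [hje, cyg_r hpr]
            rw [hoc, hc0]
          · rw [cyg_id (Or.inr (by have e2 : r.1 = k + 1 := rfl; omega))]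
            exact hag' j (by omega)
        · intro i
          dsimp only
          rw [content_comp w' (cyg p r) (cyf p r) (cyf_cyg hpr) (cyg_cyf hpr) i]
          exact hcc' i
      · omega
    · -- left inverse
      rintro ⟨w, t⟩ hx
      rw [Finset.mem_product] at hx
      dsimp only at hx
      rw [Finset.mem_range] at hx
      obtain ⟨hxw, hxt⟩ := hx
      set p : Fin N := ⟨k + 1 - t, lt_of_le_of_lt (Nat.sub_le _ _) hk1⟩ with hpdef
      have hpr : p.1 ≤ r.1 := by have e1 : p.1 = k + 1 - t := rfl; have e2 : r.1 = k + 1 := rfl; omega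
      refine Prod.ext ?_ ?_
      · dsimp only
        funext jj
        rw [cyf_cyg hpr jj]
      · show k + 1 - p.1 = t
        have e1 : p.1 = k + 1 - t := rfl
        omega
    · -- right inverse
      rintro ⟨w', p⟩ hy
      rw [hRmem] at hy
      dsimp only at hy
      obtain ⟨hyA, hyo⟩ := hy
      rw [occ, Finset.mem_filter] at hyo
      obtain ⟨-, hoc, hole⟩ := hyo
      have hpr : p.1 ≤ r.1 := by have e2 : r.1 = k + 1 := rfl; omega
      have hpe : (⟨k + 1 - (k + 1 - p.1), lt_of_le_of_lt (Nat.sub_le _ _) hk1⟩ : Fin N) = p :=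
        Fin.ext (show k + 1 - (k + 1 - p.1) = p.1 by omega)
      refine Prod.ext ?_ ?_
      · dsimp only
        funext jj
        rw [hpe, cyg_cyf hpr jj]
      · dsimp only
        rw [hpe]
    · -- values agree
      rintro ⟨w, t⟩ hx
      rw [Finset.mem_product] at hx
      dsimp only at hx
      rw [Finset.mem_range] at hx
      obtain ⟨hxw, hxt⟩ := hx
      have hxw' := hxw
      rw [Ak, Finset.mem_filter] at hxw'
      obtain ⟨-, hag, hcc⟩ := hxw'
      have hwle : ∀ j : Fin N, j.1 ≤ k + 1 → w j ≤ w r := prefix_le w0 hw0 m hw0c k hk1 w hag hcc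
      set p : Fin N := ⟨k + 1 - t, lt_of_le_of_lt (Nat.sub_le _ _) hk1⟩ with hpdef
      have hpr : p.1 ≤ r.1 := by have e1 : p.1 = k + 1 - t := rfl; have e2 : r.1 = k + 1 := rfl; omega
      have hwr : w r = c0 := by rw [hc0]; exact hag r (by have e2 : r.1 = k + 1 := rfl; omega)
      dsimp only
      have hinv : invw (fun j => w (cyf p r j)) = invw w + scount w p r := by
        apply invw_cyc w r (fun j hj => hwle j (by have e2 : r.1 = k + 1 := rfl; omega)) (r.1 - p.1)
        omega
      have hset : ((occ c0 (k + 1) (fun j => w (cyf p r j))).filter fun jj => p < jj)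
          = Finset.univ.filter
              (fun jj : Fin N => (jj.1 ≤ r.1 ∧ w (cyf p r jj) = w r) ∧ p < jj) := by
        rw [occ, Finset.filter_filter]
        ext jj
        simp only [Finset.mem_filter, Finset.mem_univ, true_and]
        constructor
        · rintro ⟨⟨he, hle⟩, hlt⟩
          refine ⟨⟨by have e2 : r.1 = k + 1 := rfl; omega, ?_⟩, hlt⟩
          rw [he, hwr]
        · rintro ⟨⟨hle, he⟩, hlt⟩
          refine ⟨⟨by rw [he, hwr], by have e2 : r.1 = k + 1 := rfl; omega⟩, hlt⟩
      have hecount : ((occ c0 (k + 1) (fun j => w (cyf p r j))).filter fun jj => p < jj).card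
          = ecount w p r := by
        rw [hset]
        exact ecount_shift w p r hpr
      have hsum : scount w p r + ecount w p r = t := by
        rw [scount_add_ecount w p r hpr
          (fun j hj => hwle j (by have e2 : r.1 = k + 1 := rfl; omega))]
        have e1 : p.1 = k + 1 - t := rfl
        have e2 : r.1 = k + 1 := rfl
        omega
      rw [hinv, hecount]
      congr 1
      have ht : t = scount w p r + ecount w p r := hsum.symm
      rw [ht, pow_add, pow_add, mul_pow]
      ring


end Stmt6
/-- the action of the shuffle operator `Y_N(z)` on the ordered state
`e_1^{⊗m₁} ⊗ ⋯ ⊗ e_n^{⊗m_n}` (here characterized as the unique weakly increasing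
word `w₀` with content `m`) yields `(∏ᵢ ⟦mᵢ⟧_z!)` times the sum over all words `w`
of content `m` of `(z q⁻¹)^{inv(w)}` times the corresponding basis state. -/
theorem stmt6 (n N : ℕ) (hn : 2 ≤ n) (hN : 2 ≤ N) (q : ℝ) (hq : 0 < q)
    (m : Fin n → ℕ) (hm : ∑ i, m i = N)
    (w0 : Fin N → Fin n) (hw0 : Monotone w0) (hw0c : ∀ i, content w0 i = m i) (z : ℂ) :
    (Ymat n N q z).mulVec (Pi.single w0 1) =
      (∏ i, qfact z (m i)) •
        ∑ w ∈ Finset.univ.filter (fun w : Fin N → Fin n => ∀ i, content w i = m i),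
          ((z * ((q : ℂ))⁻¹) ^ invw w) • (Pi.single w 1 : (Fin N → Fin n) → ℂ) := by
  have hN' : 0 < N := by omega
  rw [Ymat]
  rw [Stmt6.Yaux_key q z w0 hw0 m hw0c hN' (N - 1) (by omega)]
  have hcnt : ∀ i, Stmt6.cnt w0 (N - 1) i = m i := by
    intro i
    rw [Stmt6.cnt, ← hw0c i, content]
    congr 1
    ext j
    simp only [Finset.mem_filter, Finset.mem_univ, true_and]
    constructor
    · rintro ⟨he, -⟩; exact he
    · intro he; exact ⟨he, by have := j.2; omega⟩
  have hAk : Stmt6.Ak w0 m (N - 1)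
      = Finset.univ.filter (fun w : Fin N → Fin n => ∀ i, content w i = m i) := by
    rw [Stmt6.Ak]
    ext w
    simp only [Finset.mem_filter, Finset.mem_univ, true_and]
    constructor
    · rintro ⟨-, hb⟩; exact hb
    · intro hb
      refine ⟨?_, hb⟩
      intro j hj
      have := j.2
      omega
  rw [hAk]
  congr 1
  exact Finset.prod_congr rfl (fun i _ => by rw [hcnt i])

end
end

section
/- Fix integers n ≥ 2, N ≥ 2 and a real number q > 0, q ≠ 1. Let Y_N(z) on (ℂⁿ)^{⊗N} be the shuffle operator built from the matrices r_j (r(e_x ⊗ e_y) = e_x ⊗ e_y if x = y; q⁻¹ e_y ⊗ e_x if x < y; q⁻¹ e_y ⊗ e_x + (1 − q⁻²) e_x ⊗ e_y if x > y; S_m(z) = 1 + z r_m + ⋯ + z^m r_1 ⋯ r_m; Y_N(z) = S_{N−1}(z) ⋯ S_1(z)). Let w = (w_1,…,w_N) be any word in {1,…,n} and let w↑ be its weakly increasing rearrangement, with inv(w) = #{(k,l) : k < l, w_k > w_l}. Then Y_N(q²)(e_{w_1} ⊗ ⋯ ⊗ e_{w_N}) = q^{inv(w)} · Y_N(q²)(e_{w↑_1}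 ⊗ ⋯ ⊗ e_{w↑_N}), and Y_N(−1)(e_{w_1} ⊗ ⋯ ⊗ e_{w_N}) = (−q⁻¹)^{inv(w)} · Y_N(−1)(e_{w↑_1} ⊗ ⋯ ⊗ e_{w↑_N}). In particular, for x < y, (1 + q² r)(e_y ⊗ e_x) = q (1 + q² r)(e_x ⊗ e_y) and (1 − r)(e_y ⊗ e_x) = −q⁻¹ (1 − r)(e_x ⊗ e_y). -/
open Finset Matrix Kronecker

noncomputable section

namespace S7
open Equiv

variable {n N : ℕ}

def cid (n : ℕ) (q : ℝ) (x y : Fin n) : ℂ :=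
  if x = y then 1 else if y < x then 1 - ((q : ℂ))⁻¹ ^ 2 else 0

def csw (n : ℕ) (q : ℝ) (x y : Fin n) : ℂ := if x = y then 0 else ((q : ℂ))⁻¹

lemma rMat_eq (q : ℝ) (o i : Fin n × Fin n) :
    rMat n q o i = cid n q i.1 i.2 * (if o = i then 1 else 0)
      + csw n q i.1 i.2 * (if o = (i.2, i.1) then 1 else 0) := by
  obtain ⟨x, y⟩ := i
  rcases lt_trichotomy x y with h | h | h
  · simp only [rMat, cid, csw, if_neg h.ne, if_neg (asymm h),
      if_neg (fun hc : y < x ∧ o = (x, y) => asymm h hc.1)]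
    by_cases h1 : o = (x, y)
    · subst h1
      simp [Prod.ext_iff, h.ne, h.ne']
    · by_cases h2 : o = (y, x) <;> simp [h1, h2]
  · subst h
    simp [rMat, cid, csw]
  · simp only [rMat, cid, csw, if_neg h.ne', if_pos h,
      if_congr (and_iff_right h) rfl rfl]
    by_cases h1 : o = (x, y)
    · subst h1
      simp [Prod.ext_iff, h.ne, h.ne'] <;> ring
    · by_cases h2 : o = (y, x) <;> simp [h1, h2, Prod.ext_iff, h.ne, h.ne'] <;> ring

def swp {j : ℕ} (hj : j + 1 < N) (s : Fin N → Fin n) : Fin N → Fin n :=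
  s ∘ Equiv.swap ⟨j, Nat.lt_of_succ_lt hj⟩ ⟨j + 1, hj⟩

lemma ne01 {j : ℕ} (hj : j + 1 < N) :
    (⟨j, Nat.lt_of_succ_lt hj⟩ : Fin N) ≠ ⟨j + 1, hj⟩ := by
  simp [Fin.ext_iff]

@[simp] lemma swp_at0 {j : ℕ} (hj : j + 1 < N) (s : Fin N → Fin n) :
    swp hj s ⟨j, Nat.lt_of_succ_lt hj⟩ = s ⟨j + 1, hj⟩ := by
  simp [swp, Equiv.swap_apply_left]

@[simp] lemma swp_at1 {j : ℕ} (hj : j + 1 < N) (s : Fin N → Fin n) :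
    swp hj s ⟨j + 1, hj⟩ = s ⟨j, Nat.lt_of_succ_lt hj⟩ := by
  simp [swp, Equiv.swap_apply_right]

lemma swp_ne {j : ℕ} (hj : j + 1 < N) (s : Fin N → Fin n) (k : Fin N)
    (h0 : (k : ℕ) ≠ j) (h1 : (k : ℕ) ≠ j + 1) : swp hj s k = s k := by
  have e0 : k ≠ (⟨j, Nat.lt_of_succ_lt hj⟩ : Fin N) := by simp [Fin.ext_iff, h0]
  have e1 : k ≠ (⟨j + 1, hj⟩ : Fin N) := by simp [Fin.ext_iff, h1]
  simp [swp, Equiv.swap_apply_of_ne_of_ne e0 e1]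

@[simp] lemma swp_swp {j : ℕ} (hj : j + 1 < N) (s : Fin N → Fin n) :
    swp hj (swp hj s) = s := by
  funext k
  simp [swp, Equiv.swap_apply_self]

lemma eq_iff {j : ℕ} (hj : j + 1 < N) (t s : Fin N → Fin n) :
    ((t ⟨j, Nat.lt_of_succ_lt hj⟩, t ⟨j + 1, hj⟩)
        = (s ⟨j, Nat.lt_of_succ_lt hj⟩, s ⟨j + 1, hj⟩) ∧
      ∀ k : Fin N, (k : ℕ) ≠ j → (k : ℕ) ≠ j + 1 → t k = s k) ↔ t = s := by
  constructor
  · rintro ⟨hp, hoff⟩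
    rw [Prod.mk.injEq] at hp
    funext k
    by_cases h0 : (k : ℕ) = j
    · have : k = (⟨j, Nat.lt_of_succ_lt hj⟩ : Fin N) := Fin.ext h0
      rw [this]; exact hp.1
    · by_cases h1 : (k : ℕ) = j + 1
      · have : k = (⟨j + 1, hj⟩ : Fin N) := Fin.ext h1
        rw [this]; exact hp.2
      · exact hoff k h0 h1
  · rintro rfl; exact ⟨rfl, fun _ _ _ => rfl⟩

lemma eq_swp_iff {j : ℕ} (hj : j + 1 < N) (t s : Fin N → Fin n) :
    ((t ⟨j, Nat.lt_of_succ_lt hj⟩, t ⟨j + 1, hj⟩)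
        = (s ⟨j + 1, hj⟩, s ⟨j, Nat.lt_of_succ_lt hj⟩) ∧
      ∀ k : Fin N, (k : ℕ) ≠ j → (k : ℕ) ≠ j + 1 → t k = s k) ↔ t = swp hj s := by
  rw [← eq_iff hj t (swp hj s), swp_at0, swp_at1]
  constructor
  · rintro ⟨hp, hoff⟩
    exact ⟨hp, fun k h0 h1 => (hoff k h0 h1).trans (swp_ne hj s k h0 h1).symm⟩
  · rintro ⟨hp, hoff⟩
    exact ⟨hp, fun k h0 h1 => (hoff k h0 h1).trans (swp_ne hj s k h0 h1)⟩

lemma delta_mul {P Q R : Prop} [Decidable P] [Decidable Q] [Decidable R]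
    (h : P ∧ Q ↔ R) :
    (if P then (1:ℂ) else 0) * (if Q then 1 else 0) = if R then 1 else 0 := by
  split_ifs with h1 h2 h3 <;> simp_all

lemma rop_eq (q : ℝ) {j : ℕ} (hj : j + 1 < N) : ∀ t s : Fin N → Fin n,
    rop n N q j t s =
      cid n q (s ⟨j, Nat.lt_of_succ_lt hj⟩) (s ⟨j + 1, hj⟩) * (if t = s then 1 else 0) +
      csw n q (s ⟨j, Nat.lt_of_succ_lt hj⟩) (s ⟨j + 1, hj⟩)
        * (if t = swp hj s then 1 else 0) := by
  intro t s
  unfold rop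
  rw [dif_pos hj, rMat_eq, add_mul, mul_assoc, mul_assoc,
    delta_mul (eq_iff hj t s), delta_mul (eq_swp_iff hj t s)]

lemma rop_of_ge (q : ℝ) {j : ℕ} (hj : ¬ j + 1 < N) : rop n N q j = 1 := by
  funext t s
  simp only [rop, dif_neg hj]
  rw [Matrix.one_apply]

lemma mul_rop (q : ℝ) {j : ℕ} (hj : j + 1 < N)
    (A : Matrix (Fin N → Fin n) (Fin N → Fin n) ℂ) : ∀ p s,
    (A * rop n N q j) p s =
      cid n q (s ⟨j, Nat.lt_of_succ_lt hj⟩) (s ⟨j + 1, hj⟩) * A p s +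
      csw n q (s ⟨j, Nat.lt_of_succ_lt hj⟩) (s ⟨j + 1, hj⟩) * A p (swp hj s) := by
  intro p s
  rw [Matrix.mul_apply]
  have step : ∀ t, A p t * rop n N q j t s =
      (if t = s then cid n q (s ⟨j, Nat.lt_of_succ_lt hj⟩) (s ⟨j + 1, hj⟩) * A p t else 0) +
      (if t = swp hj s then
        csw n q (s ⟨j, Nat.lt_of_succ_lt hj⟩) (s ⟨j + 1, hj⟩) * A p t else 0) := by
    intro t
    rw [rop_eq q hj]
    split_ifs <;> ring
  rw [Finset.sum_congr rfl fun t _ => step t, Finset.sum_add_distrib,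
    Finset.sum_ite_eq' Finset.univ, Finset.sum_ite_eq' Finset.univ]
  simp


lemma swap_val {j : ℕ} (hj : j + 1 < N) (x : Fin N) :
    ((Equiv.swap (⟨j, Nat.lt_of_succ_lt hj⟩ : Fin N) ⟨j + 1, hj⟩ x : Fin N) : ℕ)
      = if (x : ℕ) = j then j + 1 else if (x : ℕ) = j + 1 then j else (x : ℕ) := by
  rcases eq_or_ne x (⟨j, Nat.lt_of_succ_lt hj⟩ : Fin N) with rfl | h0
  · simp [Equiv.swap_apply_left]
  · rcases eq_or_ne x (⟨j + 1, hj⟩ : Fin N) with rfl | h1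
    · simp [Equiv.swap_apply_right]
    · rw [Equiv.swap_apply_of_ne_of_ne h0 h1]
      have e0 : (x : ℕ) ≠ j := fun h => h0 (Fin.ext h)
      have e1 : (x : ℕ) ≠ j + 1 := fun h => h1 (Fin.ext h)
      simp [e0, e1]

set_option maxHeartbeats 1600000 in
lemma swp_comm_far {j k : ℕ} (hjk : j + 2 ≤ k) (hj : j + 1 < N) (hk : k + 1 < N)
    (s : Fin N → Fin n) : swp hj (swp hk s) = swp hk (swp hj s) := by
  funext x
  simp only [swp, Function.comp_apply]
  congr 1
  apply Fin.ext
  simp only [swap_val]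
  split_ifs <;> omega

set_option maxHeartbeats 1600000 in
lemma swp_braid {j : ℕ} (hj : j + 1 < N) (hj2 : j + 1 + 1 < N) (s : Fin N → Fin n) :
    swp hj (swp hj2 (swp hj s)) = swp hj2 (swp hj (swp hj2 s)) := by
  funext x
  simp only [swp, Function.comp_apply]
  congr 1
  apply Fin.ext
  simp only [swap_val]
  split_ifs <;> omega

lemma vA {j : ℕ} (hj2 : j + 1 + 1 < N) (s : Fin N → Fin n) (h : j < N) :
    swp hj2 s ⟨j, h⟩ = s ⟨j, h⟩ :=
  swp_ne hj2 s _ (show j ≠ j + 1 by omega) (show j ≠ j + 1 + 1 by omega)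

lemma vB {j : ℕ} (hj : j + 1 < N) (s : Fin N → Fin n) (h : j + 1 + 1 < N) :
    swp hj s ⟨j + 1 + 1, h⟩ = s ⟨j + 1 + 1, h⟩ :=
  swp_ne hj s _ (show j + 1 + 1 ≠ j by omega) (show j + 1 + 1 ≠ j + 1 by omega)

set_option maxHeartbeats 1600000 in
lemma coefA (q : ℝ) (a b c : Fin n) :
    cid n q a b * cid n q b c * cid n q a b + csw n q a b * cid n q a c * csw n q b a
      = cid n q b c * cid n q a b * cid n q b c + csw n q b c * cid n q a c * csw n q c b := by
  simp only [cid, csw, Fin.ext_iff, Fin.lt_def]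
  split_ifs <;> (first | omega | ring)

set_option maxHeartbeats 1600000 in
lemma coefB (q : ℝ) (a b c : Fin n) :
    cid n q a b * cid n q b c * csw n q a b + csw n q a b * cid n q a c * cid n q b a
      = cid n q b c * csw n q a b * cid n q a c := by
  simp only [cid, csw, Fin.ext_iff, Fin.lt_def]
  split_ifs <;> (first | omega | ring)

set_option maxHeartbeats 1600000 in
lemma coefC (q : ℝ) (a b c : Fin n) :
    cid n q a b * csw n q b c * cid n q a c
      = cid n q b c * cid n q a b * csw n q b c + csw n q b c * cid n q a c * cid n q c b := by
  simp only [cid, csw, Fin.ext_iff, Fin.lt_def]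
  split_ifs <;> (first | omega | ring)

set_option maxHeartbeats 1600000 in
lemma rop_hecke (q : ℝ) (j : ℕ) :
    rop n N q j * rop n N q j
      = (1 - ((q : ℂ))⁻¹ ^ 2) • rop n N q j
        + (((q : ℂ))⁻¹ ^ 2) • (1 : Matrix (Fin N → Fin n) (Fin N → Fin n) ℂ) := by
  by_cases hj : j + 1 < N
  · ext p s
    rw [mul_rop q hj]
    simp only [rop_eq q hj, Matrix.add_apply, Matrix.smul_apply, Matrix.one_apply,
      smul_eq_mul, swp_at0, swp_at1, swp_swp]
    simp only [cid, csw, Fin.ext_iff, Fin.lt_def]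
    split_ifs <;> (first | omega | ring)
  · rw [rop_of_ge q hj, one_mul]
    ext p s
    simp only [Matrix.add_apply, Matrix.smul_apply, Matrix.one_apply, smul_eq_mul]
    split_ifs <;> ring

set_option maxHeartbeats 1600000 in
lemma rop_comm (q : ℝ) {j k : ℕ} (hjk : j + 2 ≤ k) :
    rop n N q j * rop n N q k = rop n N q k * rop n N q j := by
  by_cases hk : k + 1 < N
  · have hj : j + 1 < N := by omega
    ext p s
    rw [mul_rop q hk, mul_rop q hj]
    simp only [rop_eq q hj, rop_eq q hk,
      swp_ne hk s ⟨j, Nat.lt_of_succ_lt hj⟩ (show j ≠ k by omega) (show j ≠ k + 1 by omega),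
      swp_ne hk s ⟨j + 1, hj⟩ (show j + 1 ≠ k by omega) (show j + 1 ≠ k + 1 by omega),
      swp_ne hj s ⟨k, Nat.lt_of_succ_lt hk⟩ (show k ≠ j by omega) (show k ≠ j + 1 by omega),
      swp_ne hj s ⟨k + 1, hk⟩ (show k + 1 ≠ j by omega) (show k + 1 ≠ j + 1 by omega),
      swp_comm_far hjk hj hk s]
    ring
  · rw [rop_of_ge q hk, one_mul, mul_one]

set_option maxHeartbeats 1600000 in
lemma rop_braid (q : ℝ) {j : ℕ} (hj2 : j + 1 + 1 < N) :
    rop n N q j * rop n N q (j + 1) * rop n N q j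
      = rop n N q (j + 1) * rop n N q j * rop n N q (j + 1) := by
  have hj : j + 1 < N := Nat.lt_of_succ_lt hj2
  ext p s
  rw [mul_rop q hj, mul_rop q hj2]
  simp only [mul_rop q hj, mul_rop q hj2, rop_eq q hj, rop_eq q hj2,
    swp_at0, swp_at1, swp_swp, vA, vB]
  rw [swp_braid hj hj2 s]
  linear_combination
    coefA q (s ⟨j, Nat.lt_of_succ_lt hj⟩) (s ⟨j + 1, hj⟩) (s ⟨j + 1 + 1, hj2⟩)
        * (if p = s then (1:ℂ) else 0)
      + coefB q (s ⟨j, Nat.lt_of_succ_lt hj⟩) (s ⟨j + 1, hj⟩) (s ⟨j + 1 + 1, hj2⟩)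
        * (if p = swp hj s then (1:ℂ) else 0)
      + coefC q (s ⟨j, Nat.lt_of_succ_lt hj⟩) (s ⟨j + 1, hj⟩) (s ⟨j + 1 + 1, hj2⟩)
        * (if p = swp hj2 s then (1:ℂ) else 0)


lemma smat_zero (q : ℝ) (z : ℂ) : Smat n N q 0 z = 1 := by
  simp [Smat, prodChain]

lemma prodChain_succ_eq (q : ℝ) (m : ℕ) : ∀ t,
    prodChain n N q (m + 1) (t + 1) = prodChain n N q m t * rop n N q m := by
  intro t
  induction t with
  | zero =>
    show rop n N q (m + 1 - 1) * prodChain n N q (m + 1) 0 = _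
    simp [prodChain]
  | succ t ih =>
    show rop n N q (m + 1 - (t + 2)) * prodChain n N q (m + 1) (t + 1) = _
    rw [ih]
    have e : m + 1 - (t + 2) = m - (t + 1) := by omega
    rw [e]
    show _ = rop n N q (m - (t + 1)) * prodChain n N q m t * rop n N q m
    rw [mul_assoc]

lemma smat_succ (q : ℝ) (z : ℂ) (m : ℕ) :
    Smat n N q (m + 1) z = 1 + z • (Smat n N q m z * rop n N q m) := by
  rw [Smat, Finset.sum_range_succ']
  simp only [prodChain_succ_eq, pow_zero, one_smul]
  rw [show prodChain n N q (m + 1) 0 = 1 from rfl, add_comm]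
  congr 1
  rw [Smat, Finset.sum_mul, Finset.smul_sum]
  refine Finset.sum_congr rfl fun t _ => ?_
  rw [smul_mul_assoc, smul_smul]
  congr 1
  ring

lemma prodChain_rop_comm (q : ℝ) {m k : ℕ} (hk : m + 1 ≤ k) :
    ∀ t, t ≤ m → prodChain n N q m t * rop n N q k = rop n N q k * prodChain n N q m t := by
  intro t
  induction t with
  | zero => intro _; show (1 : Matrix _ _ ℂ) * _ = _ * 1; rw [one_mul, mul_one]
  | succ t ih =>
    intro ht
    show rop n N q (m - (t + 1)) * prodChain n N q m t * rop n N q k = _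
    rw [mul_assoc, ih (by omega), ← mul_assoc,
      rop_comm q (show (m - (t + 1)) + 2 ≤ k by omega), mul_assoc]
    rfl

lemma smat_rop_comm (q : ℝ) (z : ℂ) {m k : ℕ} (hk : m + 1 ≤ k) :
    Smat n N q m z * rop n N q k = rop n N q k * Smat n N q m z := by
  rw [Smat, Finset.sum_mul, Finset.mul_sum]
  refine Finset.sum_congr rfl fun t ht => ?_
  rw [smul_mul_assoc, mul_smul_comm]
  congr 1
  exact prodChain_rop_comm q hk t (by have := Finset.mem_range.mp ht; omega)

lemma Lbase {M : Type*} [Ring M] [Module ℂ M] [IsScalarTower ℂ M M] [SMulCommClass ℂ M M]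
    (z φ a b : ℂ) (R : M) (h1 : φ = z * b) (h2 : φ * z = 1 + z * a)
    (hh : R * R = a • R + b • 1) :
    (1 + z • R) * R = φ • (1 + z • R) := by
  rw [add_mul, one_mul, smul_mul_assoc, hh]
  match_scalars <;> first | linear_combination -h2 | linear_combination -h1 | ring

lemma Lstep {M : Type*} [Ring M] [Module ℂ M] [IsScalarTower ℂ M M] [SMulCommClass ℂ M M]
    (z φ a b : ℂ) (S S' R R' : M)
    (h1 : φ = z * b) (h2 : φ * z = 1 + z * a)
    (hS' : S' = 1 + z • (S * R))
    (hh : R' * R' = a • R' + b • 1)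
    (hbr : R * R' * R = R' * R * R')
    (hc : R' * S = S * R')
    (hIH : S' * S * R = φ • (S' * S)) :
    (1 + z • (S' * R')) * S' * R' = φ • ((1 + z • (S' * R')) * S') := by
  have b1 : R' * S' = R' + z • (S * (R' * R)) := by
    rw [hS', mul_add, mul_one, mul_smul_comm, ← mul_assoc, hc, mul_assoc]
  have b9 : z • ((S' * R') * (S * R)) = (S' * R') * S' - S' * R' := by
    have hz : S' - 1 = z • (S * R) := by rw [hS', add_sub_cancel_left]
    rw [← mul_smul_comm, ← hz, mul_sub, mul_one]
  have b2 : (S' * R') * (S' * R') = S' * (R' * R') + z • (S' * (S * ((R' * R) * R'))) := by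
    calc (S' * R') * (S' * R') = S' * ((R' * S') * R') := by
          rw [mul_assoc, ← mul_assoc R' S' R']
      _ = S' * ((R' + z • (S * (R' * R))) * R') := by rw [b1]
      _ = S' * (R' * R') + z • (S' * (S * ((R' * R) * R'))) := by
          rw [add_mul, smul_mul_assoc, mul_add, mul_smul_comm, mul_assoc S (R' * R) R']
  have b5 : S' * (S * ((R' * R) * R')) = (S' * S) * R * (R' * R) := by
    rw [hbr.symm]
    simp only [mul_assoc]
  have b7 : (S' * S) * (R' * R) = (S' * R') * (S * R) := by
    simp only [mul_assoc]
    congr 1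
    rw [← mul_assoc, ← hc, mul_assoc]
  have b6 : (S' * S) * R * (R' * R) = φ • ((S' * R') * (S * R)) := by
    rw [hIH, smul_mul_assoc, b7]
  have key : (S' * R') * (S' * R')
      = a • (S' * R') + b • S' + (φ • ((S' * R') * S') - φ • (S' * R')) := by
    rw [b2, b5, b6, smul_comm z φ, b9, hh, mul_add, mul_smul_comm, mul_smul_comm, mul_one,
      smul_sub]
  calc (1 + z • (S' * R')) * S' * R'
      = S' * R' + z • ((S' * R') * (S' * R')) := by
        rw [add_mul, one_mul, add_mul, smul_mul_assoc, smul_mul_assoc, mul_assoc]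
    _ = S' * R' + z • (a • (S' * R') + b • S' + (φ • ((S' * R') * S') - φ • (S' * R'))) := by
        rw [key]
    _ = φ • ((1 + z • (S' * R')) * S') := by
        rw [add_mul, one_mul, smul_mul_assoc]
        match_scalars <;> first | linear_combination -h2 | linear_combination -h1 | ring

lemma Lm (q : ℝ) (z φ : ℂ) (h1 : φ = z * ((q : ℂ))⁻¹ ^ 2)
    (h2 : φ * z = 1 + z * (1 - ((q : ℂ))⁻¹ ^ 2)) :
    ∀ m, m + 1 < N →
      Smat n N q (m + 1) z * Smat n N q m z * rop n N q m
        = φ • (Smat n N q (m + 1) z * Smat n N q m z) := by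
  intro m
  induction m with
  | zero =>
    intro _
    rw [smat_zero, mul_one, smat_succ, smat_zero, one_mul]
    exact Lbase z φ _ _ _ h1 h2 (rop_hecke q 0)
  | succ m ih =>
    intro hm
    rw [smat_succ q z (m + 1)]
    exact Lstep z φ _ _ (Smat n N q m z) (Smat n N q (m + 1) z) (rop n N q m)
      (rop n N q (m + 1)) h1 h2 (smat_succ q z m) (rop_hecke q (m + 1))
      (rop_braid q hm) (smat_rop_comm q z (le_refl (m + 1))).symm
      (ih (Nat.lt_of_succ_lt hm))

lemma yaux_rop_comm (q : ℝ) (z : ℂ) : ∀ m k, m + 1 ≤ k →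
    Yaux n N q z m * rop n N q k = rop n N q k * Yaux n N q z m := by
  intro m
  induction m with
  | zero => intro k hk; show (1 : Matrix _ _ ℂ) * _ = _ * 1; rw [one_mul, mul_one]
  | succ m ih =>
    intro k hk
    show Smat n N q (m + 1) z * Yaux n N q z m * rop n N q k = _
    rw [mul_assoc, ih k (by omega), ← mul_assoc, smat_rop_comm q z (by omega), mul_assoc]
    rfl

lemma yaux_rop (q : ℝ) (z φ : ℂ) (h1 : φ = z * ((q : ℂ))⁻¹ ^ 2)
    (h2 : φ * z = 1 + z * (1 - ((q : ℂ))⁻¹ ^ 2)) :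
    ∀ m, m < N → ∀ j, j < m → Yaux n N q z m * rop n N q j = φ • Yaux n N q z m := by
  intro m
  induction m with
  | zero => intro _ j hj; omega
  | succ m ih =>
    intro hmN j hj
    rcases Nat.lt_or_ge j m with hjm | hjm
    · show Smat n N q (m + 1) z * Yaux n N q z m * rop n N q j = _
      rw [mul_assoc, ih (by omega) j hjm, mul_smul_comm]
      rfl
    · have hj' : j = m := by omega
      subst hj'
      clear ih hjm hj
      cases j with
      | zero =>
        show Smat n N q 1 z * Yaux n N q z 0 * rop n N q 0
            = φ • (Smat n N q 1 z * Yaux n N q z 0)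
        have h0 : Yaux n N q z 0 = (1 : Matrix _ _ ℂ) := rfl
        rw [h0, mul_one]
        have hL := Lm (n := n) (N := N) q z φ h1 h2 0 (by omega)
        rw [smat_zero, mul_one] at hL
        exact hL
      | succ m' =>
        show Smat n N q (m' + 2) z * (Smat n N q (m' + 1) z * Yaux n N q z m')
            * rop n N q (m' + 1)
            = φ • (Smat n N q (m' + 2) z * (Smat n N q (m' + 1) z * Yaux n N q z m'))
        rw [mul_assoc, mul_assoc, yaux_rop_comm q z m' (m' + 1) (by omega),
          ← mul_assoc, ← mul_assoc, Lm q z φ h1 h2 (m' + 1) hmN, smul_mul_assoc, mul_assoc]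

lemma ymat_rop (q : ℝ) (z φ : ℂ) (h1 : φ = z * ((q : ℂ))⁻¹ ^ 2)
    (h2 : φ * z = 1 + z * (1 - ((q : ℂ))⁻¹ ^ 2)) {j : ℕ} (hj : j + 1 < N) :
    Ymat n N q z * rop n N q j = φ • Ymat n N q z :=
  yaux_rop q z φ h1 h2 (N - 1) (by omega) j (by omega)

lemma ymat_step (q : ℝ) (hq0 : (q : ℂ) ≠ 0) (z φ : ℂ) (h1 : φ = z * ((q : ℂ))⁻¹ ^ 2)
    (h2 : φ * z = 1 + z * (1 - ((q : ℂ))⁻¹ ^ 2)) {j : ℕ} (hj : j + 1 < N)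
    (w : Fin N → Fin n) (hd : w ⟨j + 1, hj⟩ < w ⟨j, Nat.lt_of_succ_lt hj⟩) (p : Fin N → Fin n) :
    Ymat n N q z p w = ((q : ℂ) * φ) * Ymat n N q z p (swp hj w) := by
  have hY := ymat_rop (n := n) q z φ h1 h2 hj
  have e : (Ymat n N q z * rop n N q j) p (swp hj w) = (φ • Ymat n N q z) p (swp hj w) := by
    rw [hY]
  rw [mul_rop q hj, swp_at0, swp_at1, swp_swp] at e
  have hcid : cid n q (w ⟨j + 1, hj⟩) (w ⟨j, Nat.lt_of_succ_lt hj⟩) = 0 := by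
    simp only [cid, if_neg hd.ne, if_neg (asymm hd)]
  have hcsw : csw n q (w ⟨j + 1, hj⟩) (w ⟨j, Nat.lt_of_succ_lt hj⟩) = ((q : ℂ))⁻¹ :=
    if_neg hd.ne
  rw [hcid, hcsw, zero_mul, zero_add, Matrix.smul_apply, smul_eq_mul] at e
  calc Ymat n N q z p w = (q : ℂ) * (((q : ℂ))⁻¹ * Ymat n N q z p w) := by
        field_simp
    _ = (q : ℂ) * (φ * Ymat n N q z p (swp hj w)) := by rw [e]
    _ = ((q : ℂ) * φ) * Ymat n N q z p (swp hj w) := by ring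


lemma content_swp {j : ℕ} (hj : j + 1 < N) (w : Fin N → Fin n) (i : Fin n) :
    content (swp hj w) i = content w i := by
  unfold content
  exact Finset.card_equiv (Equiv.swap ⟨j, Nat.lt_of_succ_lt hj⟩ ⟨j + 1, hj⟩)
    (fun k => by
      simp only [Finset.mem_filter, Finset.mem_univ, true_and]
      exact Iff.rfl)

lemma pres_lt {j : ℕ} (hj : j + 1 < N) {p1 p2 : Fin N} (h : p1 < p2)
    (hne : ¬(p1 = (⟨j, Nat.lt_of_succ_lt hj⟩ : Fin N) ∧ p2 = (⟨j + 1, hj⟩ : Fin N))) :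
    Equiv.swap (⟨j, Nat.lt_of_succ_lt hj⟩ : Fin N) ⟨j + 1, hj⟩ p1
      < Equiv.swap (⟨j, Nat.lt_of_succ_lt hj⟩ : Fin N) ⟨j + 1, hj⟩ p2 := by
  have e1 : ¬(((p1 : ℕ) = j) ∧ ((p2 : ℕ) = j + 1)) := by
    rintro ⟨a, b⟩; exact hne ⟨Fin.ext a, Fin.ext b⟩
  rw [Fin.lt_def] at h ⊢
  rw [swap_val hj, swap_val hj]
  split_ifs <;> omega

lemma invw_swp {j : ℕ} (hj : j + 1 < N) (w : Fin N → Fin n)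
    (hd : w ⟨j + 1, hj⟩ < w ⟨j, Nat.lt_of_succ_lt hj⟩) :
    invw w = invw (swp hj w) + 1 := by
  have hmem : ((⟨j, Nat.lt_of_succ_lt hj⟩ : Fin N), (⟨j + 1, hj⟩ : Fin N)) ∈
      Finset.univ.filter (fun p : Fin N × Fin N => p.1 < p.2 ∧ w p.2 < w p.1) := by
    simp only [Finset.mem_filter, Finset.mem_univ, true_and]
    exact ⟨Fin.mk_lt_mk.mpr (Nat.lt_succ_self j), hd⟩
  have hcard : invw (swp hj w) = ((Finset.univ.filter
      (fun p : Fin N × Fin N => p.1 < p.2 ∧ w p.2 < w p.1)).erase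
        ((⟨j, Nat.lt_of_succ_lt hj⟩ : Fin N), (⟨j + 1, hj⟩ : Fin N))).card := by
    unfold invw
    apply Finset.card_nbij'
      (fun p => (Equiv.swap (⟨j, Nat.lt_of_succ_lt hj⟩ : Fin N) ⟨j + 1, hj⟩ p.1,
                 Equiv.swap (⟨j, Nat.lt_of_succ_lt hj⟩ : Fin N) ⟨j + 1, hj⟩ p.2))
      (fun p => (Equiv.swap (⟨j, Nat.lt_of_succ_lt hj⟩ : Fin N) ⟨j + 1, hj⟩ p.1,
                 Equiv.swap (⟨j, Nat.lt_of_succ_lt hj⟩ : Fin N) ⟨j + 1, hj⟩ p.2))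
    · intro p hp
      simp only [Finset.mem_coe, Finset.mem_filter, Finset.mem_univ, true_and] at hp
      obtain ⟨hlt, hval⟩ := hp
      have hpne : ¬(p.1 = (⟨j, Nat.lt_of_succ_lt hj⟩ : Fin N)
          ∧ p.2 = (⟨j + 1, hj⟩ : Fin N)) := by
        rintro ⟨e1, e2⟩
        rw [e1, e2] at hval
        rw [swp_at0, swp_at1] at hval
        exact absurd hval (asymm hd)
      simp only [Finset.mem_coe, Finset.mem_erase, Finset.mem_filter, Finset.mem_univ, true_and]
      refine ⟨?_, pres_lt hj hlt hpne, hval⟩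
      · intro hcon
        rw [Prod.ext_iff] at hcon
        have e1 : p.1 = (⟨j + 1, hj⟩ : Fin N) := by
          have := congrArg (Equiv.swap (⟨j, Nat.lt_of_succ_lt hj⟩ : Fin N) ⟨j + 1, hj⟩) hcon.1
          simpa [Equiv.swap_apply_self, Equiv.swap_apply_left] using this
        have e2 : p.2 = (⟨j, Nat.lt_of_succ_lt hj⟩ : Fin N) := by
          have := congrArg (Equiv.swap (⟨j, Nat.lt_of_succ_lt hj⟩ : Fin N) ⟨j + 1, hj⟩) hcon.2
          simpa [Equiv.swap_apply_self, Equiv.swap_apply_right] using this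
        rw [e1, e2, Fin.mk_lt_mk] at hlt
        omega
    · intro p hp
      simp only [Finset.mem_coe, Finset.mem_erase, Finset.mem_filter, Finset.mem_univ, true_and] at hp
      obtain ⟨hne, hlt, hval⟩ := hp
      have hpne : ¬(p.1 = (⟨j, Nat.lt_of_succ_lt hj⟩ : Fin N)
          ∧ p.2 = (⟨j + 1, hj⟩ : Fin N)) := by
        rintro ⟨e1, e2⟩
        exact hne (Prod.ext e1 e2)
      simp only [Finset.mem_coe, Finset.mem_filter, Finset.mem_univ, true_and]
      refine ⟨pres_lt hj hlt hpne, ?_⟩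
      show swp hj w _ < swp hj w _
      simp only [swp, Function.comp_apply, Equiv.swap_apply_self]
      exact hval
    · intro p _; simp [Equiv.swap_apply_self]
    · intro p _; simp [Equiv.swap_apply_self]
  rw [show invw w = (Finset.univ.filter
      (fun p : Fin N × Fin N => p.1 < p.2 ∧ w p.2 < w p.1)).card from rfl,
    hcard, Finset.card_erase_of_mem hmem]
  have hpos : 0 < (Finset.univ.filter
      (fun p : Fin N × Fin N => p.1 < p.2 ∧ w p.2 < w p.1)).card :=
    Finset.card_pos.mpr ⟨_, hmem⟩
  omega

lemma mono_of_no_descent (w : Fin N → Fin n)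
    (h : ∀ (j : ℕ) (hj : j + 1 < N), ¬ w ⟨j + 1, hj⟩ < w ⟨j, Nat.lt_of_succ_lt hj⟩) :
    Monotone w := by
  have step : ∀ (d a : ℕ) (ha : a + d < N), w ⟨a, by omega⟩ ≤ w ⟨a + d, ha⟩ := by
    intro d
    induction d with
    | zero => intro a ha; exact le_refl _
    | succ d ihd =>
      intro a ha
      have h1 : a + d < N := by omega
      have h2 : (a + d) + 1 < N := by omega
      calc w ⟨a, by omega⟩ ≤ w ⟨a + d, h1⟩ := ihd a h1
        _ ≤ w ⟨a + d + 1, h2⟩ := not_lt.mp (h (a + d) h2)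
  intro a b hab
  have hab' : (a : ℕ) ≤ (b : ℕ) := hab
  have hb : ((a : ℕ) + ((b : ℕ) - (a : ℕ))) = (b : ℕ) := by omega
  have key := step ((b : ℕ) - (a : ℕ)) (a : ℕ) (by omega)
  have ea : (⟨(a : ℕ), by omega⟩ : Fin N) = a := Fin.ext rfl
  have eb : (⟨(a : ℕ) + ((b : ℕ) - (a : ℕ)), by omega⟩ : Fin N) = b := Fin.ext hb
  rwa [ea, eb] at key

lemma invw_eq_zero_of_mono (w : Fin N → Fin n) (h : Monotone w) : invw w = 0 := by
  unfold invw
  rw [Finset.card_eq_zero]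
  rw [Finset.filter_eq_empty_iff]
  rintro p - ⟨h1, h2⟩
  exact absurd (h (le_of_lt h1)) (not_le.mpr h2)

lemma descent_of_invw_ne (w : Fin N → Fin n) (h : invw w ≠ 0) :
    ∃ (j : ℕ) (hj : j + 1 < N), w ⟨j + 1, hj⟩ < w ⟨j, Nat.lt_of_succ_lt hj⟩ := by
  by_contra hc
  push_neg at hc
  exact h (invw_eq_zero_of_mono w (mono_of_no_descent w (fun j hj => not_lt.mpr (hc j hj))))

lemma count_map_w (w : Fin N → Fin n) (i : Fin n) : ∀ l : List (Fin N),
    ((l.map w).count i) = (l.filter (fun k => decide (w k = i))).length := by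
  intro l
  induction l with
  | nil => simp
  | cons a l ih =>
    by_cases h : w a = i <;>
      simp [List.count_cons, List.filter_cons, h, ih]

lemma content_eq_length (w : Fin N → Fin n) (i : Fin n) :
    content w i = ((List.finRange N).filter (fun k => decide (w k = i))).length := by
  rw [content, Fin.univ_def]
  rfl

lemma count_ofFn (w : Fin N → Fin n) (i : Fin n) :
    (List.ofFn w).count i = content w i := by
  rw [List.ofFn_eq_map, count_map_w w i (List.finRange N), content_eq_length]

lemma mono_unique {w w' : Fin N → Fin n} (hw : Monotone w) (hw' : Monotone w')
    (hc : ∀ i, content w i = content w' i) : w = w' := by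
  have hperm : (List.ofFn w).Perm (List.ofFn w') := by
    rw [List.perm_iff_count]
    intro a
    rw [count_ofFn, count_ofFn, hc]
  have heq := List.Perm.eq_of_sortedLE
    (List.sortedLE_ofFn_iff.mpr hw) (List.sortedLE_ofFn_iff.mpr hw') hperm
  exact List.ofFn_injective heq

lemma ymat_key (q : ℝ) (hq0 : (q : ℂ) ≠ 0) (z φ : ℂ) (h1 : φ = z * ((q : ℂ))⁻¹ ^ 2)
    (h2 : φ * z = 1 + z * (1 - ((q : ℂ))⁻¹ ^ 2)) :
    ∀ (k : ℕ) (w w' : Fin N → Fin n), invw w = k → Monotone w' →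
      (∀ i, content w' i = content w i) →
      (Ymat n N q z).mulVec (Pi.single w 1)
        = (((q : ℂ) * φ) ^ k) • (Ymat n N q z).mulVec (Pi.single w' 1) := by
  intro k
  induction k with
  | zero =>
    intro w w' hk hm hc
    have hmw : Monotone w := by
      apply mono_of_no_descent
      intro j hj hd
      have hmem : ((⟨j, Nat.lt_of_succ_lt hj⟩ : Fin N), (⟨j + 1, hj⟩ : Fin N)) ∈
          Finset.univ.filter (fun p : Fin N × Fin N => p.1 < p.2 ∧ w p.2 < w p.1) := by
        simp only [Finset.mem_filter, Finset.mem_univ, true_and]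
        exact ⟨Fin.mk_lt_mk.mpr (Nat.lt_succ_self j), hd⟩
      have := Finset.card_pos.mpr ⟨_, hmem⟩
      rw [show (Finset.univ.filter
        (fun p : Fin N × Fin N => p.1 < p.2 ∧ w p.2 < w p.1)).card = invw w from rfl, hk] at this
      omega
    have hww : w' = w := mono_unique hm hmw hc
    rw [hww, pow_zero, one_smul]
  | succ k ih =>
    intro w w' hk hm hc
    obtain ⟨j, hj, hd⟩ := descent_of_invw_ne w (by omega)
    have hinv : invw w = invw (swp hj w) + 1 := invw_swp hj w hd
    have hrec := ih (swp hj w) w' (by omega) hm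
      (fun i => (hc i).trans (content_swp hj w i).symm)
    funext p
    have hstep := ymat_step q hq0 z φ h1 h2 hj w hd p
    have hrecp := congrFun hrec p
    simp only [Matrix.mulVec_single_one, Matrix.col_apply, mul_one, Pi.smul_apply, smul_eq_mul] at hrecp ⊢
    rw [hstep, hrecp, pow_succ]
    ring

end S7

/-- for any word `w` with weakly increasing rearrangement `w'`,
`Y_N(q²) e_w = q^{inv(w)} Y_N(q²) e_{w'}` and `Y_N(−1) e_w = (−q⁻¹)^{inv(w)} Y_N(−1) e_{w'}`;
in particular, for `x < y`, `(1 + q² r)(e_y ⊗ e_x) = q (1 + q² r)(e_x ⊗ e_y)` and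
`(1 − r)(e_y ⊗ e_x) = −q⁻¹ (1 − r)(e_x ⊗ e_y)`. -/
theorem stmt7 (n N : ℕ) (hn : 2 ≤ n) (hN : 2 ≤ N) (q : ℝ) (hq : 0 < q) (hq1 : q ≠ 1)
    (w w' : Fin N → Fin n) (hw' : Monotone w') (hc : ∀ i, content w' i = content w i) :
    ((Ymat n N q ((q : ℂ) ^ 2)).mulVec (Pi.single w 1) =
      ((q : ℂ) ^ invw w) • (Ymat n N q ((q : ℂ) ^ 2)).mulVec (Pi.single w' 1)) ∧
    ((Ymat n N q (-1)).mulVec (Pi.single w 1) =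
      ((-((q : ℂ))⁻¹) ^ invw w) • (Ymat n N q (-1)).mulVec (Pi.single w' 1)) ∧
    (∀ x y : Fin n, x < y →
      ((1 + ((q : ℂ) ^ 2) • rMat n q).mulVec (Pi.single (y, x) 1) =
        (q : ℂ) • (1 + ((q : ℂ) ^ 2) • rMat n q).mulVec (Pi.single (x, y) 1)) ∧
      ((1 - rMat n q).mulVec (Pi.single (y, x) 1) =
        (-((q : ℂ))⁻¹) • (1 - rMat n q).mulVec (Pi.single (x, y) 1))) := by
  have hq0 : (q : ℂ) ≠ 0 := Complex.ofReal_ne_zero.mpr hq.ne'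
  refine ⟨?_, ?_, ?_⟩
  · have h1 : (1 : ℂ) = ((q : ℂ) ^ 2) * ((q : ℂ))⁻¹ ^ 2 := by
      field_simp
    have h2 : (1 : ℂ) * ((q : ℂ) ^ 2) = 1 + ((q : ℂ) ^ 2) * (1 - ((q : ℂ))⁻¹ ^ 2) := by
      field_simp
      ring
    have key := S7.ymat_key (n := n) (N := N) q hq0 ((q : ℂ) ^ 2) 1 h1 h2
      (invw w) w w' rfl hw' hc
    simpa using key
  · have h1 : (-(((q : ℂ))⁻¹ ^ 2)) = (-1 : ℂ) * ((q : ℂ))⁻¹ ^ 2 := by ring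
    have h2 : (-(((q : ℂ))⁻¹ ^ 2)) * (-1 : ℂ) = 1 + (-1 : ℂ) * (1 - ((q : ℂ))⁻¹ ^ 2) := by
      ring
    have key := S7.ymat_key (n := n) (N := N) q hq0 (-1) (-(((q : ℂ))⁻¹ ^ 2)) h1 h2
      (invw w) w w' rfl hw' hc
    have hs : (q : ℂ) * (-(((q : ℂ))⁻¹ ^ 2)) = -((q : ℂ))⁻¹ := by
      field_simp
    rw [hs] at key
    exact key
  · intro x y hxy
    have e1 : ∀ p : Fin n × Fin n, rMat n q p (y, x)
        = (if p = (x, y) then ((q : ℂ))⁻¹ else 0)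
          + (if p = (y, x) then 1 - ((q : ℂ))⁻¹ ^ 2 else 0) := by
      intro p
      simp only [rMat]
      rw [if_neg hxy.ne', if_congr (and_iff_right hxy) rfl rfl]
    have e2 : ∀ p : Fin n × Fin n, rMat n q p (x, y)
        = (if p = (y, x) then ((q : ℂ))⁻¹ else 0) := by
      intro p
      simp only [rMat]
      rw [if_neg hxy.ne, if_neg (fun hcon : y < x ∧ p = (x, y) => asymm hxy hcon.1), add_zero]
    constructor
    · funext p
      simp only [Matrix.mulVec_single_one, Matrix.col_apply, mul_one, Pi.smul_apply, smul_eq_mul,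
        Matrix.add_apply, Matrix.smul_apply, Matrix.one_apply]
      rw [e1 p, e2 p]
      have hne1 : ((x, y) : Fin n × Fin n) ≠ (y, x) := fun h => hxy.ne (congrArg Prod.fst h)
      by_cases hp1 : p = (x, y)
      · subst hp1
        simp only [if_pos rfl, if_true, if_neg hne1]
        field_simp
        try ring
      · by_cases hp2 : p = (y, x)
        · subst hp2
          simp only [if_pos rfl, if_true, if_neg (Ne.symm hne1)]
          field_simp
          try ring
        · simp [hp1, hp2]
    · funext p
      simp only [Matrix.mulVec_single_one, Matrix.col_apply, mul_one, Pi.smul_apply, smul_eq_mul,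
        Matrix.sub_apply, Matrix.one_apply]
      rw [e1 p, e2 p]
      have hne1 : ((x, y) : Fin n × Fin n) ≠ (y, x) := fun h => hxy.ne (congrArg Prod.fst h)
      by_cases hp1 : p = (x, y)
      · subst hp1
        simp only [if_pos rfl, if_true, if_neg hne1]
        field_simp
        try ring
      · by_cases hp2 : p = (y, x)
        · subst hp2
          simp only [if_pos rfl, if_true, if_neg (Ne.symm hne1)]
          field_simp
          try ring
        · simp [hp1, hp2]

end
end

section
/- Fix integers n ≥ 2, N ≥ 2 and a real number q > 0, q ≠ 1. For nonnegative integers k_1,…,k_n with k_1 + ⋯ + k_n = N define on (ℂⁿ)^{⊗N} the normalized q-Dicke state ĥb^{(0)}_{k_1…k_n} = b^{(0)}_{k_1…k_n}/‖b^{(0)}_{k_1…k_n}‖, where b^{(0)}_{k_1…k_n} = Σ_{w ∈ W(k_1,…,k_n)} q^{inv(w)} e_{w_1} ⊗ ⋯ ⊗ e_{w_N}, with W(k_1,…,k_n) the set of words in {1,…,n} with exactly k_i letters i and inv(w) the number of inversions. Let E_j = Σ_{k=1}^N (K_j^{−1})^{⊗(k−1)} ⊗ e_{j+1,j} ⊗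 K_j^{⊗(N−k)}, F_j = Σ_{k=1}^N (K_j^{−1})^{⊗(k−1)} ⊗ e_{j,j+1} ⊗ K_j^{⊗(N−k)}, q^{𝓔_i} = (q^{e_{i,i}})^{⊗N}, q^{H_j} = q^{𝓔_j}(q^{𝓔_{j+1}})^{−1}, where K_j is the diagonal matrix with q^{1/2} in position j, q^{−1/2} in position j+1, 1 elsewhere. Then for each j ∈ {1,…,n−1} with k_j ≥ 1: E_j ĥb^{(0)}_{k_1…k_j k_{j+1}…k_n} = √([k_{j+1}+1]_q [k_j]_q) · ĥb^{(0)}_{k_1…(k_j−1)(k_{j+1}+1)…k_n} and F_j ĥb^{(0)}_{k_1…(k_j−1)(k_{j+1}+1)…k_n} = √([k_{j+1}+1]_q [k_j]_q) · ĥb^{(0)}_{k_1…k_j k_{j+1}…k_n}, where [m]_q = (q^m − q^{−m})/(q − q^{−1}); moreover q^{𝓔_i} ĥb^{(0)}_{k_1…k_n} = q^{k_i} ĥb^{(0)}_{k_1…k_n} for all i and q^{H_j} ĥb^{(0)}_{k_1…k_n} = q^{k_j − k_{j+1}} ĥb^{(0)}_{k_1…k_n}. -/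
open Finset Matrix Kronecker

noncomputable section

/-- The symmetric `q`-integer `[m]_q = (q^m − q^{−m})/(q − q⁻¹)`. -/
def qnum (q : ℝ) (m : ℕ) : ℝ := (q ^ m - (q⁻¹) ^ m) / (q - q⁻¹)

/-- The Euclidean norm of the q-Dicke state `b⁰_{k₁…k_n}`. -/
def bnorm (n N : ℕ) (q : ℝ) (k : Fin n → ℕ) : ℝ :=
  Real.sqrt (∑ w ∈ Finset.univ.filter (fun w : Fin N → Fin n => ∀ i, content w i = k i),
    q ^ (2 * invw w))

/-- The normalized q-Dicke state `b̂⁰_{k₁…k_n}`. -/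
def hatb (n N : ℕ) (q : ℝ) (k : Fin n → ℕ) : (Fin N → Fin n) → ℂ :=
  ((bnorm n N q k : ℂ))⁻¹ • bstate n N q k

namespace S10
variable {n N : ℕ}

variable {n N : ℕ}

def cntL (f : Fin N → Fin n) (c : Fin n) (p : Fin N) : ℕ :=
  (Finset.univ.filter fun m => m < p ∧ f m = c).card

def cntG (f : Fin N → Fin n) (c : Fin n) (p : Fin N) : ℕ :=
  (Finset.univ.filter fun m => p < m ∧ f m = c).card

lemma content_eq_sum (w : Fin N → Fin n) (i : Fin n) :
    content w i = ∑ m : Fin N, if w m = i then 1 else 0 := Finset.card_filter _ _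

lemma cntL_eq_sum (f : Fin N → Fin n) (c : Fin n) (p : Fin N) :
    cntL f c p = ∑ m ∈ Finset.univ.erase p, if m < p ∧ f m = c then 1 else 0 := by
  rw [cntL, Finset.card_filter, ← Finset.add_sum_erase _ _ (Finset.mem_univ p)]
  simp

lemma cntG_eq_sum (f : Fin N → Fin n) (c : Fin n) (p : Fin N) :
    cntG f c p = ∑ m ∈ Finset.univ.erase p, if p < m ∧ f m = c then 1 else 0 := by
  rw [cntG, Finset.card_filter, ← Finset.add_sum_erase _ _ (Finset.mem_univ p)]
  simp

lemma content_split (f : Fin N → Fin n) (c : Fin n) (p : Fin N) :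
    content f c = (if f p = c then 1 else 0) + cntL f c p + cntG f c p := by
  rw [content_eq_sum, ← Finset.add_sum_erase _ _ (Finset.mem_univ p), cntL_eq_sum, cntG_eq_sum,
    add_assoc, ← Finset.sum_add_distrib]
  congr 1
  refine Finset.sum_congr rfl fun m hm => ?_
  have hmp : m ≠ p := (Finset.mem_erase.mp hm).1
  rcases hmp.lt_or_gt with h | h
  · simp [h, lt_asymm h]
  · simp [h, lt_asymm h]

lemma content_update (f : Fin N → Fin n) (p : Fin N) (v i : Fin n) :
    content (Function.update f p v) i + (if f p = i then 1 else 0)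
      = content f i + (if v = i then 1 else 0) := by
  rw [content_eq_sum, content_eq_sum, ← Finset.add_sum_erase _ _ (Finset.mem_univ p),
    ← Finset.add_sum_erase _ _ (Finset.mem_univ p)]
  have h1 : (∑ m ∈ Finset.univ.erase p, if Function.update f p v m = i then 1 else 0)
      = ∑ m ∈ Finset.univ.erase p, if f m = i then 1 else 0 := by
    refine Finset.sum_congr rfl fun m hm => ?_
    rw [Function.update_of_ne (Finset.mem_erase.mp hm).1]
  rw [h1, Function.update_self]
  ring

lemma sum2_split (F : Fin N → Fin N → ℕ) (p : Fin N) :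
    ∑ a : Fin N, ∑ b : Fin N, F a b
      = F p p + (∑ m ∈ Finset.univ.erase p, F p m) + (∑ m ∈ Finset.univ.erase p, F m p)
        + ∑ a ∈ Finset.univ.erase p, ∑ b ∈ Finset.univ.erase p, F a b := by
  rw [← Finset.add_sum_erase _ (fun a => ∑ b, F a b) (Finset.mem_univ p),
    ← Finset.add_sum_erase _ (F p) (Finset.mem_univ p)]
  have h1 : (∑ a ∈ Finset.univ.erase p, ∑ b : Fin N, F a b)
      = ∑ a ∈ Finset.univ.erase p, (F a p + ∑ b ∈ Finset.univ.erase p, F a b) := by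
    refine Finset.sum_congr rfl fun a _ => ?_
    rw [Finset.add_sum_erase _ _ (Finset.mem_univ p)]
  rw [h1, Finset.sum_add_distrib]
  ring

lemma invw_eq_sum (w : Fin N → Fin n) :
    invw w = ∑ a : Fin N, ∑ b : Fin N, if a < b ∧ w b < w a then 1 else 0 := by
  rw [invw, Finset.card_filter]
  exact Fintype.sum_prod_type _

lemma invw_update_down (f : Fin N → Fin n) (p : Fin N) (u v : Fin n)
    (hp : f p = u) (hv : (v : ℕ) + 1 = (u : ℕ)) :
    invw (Function.update f p v) + cntG f v p = invw f + cntL f u p := by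
  rw [invw_eq_sum, invw_eq_sum, sum2_split _ p, sum2_split
    (fun a b => if a < b ∧ f b < f a then 1 else 0) p, cntG_eq_sum, cntL_eq_sum]
  have hdiag1 : (if p < p ∧ Function.update f p v p < Function.update f p v p then 1 else 0) = 0 := by
    simp
  have hdiag2 : (if p < p ∧ f p < f p then 1 else 0) = 0 := by simp
  have hD : (∑ a ∈ Finset.univ.erase p, ∑ b ∈ Finset.univ.erase p,
      if a < b ∧ Function.update f p v b < Function.update f p v a then 1 else 0)
      = ∑ a ∈ Finset.univ.erase p, ∑ b ∈ Finset.univ.erase p,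
        if a < b ∧ f b < f a then 1 else 0 := by
    refine Finset.sum_congr rfl fun a ha => Finset.sum_congr rfl fun b hb => ?_
    rw [Function.update_of_ne (Finset.mem_erase.mp ha).1,
      Function.update_of_ne (Finset.mem_erase.mp hb).1]
  rw [hdiag1, hdiag2, hD]
  have key : (∑ m ∈ Finset.univ.erase p,
        if p < m ∧ Function.update f p v m < Function.update f p v p then 1 else 0)
      + (∑ m ∈ Finset.univ.erase p,
        if m < p ∧ Function.update f p v p < Function.update f p v m then 1 else 0)
      + (∑ m ∈ Finset.univ.erase p, if p < m ∧ f m = v then 1 else 0)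
      = (∑ m ∈ Finset.univ.erase p, if p < m ∧ f m < f p then 1 else 0)
      + (∑ m ∈ Finset.univ.erase p, if m < p ∧ f p < f m then 1 else 0)
      + (∑ m ∈ Finset.univ.erase p, if m < p ∧ f m = u then 1 else 0) := by
    rw [← Finset.sum_add_distrib, ← Finset.sum_add_distrib, ← Finset.sum_add_distrib,
      ← Finset.sum_add_distrib]
    refine Finset.sum_congr rfl fun m hm => ?_
    have hmp : m ≠ p := (Finset.mem_erase.mp hm).1
    rw [Function.update_of_ne hmp, Function.update_self, hp]
    have hmp' : (m : ℕ) ≠ (p : ℕ) := fun h => hmp (Fin.ext h)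
    simp only [Fin.lt_def, Fin.ext_iff]
    split_ifs <;> omega
  omega

lemma invw_update_up (f : Fin N → Fin n) (p : Fin N) (u v : Fin n)
    (hp : f p = u) (hv : (u : ℕ) + 1 = (v : ℕ)) :
    invw (Function.update f p v) + cntL f v p = invw f + cntG f u p := by
  rw [invw_eq_sum, invw_eq_sum, sum2_split _ p, sum2_split
    (fun a b => if a < b ∧ f b < f a then 1 else 0) p, cntG_eq_sum, cntL_eq_sum]
  have hdiag1 : (if p < p ∧ Function.update f p v p < Function.update f p v p then 1 else 0) = 0 := by
    simp
  have hdiag2 : (if p < p ∧ f p < f p then 1 else 0) = 0 := by simp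
  have hD : (∑ a ∈ Finset.univ.erase p, ∑ b ∈ Finset.univ.erase p,
      if a < b ∧ Function.update f p v b < Function.update f p v a then 1 else 0)
      = ∑ a ∈ Finset.univ.erase p, ∑ b ∈ Finset.univ.erase p,
        if a < b ∧ f b < f a then 1 else 0 := by
    refine Finset.sum_congr rfl fun a ha => Finset.sum_congr rfl fun b hb => ?_
    rw [Function.update_of_ne (Finset.mem_erase.mp ha).1,
      Function.update_of_ne (Finset.mem_erase.mp hb).1]
  rw [hdiag1, hdiag2, hD]
  have key : (∑ m ∈ Finset.univ.erase p,
        if p < m ∧ Function.update f p v m < Function.update f p v p then 1 else 0)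
      + (∑ m ∈ Finset.univ.erase p,
        if m < p ∧ Function.update f p v p < Function.update f p v m then 1 else 0)
      + (∑ m ∈ Finset.univ.erase p, if m < p ∧ f m = v then 1 else 0)
      = (∑ m ∈ Finset.univ.erase p, if p < m ∧ f m < f p then 1 else 0)
      + (∑ m ∈ Finset.univ.erase p, if m < p ∧ f p < f m then 1 else 0)
      + (∑ m ∈ Finset.univ.erase p, if p < m ∧ f m = u then 1 else 0) := by
    rw [← Finset.sum_add_distrib, ← Finset.sum_add_distrib, ← Finset.sum_add_distrib,
      ← Finset.sum_add_distrib]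
    refine Finset.sum_congr rfl fun m hm => ?_
    have hmp : m ≠ p := (Finset.mem_erase.mp hm).1
    rw [Function.update_of_ne hmp, Function.update_self, hp]
    have hmp' : (m : ℕ) ≠ (p : ℕ) := fun h => hmp (Fin.ext h)
    simp only [Fin.lt_def, Fin.ext_iff]
    split_ifs <;> omega
  omega


lemma sum_pow_cntL (f : Fin N → Fin n) (c : Fin n) (x : ℂ) :
    ∑ p ∈ Finset.univ.filter (fun p => f p = c), x ^ (cntL f c p)
      = ∑ t ∈ Finset.range (content f c), x ^ t := by
  set P := Finset.univ.filter (fun p : Fin N => f p = c) with hP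
  have hmono : ∀ p ∈ P, ∀ p' ∈ P, p < p' → cntL f c p < cntL f c p' := by
    intro p hp p' hp' hlt
    apply Finset.card_lt_card
    rw [Finset.ssubset_iff_of_subset]
    · refine ⟨p, ?_, ?_⟩
      · simp only [Finset.mem_filter, Finset.mem_univ, true_and]
        exact ⟨hlt, (Finset.mem_filter.mp hp).2⟩
      · simp only [Finset.mem_filter, Finset.mem_univ, true_and]
        rintro ⟨h, -⟩; exact absurd h (lt_irrefl p)
    · intro m hm
      simp only [Finset.mem_filter, Finset.mem_univ, true_and] at hm ⊢
      exact ⟨hm.1.trans hlt, hm.2⟩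
  have hinj : ∀ p ∈ P, ∀ p' ∈ P, cntL f c p = cntL f c p' → p = p' := by
    intro p hp p' hp' h
    by_contra hne
    rcases lt_or_gt_of_ne hne with hl | hl
    · exact absurd h (Nat.ne_of_lt (hmono _ hp _ hp' hl))
    · exact absurd h.symm (Nat.ne_of_lt (hmono _ hp' _ hp hl))
  have hbound : ∀ p ∈ P, cntL f c p < content f c := by
    intro p hp
    have := content_split f c p
    have hfp : f p = c := (Finset.mem_filter.mp hp).2
    rw [if_pos hfp] at this
    omega
  have hcard : P.card = content f c := rfl
  have himage : P.image (cntL f c) = Finset.range (content f c) := by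
    apply Finset.eq_of_subset_of_card_le
    · intro t ht
      rcases Finset.mem_image.mp ht with ⟨p, hp, rfl⟩
      exact Finset.mem_range.mpr (hbound p hp)
    · rw [Finset.card_range, ← hcard, Finset.card_image_of_injOn]
      intro p hp p' hp' h
      exact hinj p hp p' hp' h
  rw [← himage, Finset.sum_image hinj]

lemma sum_pow_cntG (f : Fin N → Fin n) (c : Fin n) (x : ℂ) :
    ∑ p ∈ Finset.univ.filter (fun p => f p = c), x ^ (cntG f c p)
      = ∑ t ∈ Finset.range (content f c), x ^ t := by
  set P := Finset.univ.filter (fun p : Fin N => f p = c) with hP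
  have hmono : ∀ p ∈ P, ∀ p' ∈ P, p < p' → cntG f c p' < cntG f c p := by
    intro p hp p' hp' hlt
    apply Finset.card_lt_card
    rw [Finset.ssubset_iff_of_subset]
    · refine ⟨p', ?_, ?_⟩
      · simp only [Finset.mem_filter, Finset.mem_univ, true_and]
        exact ⟨hlt, (Finset.mem_filter.mp hp').2⟩
      · simp only [Finset.mem_filter, Finset.mem_univ, true_and]
        rintro ⟨h, -⟩; exact absurd h (lt_irrefl p')
    · intro m hm
      simp only [Finset.mem_filter, Finset.mem_univ, true_and] at hm ⊢
      exact ⟨hlt.trans hm.1, hm.2⟩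
  have hinj : ∀ p ∈ P, ∀ p' ∈ P, cntG f c p = cntG f c p' → p = p' := by
    intro p hp p' hp' h
    by_contra hne
    rcases lt_or_gt_of_ne hne with hl | hl
    · exact absurd h.symm (Nat.ne_of_lt (hmono _ hp _ hp' hl))
    · exact absurd h (Nat.ne_of_lt (hmono _ hp' _ hp hl))
  have hbound : ∀ p ∈ P, cntG f c p < content f c := by
    intro p hp
    have := content_split f c p
    have hfp : f p = c := (Finset.mem_filter.mp hp).2
    rw [if_pos hfp] at this
    omega
  have hcard : P.card = content f c := rfl
  have himage : P.image (cntG f c) = Finset.range (content f c) := by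
    apply Finset.eq_of_subset_of_card_le
    · intro t ht
      rcases Finset.mem_image.mp ht with ⟨p, hp, rfl⟩
      exact Finset.mem_range.mpr (hbound p hp)
    · rw [Finset.card_range, ← hcard, Finset.card_image_of_injOn]
      intro p hp p' hp' h
      exact hinj p hp p' hp' h
  rw [← himage, Finset.sum_image hinj]


/-- The `K`-weight accompanying a hop at position `p`. -/
def wt (n N : ℕ) (q : ℝ) (j : ℕ) (f : Fin N → Fin n) (p : Fin N) : ℂ :=
  (∏ m ∈ Finset.univ.filter (· < p),
      (if (f m).1 = j then ((Real.sqrt q : ℂ))⁻¹ else if (f m).1 = j + 1 then (Real.sqrt q : ℂ) else 1)) *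
  (∏ m ∈ Finset.univ.filter (p < ·),
      (if (f m).1 = j then (Real.sqrt q : ℂ) else if (f m).1 = j + 1 then ((Real.sqrt q : ℂ))⁻¹ else 1))

lemma prod_ite_count (S : Finset (Fin N)) (f : Fin N → Fin n) (j : ℕ) (x y : ℂ) :
    (∏ m ∈ S, if (f m).1 = j then x else if (f m).1 = j + 1 then y else 1)
      = x ^ (S.filter fun m => (f m).1 = j).card * y ^ (S.filter fun m => (f m).1 = j + 1).card := by
  rw [Finset.prod_ite, Finset.prod_const, Finset.prod_ite, Finset.prod_const,
    Finset.prod_const, one_pow, mul_one, Finset.filter_filter]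
  have hset : (Finset.filter (fun a => ¬(f a).1 = j ∧ (f a).1 = j + 1) S)
      = S.filter fun m => (f m).1 = j + 1 := by
    apply Finset.filter_congr
    intro m _
    constructor
    · rintro ⟨-, h⟩; exact h
    · intro h; exact ⟨by omega, h⟩
  rw [hset]

lemma wt_eq (q : ℝ) (j : ℕ) (hj : j + 1 < n) (hs : (Real.sqrt q : ℂ) ≠ 0)
    (f : Fin N → Fin n) (p : Fin N) :
    wt n N q j f p = (Real.sqrt q : ℂ) ^
      ((cntL f ⟨j + 1, hj⟩ p : ℤ) - (cntL f ⟨j, Nat.lt_of_succ_lt hj⟩ p : ℤ)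
        + (cntG f ⟨j, Nat.lt_of_succ_lt hj⟩ p : ℤ) - (cntG f ⟨j + 1, hj⟩ p : ℤ)) := by
  have hL1 : ((Finset.univ.filter (· < p)).filter fun m => (f m).1 = j).card
      = cntL f ⟨j, Nat.lt_of_succ_lt hj⟩ p := by
    rw [Finset.filter_filter, cntL]
    congr 1
    apply Finset.filter_congr
    intro m _
    simp [Fin.ext_iff]
  have hL2 : ((Finset.univ.filter (· < p)).filter fun m => (f m).1 = j + 1).card
      = cntL f ⟨j + 1, hj⟩ p := by
    rw [Finset.filter_filter, cntL]
    congr 1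
    apply Finset.filter_congr
    intro m _
    simp [Fin.ext_iff]
  have hG1 : ((Finset.univ.filter (p < ·)).filter fun m => (f m).1 = j).card
      = cntG f ⟨j, Nat.lt_of_succ_lt hj⟩ p := by
    rw [Finset.filter_filter, cntG]
    congr 1
    apply Finset.filter_congr
    intro m _
    simp [Fin.ext_iff]
  have hG2 : ((Finset.univ.filter (p < ·)).filter fun m => (f m).1 = j + 1).card
      = cntG f ⟨j + 1, hj⟩ p := by
    rw [Finset.filter_filter, cntG]
    congr 1
    apply Finset.filter_congr
    intro m _
    simp [Fin.ext_iff]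
  rw [wt, prod_ite_count, prod_ite_count, hL1, hL2, hG1, hG2]
  simp only [inv_pow, ← zpow_natCast (Real.sqrt q : ℂ), ← _root_.zpow_neg, ← zpow_add₀ hs]
  congr 1
  ring

/-- Generic ladder operator: `u` is the outgoing letter, `v` the incoming letter. -/
def Lop (n N : ℕ) (q : ℝ) (j : ℕ) (u v : Fin n) : Matrix (Fin N → Fin n) (Fin N → Fin n) ℂ :=
  ∑ k : Fin N, tensorFam fun m =>
    if m.1 < k.1 then KmatInv n q j
    else if m = k then Matrix.single u v 1
    else Kmat n q j

lemma Eop_eq (q : ℝ) (j : ℕ) (hj : j + 1 < n) :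
    Eop n N q j hj = Lop n N q j ⟨j + 1, hj⟩ ⟨j, Nat.lt_of_succ_lt hj⟩ := rfl

lemma Fop_eq (q : ℝ) (j : ℕ) (hj : j + 1 < n) :
    Fop n N q j hj = Lop n N q j ⟨j, Nat.lt_of_succ_lt hj⟩ ⟨j + 1, hj⟩ := rfl

lemma Lop_entry (q : ℝ) (j : ℕ) (u v : Fin n) (huv : u ≠ v) (f g : Fin N → Fin n) :
    Lop n N q j u v f g
      = ∑ p : Fin N, if f p = u ∧ g = Function.update f p v then wt n N q j f p else 0 := by
  rw [Lop, Matrix.sum_apply]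
  refine Finset.sum_congr rfl fun p _ => ?_
  show (∏ m : Fin N, (if m.1 < p.1 then KmatInv n q j
    else if m = p then Matrix.single u v 1 else Kmat n q j) (f m) (g m)) = _
  by_cases h : f p = u ∧ g = Function.update f p v
  · rw [if_pos h]
    obtain ⟨h1, h2⟩ := h
    subst h2
    rw [← Finset.mul_prod_erase Finset.univ _ (Finset.mem_univ p)]
    have hfac : (if p.1 < p.1 then KmatInv n q j
        else if p = p then Matrix.single u v 1 else Kmat n q j) (f p)
          (Function.update f p v p) = 1 := by
      rw [if_neg (lt_irrefl p.1), if_pos rfl, Function.update_self, h1]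
      exact Matrix.single_apply_same u v 1
    rw [hfac, one_mul]
    have herase : Finset.univ.erase p
        = (Finset.univ.filter (· < p)) ∪ (Finset.univ.filter (p < ·)) := by
      ext m
      simp only [Finset.mem_erase, Finset.mem_univ, and_true, Finset.mem_union,
        Finset.mem_filter, true_and, Fin.ext_iff, Fin.lt_def]
      omega
    have hdisj : Disjoint (Finset.univ.filter (· < p)) (Finset.univ.filter (p < ·)) := by
      rw [Finset.disjoint_left]
      intro m hm hm'
      exact absurd (Finset.mem_filter.mp hm').2 (lt_asymm (Finset.mem_filter.mp hm).2)
    rw [herase, Finset.prod_union hdisj, wt]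
    congr 1
    · refine Finset.prod_congr rfl fun m hm => ?_
      have hlt : m < p := (Finset.mem_filter.mp hm).2
      rw [Function.update_of_ne (ne_of_lt hlt), if_pos (show (m:ℕ) < (p:ℕ) from hlt), KmatInv,
        Matrix.diagonal_apply_eq]
    · refine Finset.prod_congr rfl fun m hm => ?_
      have hlt : p < m := (Finset.mem_filter.mp hm).2
      rw [Function.update_of_ne (ne_of_gt hlt),
        if_neg (Nat.not_lt.mpr (Nat.le_of_lt hlt)),
        if_neg (ne_of_gt hlt), Kmat, Matrix.diagonal_apply_eq]
  · rw [if_neg h]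
    by_cases hfp : f p = u
    · have hg : g ≠ Function.update f p v := fun hc => h ⟨hfp, hc⟩
      rcases Function.ne_iff.mp hg with ⟨m, hm⟩
      by_cases hmp : m = p
      · subst hmp
        rw [Function.update_self] at hm
        apply Finset.prod_eq_zero (Finset.mem_univ m)
        rw [if_neg (lt_irrefl m.1), if_pos rfl]
        simp only [Matrix.single, Matrix.of_apply, ite_eq_right_iff, and_imp]
        exact fun _ hv => absurd hv.symm hm
      · rw [Function.update_of_ne hmp] at hm
        apply Finset.prod_eq_zero (Finset.mem_univ m)
        by_cases hml : (m:ℕ) < (p:ℕ)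
        · rw [if_pos hml, KmatInv]
          exact Matrix.diagonal_apply_ne _ (Ne.symm hm)
        · rw [if_neg hml, if_neg hmp, Kmat]
          exact Matrix.diagonal_apply_ne _ (Ne.symm hm)
    · apply Finset.prod_eq_zero (Finset.mem_univ p)
      rw [if_neg (lt_irrefl p.1), if_pos rfl]
      simp only [Matrix.single, Matrix.of_apply, ite_eq_right_iff, and_imp]
      exact fun hu _ => absurd hu.symm hfp

lemma Lop_mulVec (q : ℝ) (j : ℕ) (u v : Fin n) (huv : u ≠ v)
    (w : (Fin N → Fin n) → ℂ) (f : Fin N → Fin n) :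
    (Lop n N q j u v).mulVec w f
      = ∑ p : Fin N, if f p = u then wt n N q j f p * w (Function.update f p v) else 0 := by
  show (∑ g : Fin N → Fin n, Lop n N q j u v f g * w g) = _
  calc (∑ g : Fin N → Fin n, Lop n N q j u v f g * w g)
      = ∑ g : Fin N → Fin n, ∑ p : Fin N,
          (if f p = u ∧ g = Function.update f p v then wt n N q j f p * w g else 0) := by
        refine Finset.sum_congr rfl fun g _ => ?_
        rw [Lop_entry q j u v huv, Finset.sum_mul]
        refine Finset.sum_congr rfl fun p _ => ?_
        rw [ite_mul, zero_mul]
    _ = ∑ p : Fin N, ∑ g : Fin N → Fin n,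
          (if f p = u ∧ g = Function.update f p v then wt n N q j f p * w g else 0) :=
        Finset.sum_comm
    _ = _ := by
        refine Finset.sum_congr rfl fun p _ => ?_
        by_cases hu : f p = u
        · simp only [hu, true_and]
          rw [Finset.sum_ite_eq' Finset.univ (Function.update f p v)
            (fun g => wt n N q j f p * w g)]
          simp
        · simp [hu]

lemma bstate_apply (q : ℝ) (k : Fin n → ℕ) (f : Fin N → Fin n) :
    bstate n N q k f = if (∀ i, content f i = k i) then (q : ℂ) ^ (invw f) else 0 := by
  rw [bstate, Finset.sum_apply]
  simp only [Pi.smul_apply, Pi.single_apply, smul_eq_mul, mul_ite, mul_one, mul_zero]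
  rw [Finset.sum_ite_eq]
  simp


abbrev kup (k : Fin n → ℕ) (a b : Fin n) : Fin n → ℕ :=
  Function.update (Function.update k a (k a - 1)) b (k b + 1)

lemma kup_fst (k : Fin n → ℕ) (a b : Fin n) (hab : a ≠ b) : kup k a b a = k a - 1 := by
  rw [kup, Function.update_of_ne hab, Function.update_self]

lemma kup_snd (k : Fin n → ℕ) (a b : Fin n) : kup k a b b = k b + 1 :=
  Function.update_self _ _ _

lemma kup_other (k : Fin n → ℕ) (a b i : Fin n) (ha : i ≠ a) (hb : i ≠ b) :
    kup k a b i = k i := by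
  rw [kup, Function.update_of_ne hb, Function.update_of_ne ha]

lemma contentE_iff (f : Fin N → Fin n) (p : Fin N) (k : Fin n → ℕ) (u v : Fin n)
    (hp : f p = u) (hvu : (v : ℕ) + 1 = (u : ℕ)) (hk : 1 ≤ k v) :
    (∀ i, content (Function.update f p v) i = k i) ↔ (∀ i, content f i = kup k v u i) := by
  have hne : v ≠ u := fun h => by rw [h] at hvu; omega
  constructor
  · intro h i
    have h2 := content_update f p v i
    rw [hp] at h2
    by_cases hiu : i = u
    · rw [hiu] at h2 ⊢
      rw [if_pos rfl, if_neg hne] at h2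
      have h1 := h u
      rw [kup_snd]
      omega
    · by_cases hiv : i = v
      · rw [hiv] at h2 ⊢
        rw [if_neg (fun hc : u = v => hne hc.symm), if_pos rfl] at h2
        rw [kup_fst k v u hne]
        have h1 := h v
        omega
      · rw [if_neg (fun hc : u = i => hiu hc.symm), if_neg (fun hc : v = i => hiv hc.symm)] at h2
        rw [kup_other k v u i hiv hiu]
        have h1 := h i
        omega
  · intro h i
    have h2 := content_update f p v i
    rw [hp] at h2
    by_cases hiu : i = u
    · rw [hiu] at h2 ⊢
      rw [if_pos rfl, if_neg hne] at h2
      have h1 := h u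
      rw [kup_snd] at h1
      omega
    · by_cases hiv : i = v
      · rw [hiv] at h2 ⊢
        rw [if_neg (fun hc : u = v => hne hc.symm), if_pos rfl] at h2
        have h1 := h v
        rw [kup_fst k v u hne] at h1
        omega
      · rw [if_neg (fun hc : u = i => hiu hc.symm), if_neg (fun hc : v = i => hiv hc.symm)] at h2
        have h1 := h i
        rw [kup_other k v u i hiv hiu] at h1
        omega

lemma contentF_iff (f : Fin N → Fin n) (p : Fin N) (k : Fin n → ℕ) (u v : Fin n)
    (hp : f p = u) (huv : (u : ℕ) + 1 = (v : ℕ)) (hk : 1 ≤ k u) :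
    (∀ i, content (Function.update f p v) i = kup k u v i) ↔ (∀ i, content f i = k i) := by
  have hne : u ≠ v := fun h => by rw [h] at huv; omega
  constructor
  · intro h i
    have h2 := content_update f p v i
    rw [hp] at h2
    by_cases hiv : i = v
    · rw [hiv] at h2 ⊢
      rw [if_neg hne, if_pos rfl] at h2
      have h1 := h v
      rw [kup_snd] at h1
      omega
    · by_cases hiu : i = u
      · rw [hiu] at h2 ⊢
        rw [if_pos rfl, if_neg (fun hc : v = u => hne hc.symm)] at h2
        have h1 := h u
        rw [kup_fst k u v hne] at h1
        omega
      · rw [if_neg (fun hc : u = i => hiu hc.symm), if_neg (fun hc : v = i => hiv hc.symm)] at h2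
        have h1 := h i
        rw [kup_other k u v i hiu hiv] at h1
        omega
  · intro h i
    have h2 := content_update f p v i
    rw [hp] at h2
    by_cases hiv : i = v
    · rw [hiv] at h2 ⊢
      rw [if_neg hne, if_pos rfl] at h2
      have h1 := h v
      rw [kup_snd]
      omega
    · by_cases hiu : i = u
      · rw [hiu] at h2 ⊢
        rw [if_pos rfl, if_neg (fun hc : v = u => hne hc.symm)] at h2
        have h1 := h u
        rw [kup_fst k u v hne]
        omega
      · rw [if_neg (fun hc : u = i => hiu hc.symm), if_neg (fun hc : v = i => hiv hc.symm)] at h2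
        have h1 := h i
        rw [kup_other k u v i hiu hiv]
        omega

lemma sqrtq_ne (q : ℝ) (hq : 0 < q) : (Real.sqrt q : ℂ) ≠ 0 :=
  Complex.ofReal_ne_zero.mpr (ne_of_gt (Real.sqrt_pos.mpr hq))

lemma q_pow_eq (q : ℝ) (hq : 0 < q) (m : ℕ) :
    (q : ℂ) ^ m = (Real.sqrt q : ℂ) ^ (2 * (m : ℤ)) := by
  have hqs : (q : ℂ) = (Real.sqrt q : ℂ) ^ 2 := by
    rw [← Complex.ofReal_pow, Real.sq_sqrt hq.le]
  have hcast : ((2 * m : ℕ) : ℤ) = 2 * (m : ℤ) := by push_cast; ring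
  rw [hqs, ← pow_mul, ← zpow_natCast (Real.sqrt q : ℂ) (2 * m), hcast]

lemma q2_pow_eq (q : ℝ) (hq : 0 < q) (m : ℕ) :
    ((q : ℂ) ^ 2) ^ m = (Real.sqrt q : ℂ) ^ (4 * (m : ℤ)) := by
  have hqs : (q : ℂ) = (Real.sqrt q : ℂ) ^ 2 := by
    rw [← Complex.ofReal_pow, Real.sq_sqrt hq.le]
  have hcast : ((2 * (2 * m) : ℕ) : ℤ) = 4 * (m : ℤ) := by push_cast; ring
  rw [hqs, ← pow_mul, ← pow_mul, ← zpow_natCast (Real.sqrt q : ℂ) (2 * (2 * m)), hcast]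

lemma termE (q : ℝ) (hq : 0 < q) (j : ℕ) (hj : j + 1 < n) (k : Fin n → ℕ)
    (f : Fin N → Fin n) (p : Fin N)
    (hp : f p = ⟨j + 1, hj⟩)
    (hcF : content f ⟨j, Nat.lt_of_succ_lt hj⟩ + 1 = k ⟨j, Nat.lt_of_succ_lt hj⟩)
    (hcS : content f ⟨j + 1, hj⟩ = k ⟨j + 1, hj⟩ + 1) :
    wt n N q j f p * (q : ℂ) ^ invw (Function.update f p ⟨j, Nat.lt_of_succ_lt hj⟩)
      = ((Real.sqrt q : ℂ) ^ (1 - (k ⟨j, Nat.lt_of_succ_lt hj⟩ : ℤ) - (k ⟨j + 1, hj⟩ : ℤ))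
          * (q : ℂ) ^ invw f) * ((q : ℂ) ^ 2) ^ cntL f ⟨j + 1, hj⟩ p := by
  have hs := sqrtq_ne q hq
  rw [wt_eq q j hj hs f p, q_pow_eq q hq, q_pow_eq q hq (invw f), q2_pow_eq q hq,
    ← zpow_add₀ hs, mul_assoc, ← zpow_add₀ hs, ← zpow_add₀ hs]
  congr 1
  have h1 := invw_update_down f p ⟨j + 1, hj⟩ ⟨j, Nat.lt_of_succ_lt hj⟩ hp rfl
  have h2 := content_split f ⟨j, Nat.lt_of_succ_lt hj⟩ p
  rw [if_neg (by rw [hp]; simp [Fin.ext_iff])] at h2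
  have h3 := content_split f ⟨j + 1, hj⟩ p
  rw [if_pos hp] at h3
  omega

lemma termF (q : ℝ) (hq : 0 < q) (j : ℕ) (hj : j + 1 < n) (k : Fin n → ℕ)
    (f : Fin N → Fin n) (p : Fin N)
    (hp : f p = ⟨j, Nat.lt_of_succ_lt hj⟩)
    (hcF : content f ⟨j, Nat.lt_of_succ_lt hj⟩ = k ⟨j, Nat.lt_of_succ_lt hj⟩)
    (hcS : content f ⟨j + 1, hj⟩ = k ⟨j + 1, hj⟩) :
    wt n N q j f p * (q : ℂ) ^ invw (Function.update f p ⟨j + 1, hj⟩)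
      = ((Real.sqrt q : ℂ) ^ (1 - (k ⟨j, Nat.lt_of_succ_lt hj⟩ : ℤ) - (k ⟨j + 1, hj⟩ : ℤ))
          * (q : ℂ) ^ invw f) * ((q : ℂ) ^ 2) ^ cntG f ⟨j, Nat.lt_of_succ_lt hj⟩ p := by
  have hs := sqrtq_ne q hq
  rw [wt_eq q j hj hs f p, q_pow_eq q hq, q_pow_eq q hq (invw f), q2_pow_eq q hq,
    ← zpow_add₀ hs, mul_assoc, ← zpow_add₀ hs, ← zpow_add₀ hs]
  congr 1
  have h1 := invw_update_up f p ⟨j, Nat.lt_of_succ_lt hj⟩ ⟨j + 1, hj⟩ hp rfl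
  have h2 := content_split f ⟨j, Nat.lt_of_succ_lt hj⟩ p
  rw [if_pos hp] at h2
  have h3 := content_split f ⟨j + 1, hj⟩ p
  rw [if_neg (by rw [hp]; simp [Fin.ext_iff])] at h3
  omega

lemma Eop_mulVec_bstate (q : ℝ) (hq : 0 < q) (j : ℕ) (hj : j + 1 < n) (k : Fin n → ℕ)
    (hk : 1 ≤ k ⟨j, Nat.lt_of_succ_lt hj⟩) :
    (Eop n N q j hj).mulVec (bstate n N q k)
      = ((Real.sqrt q : ℂ) ^ (1 - (k ⟨j, Nat.lt_of_succ_lt hj⟩ : ℤ) - (k ⟨j + 1, hj⟩ : ℤ))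
          * ∑ t ∈ Finset.range (k ⟨j + 1, hj⟩ + 1), ((q : ℂ) ^ 2) ^ t)
        • bstate n N q (kup k ⟨j, Nat.lt_of_succ_lt hj⟩ ⟨j + 1, hj⟩) := by
  funext f
  have hne : (⟨j + 1, hj⟩ : Fin n) ≠ ⟨j, Nat.lt_of_succ_lt hj⟩ := by simp [Fin.ext_iff]
  rw [Eop_eq, Lop_mulVec q j _ _ hne, Pi.smul_apply, bstate_apply, smul_eq_mul]
  by_cases hcon : ∀ i, content f i = kup k ⟨j, Nat.lt_of_succ_lt hj⟩ ⟨j + 1, hj⟩ i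
  · rw [if_pos hcon]
    have hcF : content f ⟨j, Nat.lt_of_succ_lt hj⟩ + 1 = k ⟨j, Nat.lt_of_succ_lt hj⟩ := by
      have := hcon ⟨j, Nat.lt_of_succ_lt hj⟩
      rw [kup_fst _ _ _ (Ne.symm hne)] at this
      omega
    have hcS : content f ⟨j + 1, hj⟩ = k ⟨j + 1, hj⟩ + 1 := by
      have := hcon ⟨j + 1, hj⟩
      rw [kup_snd] at this
      exact this
    have hterm : ∀ p : Fin N,
        (if f p = ⟨j + 1, hj⟩ then
            wt n N q j f p * bstate n N q k (Function.update f p ⟨j, Nat.lt_of_succ_lt hj⟩)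
          else 0)
        = (if f p = ⟨j + 1, hj⟩ then
            ((Real.sqrt q : ℂ) ^ (1 - (k ⟨j, Nat.lt_of_succ_lt hj⟩ : ℤ) - (k ⟨j + 1, hj⟩ : ℤ))
              * (q : ℂ) ^ invw f) * ((q : ℂ) ^ 2) ^ cntL f ⟨j + 1, hj⟩ p else 0) := by
      intro p
      by_cases hp : f p = ⟨j + 1, hj⟩
      · rw [if_pos hp, if_pos hp, bstate_apply,
          if_pos ((contentE_iff f p k ⟨j + 1, hj⟩ ⟨j, Nat.lt_of_succ_lt hj⟩ hp rfl hk).mpr hcon)]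
        exact termE q hq j hj k f p hp hcF hcS
      · rw [if_neg hp, if_neg hp]
    rw [Finset.sum_congr rfl fun p _ => hterm p, ← Finset.sum_filter, ← Finset.mul_sum,
      sum_pow_cntL f ⟨j + 1, hj⟩ ((q : ℂ) ^ 2), hcS]
    ring
  · rw [if_neg hcon, mul_zero]
    apply Finset.sum_eq_zero
    intro p _
    by_cases hp : f p = ⟨j + 1, hj⟩
    · rw [if_pos hp, bstate_apply, if_neg, mul_zero]
      intro hcc
      exact hcon ((contentE_iff f p k ⟨j + 1, hj⟩ ⟨j, Nat.lt_of_succ_lt hj⟩ hp rfl hk).mp hcc)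
    · rw [if_neg hp]

lemma Fop_mulVec_bstate (q : ℝ) (hq : 0 < q) (j : ℕ) (hj : j + 1 < n) (k : Fin n → ℕ)
    (hk : 1 ≤ k ⟨j, Nat.lt_of_succ_lt hj⟩) :
    (Fop n N q j hj).mulVec (bstate n N q (kup k ⟨j, Nat.lt_of_succ_lt hj⟩ ⟨j + 1, hj⟩))
      = ((Real.sqrt q : ℂ) ^ (1 - (k ⟨j, Nat.lt_of_succ_lt hj⟩ : ℤ) - (k ⟨j + 1, hj⟩ : ℤ))
          * ∑ t ∈ Finset.range (k ⟨j, Nat.lt_of_succ_lt hj⟩), ((q : ℂ) ^ 2) ^ t)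
        • bstate n N q k := by
  funext f
  have hne : (⟨j, Nat.lt_of_succ_lt hj⟩ : Fin n) ≠ ⟨j + 1, hj⟩ := by simp [Fin.ext_iff]
  rw [Fop_eq, Lop_mulVec q j _ _ hne, Pi.smul_apply, bstate_apply, smul_eq_mul]
  by_cases hcon : ∀ i, content f i = k i
  · rw [if_pos hcon]
    have hcF : content f ⟨j, Nat.lt_of_succ_lt hj⟩ = k ⟨j, Nat.lt_of_succ_lt hj⟩ :=
      hcon ⟨j, Nat.lt_of_succ_lt hj⟩
    have hcS : content f ⟨j + 1, hj⟩ = k ⟨j + 1, hj⟩ := hcon ⟨j + 1, hj⟩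
    have hterm : ∀ p : Fin N,
        (if f p = ⟨j, Nat.lt_of_succ_lt hj⟩ then
            wt n N q j f p * bstate n N q (kup k ⟨j, Nat.lt_of_succ_lt hj⟩ ⟨j + 1, hj⟩)
              (Function.update f p ⟨j + 1, hj⟩)
          else 0)
        = (if f p = ⟨j, Nat.lt_of_succ_lt hj⟩ then
            ((Real.sqrt q : ℂ) ^ (1 - (k ⟨j, Nat.lt_of_succ_lt hj⟩ : ℤ) - (k ⟨j + 1, hj⟩ : ℤ))
              * (q : ℂ) ^ invw f) * ((q : ℂ) ^ 2) ^ cntG f ⟨j, Nat.lt_of_succ_lt hj⟩ p else 0) := by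
      intro p
      by_cases hp : f p = ⟨j, Nat.lt_of_succ_lt hj⟩
      · rw [if_pos hp, if_pos hp, bstate_apply,
          if_pos ((contentF_iff f p k ⟨j, Nat.lt_of_succ_lt hj⟩ ⟨j + 1, hj⟩ hp rfl hk).mpr hcon)]
        exact termF q hq j hj k f p hp hcF hcS
      · rw [if_neg hp, if_neg hp]
    rw [Finset.sum_congr rfl fun p _ => hterm p, ← Finset.sum_filter, ← Finset.mul_sum,
      sum_pow_cntG f ⟨j, Nat.lt_of_succ_lt hj⟩ ((q : ℂ) ^ 2), hcF]
    ring
  · rw [if_neg hcon, mul_zero]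
    apply Finset.sum_eq_zero
    intro p _
    by_cases hp : f p = ⟨j, Nat.lt_of_succ_lt hj⟩
    · rw [if_pos hp, bstate_apply, if_neg, mul_zero]
      intro hcc
      exact hcon ((contentF_iff f p k ⟨j, Nat.lt_of_succ_lt hj⟩ ⟨j + 1, hj⟩ hp rfl hk).mp hcc)
    · rw [if_neg hp]

lemma diag_symm (d : Fin n → ℂ) (a b : Fin n) :
    Matrix.diagonal d a b = Matrix.diagonal d b a := by
  rcases eq_or_ne a b with h | h
  · rw [h]
  · rw [Matrix.diagonal_apply_ne _ h, Matrix.diagonal_apply_ne _ h.symm]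

lemma EF_transpose (q : ℝ) (j : ℕ) (hj : j + 1 < n) (f g : Fin N → Fin n) :
    Eop n N q j hj f g = Fop n N q j hj g f := by
  rw [Eop, Fop, Matrix.sum_apply, Matrix.sum_apply]
  refine Finset.sum_congr rfl fun p _ => ?_
  simp only [tensorFam]
  refine Finset.prod_congr rfl fun m _ => ?_
  by_cases h1 : (m : ℕ) < (p : ℕ)
  · simp only [if_pos h1, KmatInv]
    exact diag_symm _ _ _
  · simp only [if_neg h1]
    by_cases h2 : m = p
    · simp only [if_pos h2]
      simp only [Matrix.single, Matrix.of_apply]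
      exact if_congr and_comm rfl rfl
    · simp only [if_neg h2, Kmat]
      exact diag_symm _ _ _

lemma pairing (q : ℝ) (j : ℕ) (hj : j + 1 < n) (b b' : (Fin N → Fin n) → ℂ) :
    ∑ f, ((Eop n N q j hj).mulVec b) f * b' f
      = ∑ g, ((Fop n N q j hj).mulVec b') g * b g := by
  calc ∑ f, ((Eop n N q j hj).mulVec b) f * b' f
      = ∑ f, ∑ g, Eop n N q j hj f g * b g * b' f := by
        refine Finset.sum_congr rfl fun f _ => ?_
        rw [show ((Eop n N q j hj).mulVec b) f = ∑ g, Eop n N q j hj f g * b g from rfl,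
          Finset.sum_mul]
    _ = ∑ g, ∑ f, Eop n N q j hj f g * b g * b' f := Finset.sum_comm
    _ = ∑ g, ((Fop n N q j hj).mulVec b') g * b g := by
        refine Finset.sum_congr rfl fun g _ => ?_
        rw [show ((Fop n N q j hj).mulVec b') g = ∑ f, Fop n N q j hj g f * b' f from rfl,
          Finset.sum_mul]
        refine Finset.sum_congr rfl fun f _ => ?_
        rw [EF_transpose q j hj f g]
        ring

lemma content_snoc {M : ℕ} (w : Fin M → Fin n) (c : Fin n) (i : Fin n) :
    content (Fin.snoc w c : Fin (M + 1) → Fin n) i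
      = content w i + (if c = i then 1 else 0) := by
  rw [content_eq_sum, content_eq_sum, Fin.sum_univ_castSucc]
  congr 1
  · refine Finset.sum_congr rfl fun m _ => ?_
    rw [Fin.snoc_castSucc]
  · rw [Fin.snoc_last]

lemma exists_word : ∀ (N : ℕ) (k : Fin n → ℕ), (∑ i, k i = N)
    → ∃ w : Fin N → Fin n, ∀ i, content w i = k i := by
  intro N
  induction N with
  | zero =>
    intro k hk
    refine ⟨Fin.elim0, fun i => ?_⟩
    have h0 : k i = 0 := Finset.sum_eq_zero_iff.mp hk i (Finset.mem_univ i)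
    rw [h0, content]
    simp
  | succ M ih =>
    intro k hk
    have hex : ∃ i₀, 0 < k i₀ := by
      by_contra h
      push_neg at h
      have h0 : ∑ i, k i = 0 := Finset.sum_eq_zero fun i _ => Nat.le_zero.mp (h i)
      omega
    obtain ⟨i₀, hi₀⟩ := hex
    obtain ⟨w', hw'⟩ := ih (Function.update k i₀ (k i₀ - 1)) (by
      rw [Finset.sum_update_of_mem (Finset.mem_univ i₀)]
      rw [← Finset.add_sum_erase _ k (Finset.mem_univ i₀)] at hk
      rw [show (Finset.univ \ {i₀} : Finset (Fin n)) = Finset.univ.erase i₀ from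
        (Finset.erase_eq _ _).symm]
      omega)
    refine ⟨Fin.snoc w' i₀, fun i => ?_⟩
    rw [content_snoc, hw' i]
    by_cases hii : i = i₀
    · rw [hii, Function.update_self, if_pos rfl]
      omega
    · rw [Function.update_of_ne hii, if_neg (fun hc : i₀ = i => hii hc.symm)]
      omega

def Ssum (n N : ℕ) (q : ℝ) (k : Fin n → ℕ) : ℝ :=
  ∑ w ∈ Finset.univ.filter (fun w : Fin N → Fin n => ∀ i, content w i = k i),
    q ^ (2 * invw w)

lemma Ssum_pos (q : ℝ) (hq : 0 < q) (k : Fin n → ℕ) (hk : ∑ i, k i = N) :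
    0 < Ssum n N q k := by
  obtain ⟨w, hw⟩ := exists_word N k hk
  refine Finset.sum_pos (fun w' _ => pow_pos hq _) ⟨w, ?_⟩
  exact Finset.mem_filter.mpr ⟨Finset.mem_univ _, hw⟩

lemma bstate_sq_sum (q : ℝ) (k : Fin n → ℕ) :
    ∑ f : Fin N → Fin n, bstate n N q k f * bstate n N q k f = ((Ssum n N q k : ℝ) : ℂ) := by
  simp only [bstate_apply]
  have h1 : ∀ f : Fin N → Fin n,
      (if (∀ i, content f i = k i) then (q : ℂ) ^ invw f else 0)
        * (if (∀ i, content f i = k i) then (q : ℂ) ^ invw f else 0)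
      = (if (∀ i, content f i = k i) then (q : ℂ) ^ (2 * invw f) else 0) := by
    intro f
    by_cases h : ∀ i, content f i = k i
    · simp only [if_pos h]
      rw [← pow_add, two_mul]
    · simp [h]
  rw [Finset.sum_congr rfl fun f _ => h1 f, ← Finset.sum_filter, Ssum]
  push_cast
  rfl

def geoR (q : ℝ) (m : ℕ) : ℝ := ∑ t ∈ Finset.range m, (q ^ 2) ^ t

lemma geoR_pos (q : ℝ) (hq : 0 < q) (m : ℕ) (hm : 1 ≤ m) : 0 < geoR q m :=
  Finset.sum_pos (fun t _ => pow_pos (pow_pos hq 2) t) (by simp [Finset.nonempty_range_iff]; omega)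

lemma geoR_nonneg (q : ℝ) (hq : 0 < q) (m : ℕ) : 0 ≤ geoR q m :=
  Finset.sum_nonneg fun t _ => le_of_lt (pow_pos (pow_pos hq 2) t)

lemma geo_cast (q : ℝ) (m : ℕ) :
    ∑ t ∈ Finset.range m, ((q : ℂ) ^ 2) ^ t = ((geoR q m : ℝ) : ℂ) := by
  rw [geoR]
  push_cast
  rfl

lemma qnum_eq (q : ℝ) (hq : 0 < q) (hq1 : q ≠ 1) (m : ℕ) :
    qnum q m = q ^ (1 - (m : ℤ)) * geoR q m := by
  have hq0 : q ≠ 0 := ne_of_gt hq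
  have hsub : q - q⁻¹ ≠ 0 := by
    rw [sub_ne_zero]
    intro h
    have h2 : q * q = 1 := by
      calc q * q = q * q⁻¹ := by rw [← h]
      _ = 1 := mul_inv_cancel₀ hq0
    have : q = 1 := by nlinarith
    exact hq1 this
  have hgeom : geoR q m * (q ^ 2 - 1) = (q ^ 2) ^ m - 1 := geom_sum_mul _ _
  have hzp : q ^ (1 - (m : ℤ)) = q / q ^ m := by
    rw [zpow_sub₀ hq0, zpow_one, zpow_natCast]
  have hqm : q ^ m ≠ 0 := pow_ne_zero _ hq0
  have hg2 : geoR q m * (q ^ 2 - 1) = (q ^ m) ^ 2 - 1 := by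
    rw [hgeom, ← pow_mul, mul_comm 2 m, pow_mul]
  rw [qnum, div_eq_iff hsub, hzp, inv_pow]
  generalize hQ : q ^ m = Q at hqm hg2 ⊢
  field_simp
  linear_combination (-1) * hg2

lemma qEop_diag (q : ℝ) (i : Fin n) :
    qEop n N q i = Matrix.diagonal (fun f : Fin N → Fin n => (q : ℂ) ^ content f i) := by
  ext f g
  show (∏ m : Fin N, Matrix.diagonal
    (fun a : Fin n => if a = i then (q : ℂ) else 1) (f m) (g m)) = _
  by_cases h : f = g
  · subst h
    rw [Matrix.diagonal_apply_eq]
    calc (∏ m : Fin N, Matrix.diagonal (fun a : Fin n => if a = i then (q : ℂ) else 1) (f m) (f m))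
        = ∏ m : Fin N, (if f m = i then (q : ℂ) else 1) :=
          Finset.prod_congr rfl fun m _ => Matrix.diagonal_apply_eq _ _
      _ = (q : ℂ) ^ content f i := by
          rw [Finset.prod_ite (fun _ => (q : ℂ)) (fun _ => (1 : ℂ)), Finset.prod_const,
            Finset.prod_const, one_pow, mul_one, content]
  · rw [Matrix.diagonal_apply_ne _ h]
    obtain ⟨m, hm⟩ := Function.ne_iff.mp h
    exact Finset.prod_eq_zero (Finset.mem_univ m) (Matrix.diagonal_apply_ne _ hm)

lemma qEop_inv (q : ℝ) (hq : 0 < q) (i : Fin n) :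
    (qEop n N q i)⁻¹
      = Matrix.diagonal (fun f : Fin N → Fin n => ((q : ℂ) ^ content f i)⁻¹) := by
  apply Matrix.inv_eq_right_inv
  rw [qEop_diag, Matrix.diagonal_mul_diagonal]
  have h1 : (fun f : Fin N → Fin n => (q : ℂ) ^ content f i * ((q : ℂ) ^ content f i)⁻¹)
      = fun _ => (1 : ℂ) :=
    funext fun f => mul_inv_cancel₀ (pow_ne_zero _ (Complex.ofReal_ne_zero.mpr (ne_of_gt hq)))
  rw [h1, Matrix.diagonal_one]

def cER (q : ℝ) (a b : ℕ) : ℝ := Real.sqrt q ^ (1 - (a : ℤ) - (b : ℤ)) * geoR q (b + 1)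

def cFR (q : ℝ) (a b : ℕ) : ℝ := Real.sqrt q ^ (1 - (a : ℤ) - (b : ℤ)) * geoR q a

lemma cER_pos (q : ℝ) (hq : 0 < q) (a b : ℕ) : 0 < cER q a b :=
  mul_pos (zpow_pos (Real.sqrt_pos.mpr hq) _) (geoR_pos q hq _ (by omega))

lemma cFR_pos (q : ℝ) (hq : 0 < q) (a b : ℕ) (ha : 1 ≤ a) : 0 < cFR q a b :=
  mul_pos (zpow_pos (Real.sqrt_pos.mpr hq) _) (geoR_pos q hq _ ha)

lemma cER_cast (q : ℝ) (a b : ℕ) :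
    (Real.sqrt q : ℂ) ^ (1 - (a : ℤ) - (b : ℤ)) * ∑ t ∈ Finset.range (b + 1), ((q : ℂ) ^ 2) ^ t
      = ((cER q a b : ℝ) : ℂ) := by
  rw [cER, Complex.ofReal_mul, Complex.ofReal_zpow, geo_cast]

lemma cFR_cast (q : ℝ) (a b : ℕ) :
    (Real.sqrt q : ℂ) ^ (1 - (a : ℤ) - (b : ℤ)) * ∑ t ∈ Finset.range a, ((q : ℂ) ^ 2) ^ t
      = ((cFR q a b : ℝ) : ℂ) := by
  rw [cFR, Complex.ofReal_mul, Complex.ofReal_zpow, geo_cast]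

lemma zpow_sqrt_sq (q : ℝ) (hq : 0 < q) (z : ℤ) :
    Real.sqrt q ^ z * Real.sqrt q ^ z = q ^ z := by
  have hs : Real.sqrt q ≠ 0 := ne_of_gt (Real.sqrt_pos.mpr hq)
  rw [← zpow_add₀ hs, show z + z = 2 * z by ring, _root_.zpow_mul]
  congr 1
  rw [show (2 : ℤ) = ((2 : ℕ) : ℤ) from rfl, zpow_natCast, Real.sq_sqrt hq.le]

lemma cEF_mul (q : ℝ) (hq : 0 < q) (hq1 : q ≠ 1) (a b : ℕ) :
    cER q a b * cFR q a b = qnum q (b + 1) * qnum q a := by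
  rw [cER, cFR, qnum_eq q hq hq1 (b + 1), qnum_eq q hq hq1 a]
  rw [show Real.sqrt q ^ (1 - (a : ℤ) - (b : ℤ)) * geoR q (b + 1)
      * (Real.sqrt q ^ (1 - (a : ℤ) - (b : ℤ)) * geoR q a)
      = (Real.sqrt q ^ (1 - (a : ℤ) - (b : ℤ)) * Real.sqrt q ^ (1 - (a : ℤ) - (b : ℤ)))
        * (geoR q (b + 1) * geoR q a) from by ring, zpow_sqrt_sq q hq]
  rw [show q ^ (1 - ((b + 1 : ℕ) : ℤ)) * geoR q (b + 1) * (q ^ (1 - (a : ℤ)) * geoR q a)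
      = (q ^ (1 - ((b + 1 : ℕ) : ℤ)) * q ^ (1 - (a : ℤ))) * (geoR q (b + 1) * geoR q a) from by
        ring, ← zpow_add₀ (ne_of_gt hq)]
  congr 2
  push_cast
  ring

lemma EF_ratio (q : ℝ) (hq : 0 < q) (j : ℕ) (hj : j + 1 < n) (k : Fin n → ℕ)
    (hk : 1 ≤ k ⟨j, Nat.lt_of_succ_lt hj⟩) :
    cER q (k ⟨j, Nat.lt_of_succ_lt hj⟩) (k ⟨j + 1, hj⟩)
        * Ssum n N q (kup k ⟨j, Nat.lt_of_succ_lt hj⟩ ⟨j + 1, hj⟩)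
      = cFR q (k ⟨j, Nat.lt_of_succ_lt hj⟩) (k ⟨j + 1, hj⟩) * Ssum n N q k := by
  have hE := Eop_mulVec_bstate (n := n) (N := N) q hq j hj k hk
  have hF := Fop_mulVec_bstate (n := n) (N := N) q hq j hj k hk
  have hp := pairing q j hj (bstate n N q k)
    (bstate n N q (kup k ⟨j, Nat.lt_of_succ_lt hj⟩ ⟨j + 1, hj⟩))
  rw [hE, hF] at hp
  have hL : ∀ (c : ℂ) (k0 : Fin n → ℕ),
      (∑ f : Fin N → Fin n, (c • bstate n N q k0) f * bstate n N q k0 f)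
        = c * ((Ssum n N q k0 : ℝ) : ℂ) := by
    intro c k0
    simp only [Pi.smul_apply, smul_eq_mul, mul_assoc]
    rw [← Finset.mul_sum, bstate_sq_sum]
  rw [hL, hL, cER_cast, cFR_cast] at hp
  exact_mod_cast hp

lemma sqrt_coeff (c c' S S' x : ℝ) (hc : 0 < c) (hc' : 0 < c') (hS : 0 < S) (hS' : 0 < S')
    (hr : c * S' = c' * S) (hx : c * c' = x) :
    (Real.sqrt S)⁻¹ * c * Real.sqrt S' = Real.sqrt x := by
  have h1 : ((Real.sqrt S)⁻¹ * c * Real.sqrt S') ^ 2 = x := by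
    rw [mul_pow, mul_pow, inv_pow, Real.sq_sqrt hS.le, Real.sq_sqrt hS'.le, ← hx]
    field_simp
    linear_combination hr
  rw [← h1, Real.sqrt_sq (by positivity)]

end S10

/-- the normalized q-Dicke states form a canonical basis: `E_j` and `F_j`
act as ladder operators with coefficients `√([k_{j+1}+1]_q [k_j]_q)`, and
`q^{𝓔_i}`, `q^{H_j} = q^{𝓔_j}(q^{𝓔_{j+1}})⁻¹` act diagonally with eigenvalues
`q^{k_i}` and `q^{k_j − k_{j+1}}`. -/
theorem stmt10 (n N : ℕ) (hn : 2 ≤ n) (hN : 2 ≤ N) (q : ℝ) (hq : 0 < q) (hq1 : q ≠ 1)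
    (k : Fin n → ℕ) (hk : ∑ i, k i = N) :
    (∀ (j : ℕ) (hj : j + 1 < n), 1 ≤ k ⟨j, Nat.lt_of_succ_lt hj⟩ →
      ((Eop n N q j hj).mulVec (hatb n N q k) =
        ((Real.sqrt (qnum q (k ⟨j + 1, hj⟩ + 1) * qnum q (k ⟨j, Nat.lt_of_succ_lt hj⟩)) : ℝ) : ℂ) •
          hatb n N q
            (Function.update (Function.update k ⟨j, Nat.lt_of_succ_lt hj⟩
                (k ⟨j, Nat.lt_of_succ_lt hj⟩ - 1)) ⟨j + 1, hj⟩ (k ⟨j + 1, hj⟩ + 1))) ∧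
      ((Fop n N q j hj).mulVec
          (hatb n N q
            (Function.update (Function.update k ⟨j, Nat.lt_of_succ_lt hj⟩
                (k ⟨j, Nat.lt_of_succ_lt hj⟩ - 1)) ⟨j + 1, hj⟩ (k ⟨j + 1, hj⟩ + 1))) =
        ((Real.sqrt (qnum q (k ⟨j + 1, hj⟩ + 1) * qnum q (k ⟨j, Nat.lt_of_succ_lt hj⟩)) : ℝ) : ℂ) •
          hatb n N q k)) ∧
    (∀ i : Fin n,
      (qEop n N q i).mulVec (hatb n N q k) = ((q : ℂ) ^ (k i)) • hatb n N q k) ∧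
    (∀ (j : ℕ) (hj : j + 1 < n),
      (qEop n N q ⟨j, Nat.lt_of_succ_lt hj⟩ * (qEop n N q ⟨j + 1, hj⟩)⁻¹).mulVec
          (hatb n N q k) =
        ((q : ℂ) ^ ((k ⟨j, Nat.lt_of_succ_lt hj⟩ : ℤ) - (k ⟨j + 1, hj⟩ : ℤ))) •
          hatb n N q k) := by
  refine ⟨?_, ?_, ?_⟩
  · -- ladder operators
    intro j hj hkj
    have hjF : j < n := Nat.lt_of_succ_lt hj
    have hk'eq : Function.update (Function.update k ⟨j, Nat.lt_of_succ_lt hj⟩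
          (k ⟨j, Nat.lt_of_succ_lt hj⟩ - 1)) ⟨j + 1, hj⟩ (k ⟨j + 1, hj⟩ + 1)
        = S10.kup k ⟨j, Nat.lt_of_succ_lt hj⟩ ⟨j + 1, hj⟩ := rfl
    rw [hk'eq]
    have hne : (⟨j, Nat.lt_of_succ_lt hj⟩ : Fin n) ≠ ⟨j + 1, hj⟩ := by simp [Fin.ext_iff]
    have hkN' : ∑ i, S10.kup k ⟨j, Nat.lt_of_succ_lt hj⟩ ⟨j + 1, hj⟩ i = N := by
      have hmemF : (⟨j, Nat.lt_of_succ_lt hj⟩ : Fin n) ∈ Finset.univ \ {(⟨j + 1, hj⟩ : Fin n)} := by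
        simp [hne]
      have h1 := Finset.sum_update_of_mem (Finset.mem_univ (⟨j + 1, hj⟩ : Fin n))
        (Function.update k ⟨j, Nat.lt_of_succ_lt hj⟩ (k ⟨j, Nat.lt_of_succ_lt hj⟩ - 1))
        (k ⟨j + 1, hj⟩ + 1)
      have h2 := Finset.sum_update_of_mem hmemF k (k ⟨j, Nat.lt_of_succ_lt hj⟩ - 1)
      have h3 := Finset.sum_eq_add_sum_sdiff_singleton_of_mem (Finset.mem_univ (⟨j + 1, hj⟩ : Fin n)) k
      have h4 := Finset.sum_eq_add_sum_sdiff_singleton_of_mem hmemF k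
      rw [h1, h2]
      rw [h3, h4] at hk
      omega
    have hS : 0 < S10.Ssum n N q k := S10.Ssum_pos q hq k hk
    have hS' : 0 < S10.Ssum n N q (S10.kup k ⟨j, Nat.lt_of_succ_lt hj⟩ ⟨j + 1, hj⟩) :=
      S10.Ssum_pos q hq _ hkN'
    have hcEpos := S10.cER_pos q hq (k ⟨j, Nat.lt_of_succ_lt hj⟩) (k ⟨j + 1, hj⟩)
    have hcFpos := S10.cFR_pos q hq (k ⟨j, Nat.lt_of_succ_lt hj⟩) (k ⟨j + 1, hj⟩) hkj
    have hr := S10.EF_ratio (n := n) (N := N) q hq j hj k hkj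
    have hx := S10.cEF_mul q hq hq1 (k ⟨j, Nat.lt_of_succ_lt hj⟩) (k ⟨j + 1, hj⟩)
    have hE := S10.Eop_mulVec_bstate (n := n) (N := N) q hq j hj k hkj
    have hF := S10.Fop_mulVec_bstate (n := n) (N := N) q hq j hj k hkj
    have hbk : bnorm n N q k = Real.sqrt (S10.Ssum n N q k) := rfl
    have hbk' : bnorm n N q (S10.kup k ⟨j, Nat.lt_of_succ_lt hj⟩ ⟨j + 1, hj⟩)
        = Real.sqrt (S10.Ssum n N q (S10.kup k ⟨j, Nat.lt_of_succ_lt hj⟩ ⟨j + 1, hj⟩)) := rfl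
    have tE := S10.sqrt_coeff _ _ _ _ _ hcEpos hcFpos hS hS' hr hx
    have tF := S10.sqrt_coeff _ _ _ _
      (qnum q (k ⟨j + 1, hj⟩ + 1) * qnum q (k ⟨j, Nat.lt_of_succ_lt hj⟩))
      hcFpos hcEpos hS' hS (by linarith [hr]) (by rw [mul_comm]; exact hx)
    have hSk'ne : Real.sqrt (S10.Ssum n N q (S10.kup k ⟨j, Nat.lt_of_succ_lt hj⟩ ⟨j + 1, hj⟩)) ≠ 0 :=
      ne_of_gt (Real.sqrt_pos.mpr hS')
    have hSkne : Real.sqrt (S10.Ssum n N q k) ≠ 0 := ne_of_gt (Real.sqrt_pos.mpr hS)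
    constructor
    · unfold hatb
      rw [Matrix.mulVec_smul, hE, smul_smul, smul_smul]
      congr 1
      rw [S10.cER_cast q (k ⟨j, Nat.lt_of_succ_lt hj⟩) (k ⟨j + 1, hj⟩), hbk, hbk']
      have hreal : (Real.sqrt (S10.Ssum n N q k))⁻¹
            * S10.cER q (k ⟨j, Nat.lt_of_succ_lt hj⟩) (k ⟨j + 1, hj⟩)
          = Real.sqrt (qnum q (k ⟨j + 1, hj⟩ + 1) * qnum q (k ⟨j, Nat.lt_of_succ_lt hj⟩))
            * (Real.sqrt (S10.Ssum n N q
                (S10.kup k ⟨j, Nat.lt_of_succ_lt hj⟩ ⟨j + 1, hj⟩)))⁻¹ := by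
        rw [← tE]
        field_simp
      exact_mod_cast hreal
    · unfold hatb
      rw [Matrix.mulVec_smul, hF, smul_smul, smul_smul]
      congr 1
      rw [S10.cFR_cast q (k ⟨j, Nat.lt_of_succ_lt hj⟩) (k ⟨j + 1, hj⟩), hbk, hbk']
      have hreal : (Real.sqrt (S10.Ssum n N q
              (S10.kup k ⟨j, Nat.lt_of_succ_lt hj⟩ ⟨j + 1, hj⟩)))⁻¹
            * S10.cFR q (k ⟨j, Nat.lt_of_succ_lt hj⟩) (k ⟨j + 1, hj⟩)
          = Real.sqrt (qnum q (k ⟨j + 1, hj⟩ + 1) * qnum q (k ⟨j, Nat.lt_of_succ_lt hj⟩))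
            * (Real.sqrt (S10.Ssum n N q k))⁻¹ := by
        rw [← tF]
        field_simp
      exact_mod_cast hreal
  · -- q^{E_i} diagonal action
    intro i
    funext f
    rw [S10.qEop_diag q i, Matrix.mulVec_diagonal]
    simp only [hatb, Pi.smul_apply, smul_eq_mul, S10.bstate_apply]
    by_cases hcon : ∀ i', content f i' = k i'
    · rw [if_pos hcon, hcon i]
    · rw [if_neg hcon]
      ring
  · -- q^{H_j} diagonal action
    intro j hj
    funext f
    rw [S10.qEop_inv q hq ⟨j + 1, hj⟩, S10.qEop_diag q ⟨j, Nat.lt_of_succ_lt hj⟩,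
      Matrix.diagonal_mul_diagonal, Matrix.mulVec_diagonal]
    simp only [hatb, Pi.smul_apply, smul_eq_mul, S10.bstate_apply]
    by_cases hcon : ∀ i', content f i' = k i'
    · rw [if_pos hcon, hcon ⟨j, Nat.lt_of_succ_lt hj⟩, hcon ⟨j + 1, hj⟩]
      congr 1
      rw [zpow_sub₀ (Complex.ofReal_ne_zero.mpr (ne_of_gt hq)), zpow_natCast, zpow_natCast,
        div_eq_mul_inv]
    · rw [if_neg hcon]
      ring


end
end
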